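/- arXiv:2603.19663 — 8 statements merged into one kernel-verified Lean document; each statement's English description precedes it below -/
import Mathlib

section
/- Let N ≥ 1 be an integer and let D_u, χ, A, B be positive constants. Suppose φ, ψ : [0,∞) → ℝ are C² functions with φ > 0 and ψ > 0, satisfying for all r > 0 the ODE −(N/2)φ(r) − (1/2) r φ'(r) = D_u (φ''(r) + ((N−1)/r) φ'(r)) − χ ( (φ ψ'/ψ)'(r) + ((N−1)/r) (φ(r) ψ'(r)/ψ(r)) ), with φ(0) = A, ψ(0) = B, φ'(0) = 0, ψ'(0) = 0. Then for all r ≥ 0, φ(r) = A B^{−χ/D_u} ψ(r)^{χ/D_u} e^{−r²/(4 D_u)}. -/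
open Real Set Filter

/-- Integrating the first equation of the radial self-similar Keller–Segel
system shows that the cell-density profile `φ` is an explicit function of the
signal profile `ψ`:  `φ(r) = A B^{-χ/Dᵤ} ψ(r)^{χ/Dᵤ} e^{-r²/(4Dᵤ)}`. -/
theorem stmt0
    (N : ℕ) (hN : 1 ≤ N)
    (Du chi A B : ℝ) (hDu : 0 < Du) (hchi : 0 < chi) (hA : 0 < A) (hB : 0 < B)
    (φ dφ ddφ ψ dψ ddψ : ℝ → ℝ)
    (hφpos : ∀ r ∈ Ici (0:ℝ), 0 < φ r)
    (hψpos : ∀ r ∈ Ici (0:ℝ), 0 < ψ r)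
    (hφ' : ∀ r ∈ Ici (0:ℝ), HasDerivWithinAt φ (dφ r) (Ici 0) r)
    (hφ'' : ∀ r ∈ Ici (0:ℝ), HasDerivWithinAt dφ (ddφ r) (Ici 0) r)
    (hψ' : ∀ r ∈ Ici (0:ℝ), HasDerivWithinAt ψ (dψ r) (Ici 0) r)
    (hψ'' : ∀ r ∈ Ici (0:ℝ), HasDerivWithinAt dψ (ddψ r) (Ici 0) r)
    (hddφc : ContinuousOn ddφ (Ici 0)) (hddψc : ContinuousOn ddψ (Ici 0))
    (hODE : ∀ r ∈ Ioi (0:ℝ),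
      -((N : ℝ) / 2) * φ r - (1/2) * r * dφ r
        = Du * (ddφ r + (((N : ℝ) - 1) / r) * dφ r)
          - chi * (derivWithin (fun s => φ s * dψ s / ψ s) (Ici 0) r
                 + (((N : ℝ) - 1) / r) * (φ r * dψ r / ψ r)))
    (hφ0 : φ 0 = A) (hψ0 : ψ 0 = B) (hdφ0 : dφ 0 = 0) (hdψ0 : dψ 0 = 0) :
    ∀ r ∈ Ici (0:ℝ),
      φ r = A * B ^ (-(chi / Du)) * ψ r ^ (chi / Du) * Real.exp (-(r^2) / (4 * Du)) := by
  obtain ⟨n, rfl⟩ : ∃ n, N = n + 1 := ⟨N - 1, (Nat.succ_pred_eq_of_pos hN).symm⟩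
  have hDu' : Du ≠ 0 := ne_of_gt hDu
  set h : ℝ → ℝ := fun s => φ s * dψ s / ψ s with hh
  set hd : ℝ → ℝ := fun s =>
    ((dφ s * dψ s + φ s * ddψ s) * ψ s - φ s * dψ s * dψ s) / ψ s ^ 2 with hhd
  have hψne : ∀ r ∈ Ici (0:ℝ), ψ r ≠ 0 := fun r hr => ne_of_gt (hψpos r hr)
  have hφne : ∀ r ∈ Ici (0:ℝ), φ r ≠ 0 := fun r hr => ne_of_gt (hφpos r hr)
  -- derivative of h
  have hhderiv : ∀ r ∈ Ici (0:ℝ), HasDerivWithinAt h (hd r) (Ici 0) r := by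
    intro r hr
    exact ((hφ' r hr).mul (hψ'' r hr)).div (hψ' r hr) (hψne r hr)
  have hhdW : ∀ r ∈ Ici (0:ℝ), derivWithin h (Ici 0) r = hd r := by
    intro r hr
    exact (hhderiv r hr).derivWithin (uniqueDiffOn_Ici 0 r hr)
  -- the integrated quantity G and its derivative g
  set G : ℝ → ℝ := fun r => (1/2) * r ^ (n+1) * φ r + Du * (r ^ n * dφ r)
      - chi * (r ^ n * h r) with hG
  set g : ℝ → ℝ := fun r =>
      ((1/2) * ((↑(n+1) * r ^ n) * φ r + r ^ (n+1) * dφ r)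
        + Du * ((↑n * r ^ (n-1)) * dφ r + r ^ n * ddφ r))
      - chi * ((↑n * r ^ (n-1)) * h r + r ^ n * hd r) with hg
  have hGderiv : ∀ r ∈ Ici (0:ℝ), HasDerivWithinAt G (g r) (Ici 0) r := by
    intro r hr
    have hp1 : HasDerivWithinAt (fun s : ℝ => s ^ (n+1)) (↑(n+1) * r ^ n) (Ici 0) r := by
      simpa using (hasDerivAt_pow (n+1) r).hasDerivWithinAt
    have hp2 : HasDerivWithinAt (fun s : ℝ => s ^ n) (↑n * r ^ (n-1)) (Ici 0) r :=
      (hasDerivAt_pow n r).hasDerivWithinAt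
    have h1 : HasDerivWithinAt (fun s => (1/2) * s ^ (n+1) * φ s)
        ((1/2) * ((↑(n+1) * r ^ n) * φ r + r ^ (n+1) * dφ r)) (Ici 0) r := by
      have := ((hp1.mul (hφ' r hr)).const_mul (1/2 : ℝ))
      simpa [mul_assoc, mul_add] using this
    have h2 : HasDerivWithinAt (fun s => Du * (s ^ n * dφ s))
        (Du * ((↑n * r ^ (n-1)) * dφ r + r ^ n * ddφ r)) (Ici 0) r :=
      (hp2.mul (hφ'' r hr)).const_mul Du
    have h3 : HasDerivWithinAt (fun s => chi * (s ^ n * h s))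
        (chi * ((↑n * r ^ (n-1)) * h r + r ^ n * hd r)) (Ici 0) r :=
      (hp2.mul (hhderiv r hr)).const_mul chi
    exact (h1.add h2).sub h3
  -- g vanishes on Ioi 0
  have hgIoi : ∀ r ∈ Ioi (0:ℝ), g r = 0 := by
    intro r hr
    have hr0 : (0:ℝ) ≤ r := le_of_lt hr
    have hrne : r ≠ 0 := ne_of_gt hr
    have key := hODE r hr
    rw [hhdW r hr0] at key
    have hfold : φ r * dψ r / ψ r = h r := rfl
    rw [hfold] at key
    have key2 : -((↑n + 1) / 2) * φ r * r - 1 / 2 * r * dφ r * r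
        = Du * (ddφ r * r + ↑n * dφ r) - chi * (hd r * r + ↑n * h r) := by
      push_cast at key
      field_simp at key
      linear_combination key / 2
    cases n with
    | zero =>
      have h3 : r * g r = 0 := by
        simp only [hg]; push_cast at key2 ⊢; linear_combination -key2
      rcases mul_eq_zero.1 h3 with h' | h'
      · exact absurd h' hrne
      · exact h'
    | succ m =>
      simp only [hg]
      have hpow : r ^ (m + 1 - 1) = r ^ m := by norm_num
      rw [hpow]
      push_cast at key2 ⊢
      linear_combination (- (r ^ m)) * key2
  -- g is continuous on Ici 0, hence g 0 = 0
  have hφc : ContinuousOn φ (Ici 0) := fun r hr => (hφ' r hr).continuousWithinAt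
  have hdφc : ContinuousOn dφ (Ici 0) := fun r hr => (hφ'' r hr).continuousWithinAt
  have hψc : ContinuousOn ψ (Ici 0) := fun r hr => (hψ' r hr).continuousWithinAt
  have hdψc : ContinuousOn dψ (Ici 0) := fun r hr => (hψ'' r hr).continuousWithinAt
  have hhc : ContinuousOn h (Ici 0) := (hφc.mul hdψc).div hψc hψne
  have hhdc : ContinuousOn hd (Ici 0) := by
    apply ContinuousOn.div
    · exact ((hdφc.mul hdψc).add (hφc.mul hddψc)).mul hψc |>.sub ((hφc.mul hdψc).mul hdψc)
    · exact hψc.pow 2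
    · intro r hr; exact pow_ne_zero 2 (hψne r hr)
  have hgc : ContinuousOn g (Ici 0) := by
    apply ContinuousOn.sub
    · exact (continuousOn_const.mul ((continuousOn_const.mul (continuousOn_pow n)).mul hφc
        |>.add ((continuousOn_pow (n+1)).mul hdφc))).add
        (continuousOn_const.mul (((continuousOn_const.mul (continuousOn_pow (n-1))).mul hdφc).add
          ((continuousOn_pow n).mul hddφc)))
    · exact continuousOn_const.mul
        (((continuousOn_const.mul (continuousOn_pow (n-1))).mul hhc).add
          ((continuousOn_pow n).mul hhdc))
  have hg0 : g 0 = 0 := by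
    have h1 : Tendsto g (nhdsWithin 0 (Ioi (0:ℝ))) (nhds (g 0)) :=
      Tendsto.mono_left (hgc 0 self_mem_Ici) (nhdsWithin_mono _ Ioi_subset_Ici_self)
    have h2 : Tendsto g (nhdsWithin 0 (Ioi (0:ℝ))) (nhds 0) := by
      refine Tendsto.congr' ?_ tendsto_const_nhds
      filter_upwards [self_mem_nhdsWithin] with x hx
      exact (hgIoi x hx).symm
    exact tendsto_nhds_unique h1 h2
  have hgzero : ∀ r ∈ Ici (0:ℝ), g r = 0 := by
    intro r hr
    rcases eq_or_lt_of_le (α := ℝ) hr with h0 | h0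
    · rw [← h0]; exact hg0
    · exact hgIoi r h0
  -- G is constant, equal to G 0 = 0
  have hG0 : G 0 = 0 := by
    simp only [hG, hh, hdφ0, hdψ0]
    simp
  have hGzero : ∀ r ∈ Ici (0:ℝ), G r = 0 := by
    intro r hr
    have hGcont : ContinuousOn G (Ici 0) := fun x hx => (hGderiv x hx).continuousWithinAt
    have := constant_of_has_deriv_right_zero (f := G) (a := 0) (b := r)
      (hGcont.mono Icc_subset_Ici_self)
      (fun x hx => by
        have := hGderiv x hx.1
        rw [hgzero x hx.1] at this
        exact this.mono (Ici_subset_Ici.2 hx.1))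
      r ⟨hr, le_refl r⟩
    rw [this, hG0]
  -- first order equation: Du * dφ = chi * h - (1/2) r φ on Ici 0
  have hfirst : ∀ r ∈ Ici (0:ℝ), Du * dφ r = chi * h r - (1/2) * r * φ r := by
    intro r hr
    rcases eq_or_lt_of_le (α := ℝ) hr with h0 | h0
    · rw [← h0]; simp [hh, hdφ0, hdψ0]
    · have hGr := hGzero r hr
      have hrn : r ^ n ≠ 0 := pow_ne_zero n (ne_of_gt h0)
      have : r ^ n * (Du * dφ r - (chi * h r - (1/2) * r * φ r)) = 0 := by
        simp only [hG] at hGr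
        linear_combination hGr
      rcases mul_eq_zero.1 this with h' | h'
      · exact absurd h' hrn
      · linarith [h']
  -- second integration via logarithm
  set L : ℝ → ℝ := fun r => Real.log (φ r) - (chi/Du) * Real.log (ψ r) + r^2/(4*Du) with hL
  have hLderiv : ∀ r ∈ Ici (0:ℝ), HasDerivWithinAt L 0 (Ici 0) r := by
    intro r hr
    have l1 : HasDerivWithinAt (fun s => Real.log (φ s)) (dφ r / φ r) (Ici 0) r :=
      (hφ' r hr).log (hφne r hr)
    have l2 : HasDerivWithinAt (fun s => (chi/Du) * Real.log (ψ s))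
        ((chi/Du) * (dψ r / ψ r)) (Ici 0) r := ((hψ' r hr).log (hψne r hr)).const_mul _
    have l3 : HasDerivWithinAt (fun s : ℝ => s^2/(4*Du)) (2*r/(4*Du)) (Ici 0) r := by
      have := ((hasDerivAt_pow 2 r).hasDerivWithinAt (s := Ici 0)).div_const (4*Du)
      simpa using this
    have := (l1.sub l2).add l3
    have hval : dφ r / φ r - (chi/Du) * (dψ r / ψ r) + 2*r/(4*Du) = 0 := by
      have hf := hfirst r hr
      have hφr := hφne r hr
      have hψr := hψne r hr
      simp only [hh] at hf
      field_simp
      field_simp at hf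
      linear_combination 2 * hf
    rw [hval] at this
    exact this
  have hLconst : ∀ r ∈ Ici (0:ℝ), L r = L 0 := by
    intro r hr
    have hLcont : ContinuousOn L (Ici 0) := fun x hx => (hLderiv x hx).continuousWithinAt
    exact constant_of_has_deriv_right_zero (f := L) (a := 0) (b := r)
      (hLcont.mono Icc_subset_Ici_self)
      (fun x hx => (hLderiv x hx.1).mono (Ici_subset_Ici.2 hx.1))
      r ⟨hr, le_refl r⟩
  intro r hr
  have hLr := hLconst r hr
  simp only [hL, hφ0, hψ0] at hLr
  have hφr := hφpos r hr
  have hψr := hψpos r hr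
  have : φ r = Real.exp (Real.log (φ r)) := (Real.exp_log hφr).symm
  rw [this]
  rw [Real.rpow_def_of_pos hB, Real.rpow_def_of_pos hψr, ← Real.exp_log hA]
  rw [← Real.exp_add, ← Real.exp_add, ← Real.exp_add]
  congr 1
  have : Real.log (φ r) = Real.log A - chi/Du * Real.log B + (chi/Du * Real.log (ψ r) - r^2/(4*Du)) := by
    norm_num at hLr; linarith [hLr]
  rw [this]
  ring
end

section
/- Let N ≥ 1 be an integer, D_u, D_v > 0, β ≥ 1, and let A₁ ≥ A₂ > 0 and κ₁ ≥ κ₂ be real numbers with A₁ + κ₁ > A₂ + κ₂. Set ρ(r) = r^{N−1} e^{r²/(4D_v)}. Suppose φ₁, φ₂ : [0,R) → ℝ are positive C² functions with φ₁(0) = φ₂(0) = 1, φ₁'(0) = φ₂'(0) = 0, satisfying for r ∈ (0,R): D_v (ρ φ₁')'(r) ≥ κ₁ ρ(r) φ₁(r) + A₁ ρ(r) φ₁(r)^β e^{−r²/(4D_u)} and D_v (ρ φ₂')'(r) ≤ κ₂ ρ(r) φ₂(r) + A₂ ρ(r) φ₂(r)^β e^{−r²/(4D_u)}. Then φ₁(r)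 > φ₂(r) for every r ∈ (0,R). -/
open Real Set

set_option maxHeartbeats 3200000 in
/-- Comparison lemma for super- and subsolutions of the self-similar
profile equation with weight `ρ(r) = r^{N-1} e^{r²/(4Dᵥ)}`. -/
theorem stmt2
    (N : ℕ) (hN : 1 ≤ N) (Du Dv β A₁ A₂ κ₁ κ₂ : ℝ)
    (hDu : 0 < Du) (hDv : 0 < Dv) (hβ : 1 ≤ β)
    (hA12 : A₂ ≤ A₁) (hA2 : 0 < A₂) (hκ12 : κ₂ ≤ κ₁) (hsum : A₂ + κ₂ < A₁ + κ₁)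
    (R : EReal) (hR : 0 < R)
    (ρ : ℝ → ℝ) (hρ : ∀ r : ℝ, ρ r = r ^ (N - 1) * Real.exp (r ^ 2 / (4 * Dv)))
    (φ₁ dφ₁ F₁ φ₂ dφ₂ F₂ : ℝ → ℝ)
    (hpos₁ : ∀ r : ℝ, 0 ≤ r → (r : EReal) < R → 0 < φ₁ r)
    (hpos₂ : ∀ r : ℝ, 0 ≤ r → (r : EReal) < R → 0 < φ₂ r)
    (hφ₁' : ∀ r : ℝ, 0 ≤ r → (r : EReal) < R → HasDerivWithinAt φ₁ (dφ₁ r) (Ici 0) r)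
    (hφ₂' : ∀ r : ℝ, 0 ≤ r → (r : EReal) < R → HasDerivWithinAt φ₂ (dφ₂ r) (Ici 0) r)
    (hflux₁ : ∀ r : ℝ, 0 < r → (r : EReal) < R →
      HasDerivAt (fun s => ρ s * dφ₁ s) (F₁ r) r)
    (hflux₂ : ∀ r : ℝ, 0 < r → (r : EReal) < R →
      HasDerivAt (fun s => ρ s * dφ₂ s) (F₂ r) r)
    (hineq₁ : ∀ r : ℝ, 0 < r → (r : EReal) < R →
      κ₁ * ρ r * φ₁ r + A₁ * ρ r * φ₁ r ^ β * Real.exp (-(r ^ 2) / (4 * Du)) ≤ Dv * F₁ r)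
    (hineq₂ : ∀ r : ℝ, 0 < r → (r : EReal) < R →
      Dv * F₂ r ≤ κ₂ * ρ r * φ₂ r + A₂ * ρ r * φ₂ r ^ β * Real.exp (-(r ^ 2) / (4 * Du)))
    (hφ₁0 : φ₁ 0 = 1) (hφ₂0 : φ₂ 0 = 1) (hdφ₁0 : dφ₁ 0 = 0) (hdφ₂0 : dφ₂ 0 = 0) :
    ∀ r : ℝ, 0 < r → (r : EReal) < R → φ₂ r < φ₁ r := by
  have h0R : ((0:ℝ) : EReal) < R := by exact_mod_cast hR
  -- the Wronskian-type function and the source term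
  set W : ℝ → ℝ := fun t => ρ t * dφ₁ t * φ₂ t - ρ t * dφ₂ t * φ₁ t with hWdef
  set G : ℝ → ℝ := fun t => (κ₁ - κ₂) * (φ₁ t * φ₂ t)
      + Real.exp (-(t ^ 2) / (4 * Du)) * (A₁ * φ₁ t ^ β * φ₂ t - A₂ * φ₂ t ^ β * φ₁ t)
      with hGdef
  have hρpos : ∀ t : ℝ, 0 < t → 0 < ρ t := by
    intro t ht; rw [hρ]; positivity
  -- real upper bound inside (0, R)
  obtain ⟨c, hc0, hcR⟩ := exists_between hR
  have hctop : c ≠ ⊤ := (hcR.trans_le le_top).ne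
  have hcbot : c ≠ ⊥ := ne_bot_of_gt hc0
  set δR : ℝ := c.toReal with hδRdef
  have hδRc : (δR : EReal) = c := EReal.coe_toReal hctop hcbot
  have hδRpos : 0 < δR := by
    have : ((0:ℝ) : EReal) < (δR : EReal) := by rw [hδRc]; exact_mod_cast hc0
    exact_mod_cast this
  have hleR : ∀ t : ℝ, t ≤ δR → (t : EReal) < R := by
    intro t ht
    have : (t : EReal) ≤ (δR : EReal) := EReal.coe_le_coe_iff.2 ht
    exact this.trans_lt (hδRc ▸ hcR)
  -- derivative of W
  have hWderiv : ∀ t : ℝ, 0 < t → (t : EReal) < R →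
      HasDerivAt W (F₁ t * φ₂ t - F₂ t * φ₁ t) t := by
    intro t ht htR
    have hφ1 : HasDerivAt φ₁ (dφ₁ t) t :=
      (hφ₁' t ht.le htR).hasDerivAt (Ici_mem_nhds ht)
    have hφ2 : HasDerivAt φ₂ (dφ₂ t) t :=
      (hφ₂' t ht.le htR).hasDerivAt (Ici_mem_nhds ht)
    have h : HasDerivAt (fun s => ρ s * dφ₁ s * φ₂ s - ρ s * dφ₂ s * φ₁ s) _ t :=
      ((hflux₁ t ht htR).mul hφ2).sub ((hflux₂ t ht htR).mul hφ1)
    convert h using 1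
    ring
  -- key differential inequality
  have hkey : ∀ t : ℝ, 0 < t → (t : EReal) < R →
      ρ t * G t ≤ Dv * (F₁ t * φ₂ t - F₂ t * φ₁ t) := by
    intro t ht htR
    have h1 := mul_le_mul_of_nonneg_left (hineq₁ t ht htR) (hpos₂ t ht.le htR).le
    have h2 := mul_le_mul_of_nonneg_left (hineq₂ t ht htR) (hpos₁ t ht.le htR).le
    simp only [hGdef]
    nlinarith [h1, h2]
  -- positivity of G where φ₂ ≤ φ₁
  have hGpos : ∀ t : ℝ, 0 < φ₂ t → φ₂ t ≤ φ₁ t → 0 < G t := by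
    intro t h2 h12
    have ha : 0 < φ₁ t := h2.trans_le h12
    have hE : 0 < Real.exp (-(t ^ 2) / (4 * Du)) := Real.exp_pos _
    have hb1 : φ₂ t ^ (β - 1) ≤ φ₁ t ^ (β - 1) :=
      Real.rpow_le_rpow h2.le h12 (by linarith)
    have hb2 : 0 < φ₂ t ^ (β - 1) := Real.rpow_pos_of_pos h2 _
    have e1 : φ₁ t ^ β = φ₁ t ^ (β - 1) * φ₁ t := by
      rw [← Real.rpow_add_one ha.ne' (β - 1)]; norm_num
    have e2 : φ₂ t ^ β = φ₂ t ^ (β - 1) * φ₂ t := by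
      rw [← Real.rpow_add_one h2.ne' (β - 1)]; norm_num
    have hA1 : 0 < A₁ := lt_of_lt_of_le hA2 hA12
    simp only [hGdef, e1, e2]
    have hAx : A₂ * φ₂ t ^ (β - 1) ≤ A₁ * φ₁ t ^ (β - 1) :=
      le_trans (mul_le_mul_of_nonneg_right hA12 hb2.le)
        (mul_le_mul_of_nonneg_left hb1 hA1.le)
    rcases lt_or_eq_of_le hκ12 with hk | hk
    · have hP : 0 ≤ A₁ * (φ₁ t ^ (β - 1) * φ₁ t) * φ₂ t - A₂ * (φ₂ t ^ (β - 1) * φ₂ t) * φ₁ t := by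
        have h := mul_nonneg (sub_nonneg.2 hAx) (mul_pos ha h2).le
        nlinarith [h]
      linarith [mul_pos (sub_pos.2 hk) (mul_pos ha h2), mul_nonneg hE.le hP]
    · have hA : A₂ < A₁ := by linarith
      have hAx' : A₂ * φ₂ t ^ (β - 1) < A₁ * φ₁ t ^ (β - 1) :=
        lt_of_lt_of_le (mul_lt_mul_of_pos_right hA hb2) (mul_le_mul_of_nonneg_left hb1 hA1.le)
      have hP : 0 < A₁ * (φ₁ t ^ (β - 1) * φ₁ t) * φ₂ t - A₂ * (φ₂ t ^ (β - 1) * φ₂ t) * φ₁ t := by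
        have h := mul_pos (sub_pos.2 hAx') (mul_pos ha h2)
        nlinarith [h]
      have hκ : κ₁ - κ₂ = 0 := by linarith
      rw [hκ, zero_mul, zero_add]
      exact mul_pos hE hP
  -- continuity of G at 0 within Ici 0, and positivity near 0
  have hφ₁c0 : ContinuousWithinAt φ₁ (Ici 0) 0 := (hφ₁' 0 le_rfl h0R).continuousWithinAt
  have hφ₂c0 : ContinuousWithinAt φ₂ (Ici 0) 0 := (hφ₂' 0 le_rfl h0R).continuousWithinAt
  have hrpow1 : ContinuousWithinAt (fun t => φ₁ t ^ β) (Ici 0) 0 := by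
    have h := Real.continuousAt_rpow_const (φ₁ 0) β (Or.inl (by rw [hφ₁0]; exact one_ne_zero))
    exact h.comp_continuousWithinAt hφ₁c0
  have hrpow2 : ContinuousWithinAt (fun t => φ₂ t ^ β) (Ici 0) 0 := by
    have h := Real.continuousAt_rpow_const (φ₂ 0) β (Or.inl (by rw [hφ₂0]; exact one_ne_zero))
    exact h.comp_continuousWithinAt hφ₂c0
  have hexpc : ContinuousWithinAt (fun t : ℝ => Real.exp (-(t ^ 2) / (4 * Du))) (Ici 0) 0 :=
    (Real.continuous_exp.comp (((continuous_pow 2).neg).div_const (4 * Du))).continuousWithinAt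
  have hGc : ContinuousWithinAt G (Ici 0) 0 := by
    simp only [hGdef]
    exact (continuousWithinAt_const.mul (hφ₁c0.mul hφ₂c0)).add
      (hexpc.mul (((continuousWithinAt_const.mul hrpow1).mul hφ₂c0).sub
        ((continuousWithinAt_const.mul hrpow2).mul hφ₁c0)))
  have hG0 : 0 < G 0 := by
    simp only [hGdef, hφ₁0, hφ₂0, Real.one_rpow]
    norm_num
    linarith
  have hev : ∀ᶠ t in nhdsWithin 0 (Ici 0), 0 < G t :=
    hGc.eventually (eventually_gt_nhds hG0)
  obtain ⟨δ₁, hδ₁, hsub⟩ := mem_nhdsGE_iff_exists_Icc_subset.1 hev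
  set δ : ℝ := min δ₁ δR with hδdef
  have hδ : 0 < δ := lt_min hδ₁ hδRpos
  have hδR : ∀ t : ℝ, t ≤ δ → (t : EReal) < R := fun t ht =>
    hleR t (ht.trans (min_le_right _ _))
  have hGδ : ∀ t : ℝ, 0 ≤ t → t ≤ δ → 0 < G t := fun t h1 h2 =>
    hsub ⟨h1, h2.trans (min_le_left _ _)⟩
  -- W is strictly monotone on intervals where G > 0
  have hWmono : ∀ x : ℝ, 0 < x → (x : EReal) < R → (∀ t, t ∈ Ioo 0 x → 0 < G t) →
      StrictMonoOn W (Ioc 0 x) := by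
    intro x hx hxR hGx
    have hcoe : ∀ t : ℝ, t ≤ x → (t : EReal) < R := fun t ht =>
      (EReal.coe_le_coe_iff.2 ht).trans_lt hxR
    apply strictMonoOn_of_deriv_pos (convex_Ioc 0 x)
    · intro t ht
      exact ((hWderiv t ht.1 (hcoe t ht.2)).continuousAt).continuousWithinAt
    · rw [interior_Ioc]
      intro t ht
      have hd := hWderiv t ht.1 (hcoe t ht.2.le)
      rw [hd.deriv]
      have hk := hkey t ht.1 (hcoe t ht.2.le)
      have hGt := hGx t ht
      have hρt := hρpos t ht.1
      nlinarith [mul_pos hρt hGt]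
  -- derivative of the quotient q = φ₁/φ₂
  have hqd : ∀ t : ℝ, 0 < t → (t : EReal) < R →
      HasDerivAt (fun s => φ₁ s / φ₂ s) (W t / (ρ t * φ₂ t ^ 2)) t := by
    intro t ht htR
    have hφ1 : HasDerivAt φ₁ (dφ₁ t) t :=
      (hφ₁' t ht.le htR).hasDerivAt (Ici_mem_nhds ht)
    have hφ2 : HasDerivAt φ₂ (dφ₂ t) t :=
      (hφ₂' t ht.le htR).hasDerivAt (Ici_mem_nhds ht)
    have h2ne : φ₂ t ≠ 0 := (hpos₂ t ht.le htR).ne'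
    have h : HasDerivAt (fun s => φ₁ s / φ₂ s) _ t := hφ1.div hφ2 h2ne
    convert h using 1
    have hρne : ρ t ≠ 0 := (hρpos t ht).ne'
    field_simp [hWdef]
    ring
  have hq0 : HasDerivWithinAt (fun s => φ₁ s / φ₂ s) 0 (Ici 0) 0 := by
    have h : HasDerivWithinAt (fun s => φ₁ s / φ₂ s) _ (Ici 0) 0 := (hφ₁' 0 le_rfl h0R).div (hφ₂' 0 le_rfl h0R) (by rw [hφ₂0]; exact one_ne_zero)
    simpa [hdφ₁0, hdφ₂0] using h
  have hqcont : ∀ x : ℝ, (x : EReal) < R → ContinuousOn (fun s => φ₁ s / φ₂ s) (Icc 0 x) := by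
    intro x hxR t ht
    have htR : (t : EReal) < R := (EReal.coe_le_coe_iff.2 ht.2).trans_lt hxR
    have h2ne : φ₂ t ≠ 0 := (hpos₂ t ht.1 htR).ne'
    exact (((hφ₁' t ht.1 htR).continuousWithinAt.mono Icc_subset_Ici_self).div
      ((hφ₂' t ht.1 htR).continuousWithinAt.mono Icc_subset_Ici_self) h2ne)
  -- dichotomy on the sign of W near 0
  by_cases hcase : ∃ s ∈ Ioc (0:ℝ) δ, W s ≤ 0
  · -- impossible: leads to a strictly negative slope of q at 0
    exfalso
    obtain ⟨s, hs, hWs⟩ := hcase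
    have hmono := hWmono δ hδ (hδR δ le_rfl) (fun t ht => hGδ t ht.1.le ht.2.le)
    have hu : s / 2 ∈ Ioc (0:ℝ) δ := ⟨by linarith [hs.1], by linarith [hs.1, hs.2]⟩
    set u : ℝ := s / 2 with hudef
    have hus : u < s := by simp only [hudef]; linarith [hs.1]
    have hm : W u < 0 := lt_of_lt_of_le (hmono hu hs hus) hWs
    have hWt : ∀ t, t ∈ Ioc 0 u → W t ≤ W u := by
      intro t ht
      rcases eq_or_lt_of_le ht.2 with h | h
      · rw [h]
      · exact (hmono ⟨ht.1, ht.2.trans hu.2⟩ hu h).le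
    -- bound ρ * φ₂² on (0, u]
    have hφ₂cont : ContinuousOn φ₂ (Icc 0 u) := by
      intro t ht
      have htR : (t : EReal) < R := hδR t (ht.2.trans hu.2)
      exact (hφ₂' t ht.1 htR).continuousWithinAt.mono Icc_subset_Ici_self
    obtain ⟨xM, hxM, hxMax⟩ := isCompact_Icc.exists_isMaxOn
      ⟨0, left_mem_Icc.2 (by linarith [hu.1])⟩ hφ₂cont
    set M : ℝ := max (φ₂ xM) 1 with hMdef
    have hMpos : 0 < M := lt_of_lt_of_le one_pos (le_max_right _ _)
    set C : ℝ := (max 1 u) ^ (N - 1) * Real.exp (u ^ 2 / (4 * Dv)) * M ^ 2 with hCdef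
    have hCpos : 0 < C := by
      have : (0:ℝ) < max 1 u := lt_of_lt_of_le one_pos (le_max_left _ _)
      positivity
    have hbound : ∀ t, t ∈ Ioc 0 u → ρ t * φ₂ t ^ 2 ≤ C := by
      intro t ht
      have htφ : φ₂ t ≤ M := le_trans (hxMax ⟨ht.1.le, ht.2⟩) (le_max_left _ _)
      have htφ0 : 0 < φ₂ t := hpos₂ t ht.1.le (hδR t (ht.2.trans hu.2))
      have hρle : ρ t ≤ (max 1 u) ^ (N - 1) * Real.exp (u ^ 2 / (4 * Dv)) := by
        rw [hρ]
        have h1 : t ^ (N - 1) ≤ (max 1 u) ^ (N - 1) :=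
          pow_le_pow_left₀ ht.1.le (le_trans ht.2 (le_max_right _ _)) _
        have h2 : Real.exp (t ^ 2 / (4 * Dv)) ≤ Real.exp (u ^ 2 / (4 * Dv)) := by
          apply Real.exp_le_exp.2
          apply div_le_div_of_nonneg_right ?_ (by positivity)
          · nlinarith [ht.1, ht.2]
        exact mul_le_mul h1 h2 (Real.exp_pos _).le (by positivity)
      have hφsq : φ₂ t ^ 2 ≤ M ^ 2 := by nlinarith
      have hρ0 : 0 ≤ ρ t := (hρpos t ht.1).le
      calc ρ t * φ₂ t ^ 2 ≤ ((max 1 u) ^ (N - 1) * Real.exp (u ^ 2 / (4 * Dv))) * M ^ 2 :=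
            mul_le_mul hρle hφsq (by positivity) (by positivity)
        _ = C := rfl
    -- q has slope ≤ W u / C < 0 on (0, u]
    set m : ℝ := W u with hmdef
    have hmC : m / C < 0 := div_neg_of_neg_of_pos hm hCpos
    have hqslope : ∀ t, t ∈ Ioc 0 u → φ₁ t / φ₂ t - 1 ≤ (m / C) * t := by
      have hanti : AntitoneOn (fun t => φ₁ t / φ₂ t - (m / C) * t) (Icc 0 u) := by
        apply antitoneOn_of_deriv_nonpos (convex_Icc 0 u)
        · exact (hqcont u (hδR u hu.2)).sub ((continuous_const.mul continuous_id).continuousOn)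
        · rw [interior_Icc]
          intro t ht
          have hd : HasDerivAt (fun t => φ₁ t / φ₂ t - (m / C) * t)
              (W t / (ρ t * φ₂ t ^ 2) - m / C) t := by
            have h1 := hqd t ht.1 (hδR t (ht.2.le.trans hu.2))
            have h2 : HasDerivAt (fun x : ℝ => (m / C) * x) (m / C) t := by
              simpa using (hasDerivAt_id t).const_mul (m / C)
            exact h1.sub h2
          exact hd.differentiableAt.differentiableWithinAt
        · rw [interior_Icc]
          intro t ht
          have hd : HasDerivAt (fun t => φ₁ t / φ₂ t - (m / C) * t)
              (W t / (ρ t * φ₂ t ^ 2) - m / C) t := by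
            have h1 := hqd t ht.1 (hδR t (ht.2.le.trans hu.2))
            have h2 : HasDerivAt (fun x : ℝ => (m / C) * x) (m / C) t := by
              simpa using (hasDerivAt_id t).const_mul (m / C)
            exact h1.sub h2
          rw [hd.deriv]
          have hX : 0 < ρ t * φ₂ t ^ 2 := by
            have := hpos₂ t ht.1.le (hδR t (ht.2.le.trans hu.2))
            have := hρpos t ht.1
            positivity
          have hXC : ρ t * φ₂ t ^ 2 ≤ C := hbound t ⟨ht.1, ht.2.le⟩
          have hW1 : W t / (ρ t * φ₂ t ^ 2) ≤ m / (ρ t * φ₂ t ^ 2) :=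
            (div_le_div_iff_of_pos_right hX).2 (hWt t ⟨ht.1, ht.2.le⟩)
          have hW2 : m / (ρ t * φ₂ t ^ 2) ≤ m / C := by
            rw [div_le_div_iff₀ hX hCpos]
            nlinarith
          linarith
      intro t ht
      have h0 : (0:ℝ) ∈ Icc 0 u := left_mem_Icc.2 (by linarith [hu.1])
      have h := hanti h0 ⟨ht.1.le, ht.2⟩ ht.1.le
      simp only [hφ₁0, hφ₂0, mul_zero, sub_zero, one_div_one] at h
      linarith
    -- contradiction with q'(0) = 0
    rw [hasDerivWithinAt_iff_tendsto_slope] at hq0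
    have hset : Ici (0:ℝ) \ {0} = Ioi 0 := Ici_sdiff_left
    rw [hset] at hq0
    have hIoc : Ioc (0:ℝ) u ∈ nhdsWithin 0 (Ioi 0) :=
      Ioc_mem_nhdsGT_of_mem ⟨le_refl 0, hu.1⟩
    have hsl : ∀ᶠ t in nhdsWithin 0 (Ioi (0:ℝ)), slope (fun s => φ₁ s / φ₂ s) 0 t ≤ m / C := by
      filter_upwards [hIoc] with t ht
      have hq := hqslope t ht
      simp only [slope_def_field, hφ₁0, hφ₂0, sub_zero, one_div_one]
      rw [div_le_iff₀ ht.1]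
      linarith [hq]
    have := le_of_tendsto hq0 hsl
    linarith
  · -- main case: W > 0 near 0
    push_neg at hcase
    have hWposδ : ∀ s, s ∈ Ioc (0:ℝ) δ → 0 < W s := hcase
    -- q is strictly increasing on [0, δ], hence φ₂ < φ₁ on (0, δ]
    have hqmono : StrictMonoOn (fun s => φ₁ s / φ₂ s) (Icc 0 δ) := by
      apply strictMonoOn_of_deriv_pos (convex_Icc 0 δ) (hqcont δ (hδR δ le_rfl))
      rw [interior_Icc]
      intro t ht
      have hd := hqd t ht.1 (hδR t ht.2.le)
      rw [hd.deriv]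
      have hW := hWposδ t ⟨ht.1, ht.2.le⟩
      have hφ := hpos₂ t ht.1.le (hδR t ht.2.le)
      have hρt := hρpos t ht.1
      positivity
    have hsmall : ∀ t, t ∈ Ioc (0:ℝ) δ → φ₂ t < φ₁ t := by
      intro t ht
      have h := hqmono (left_mem_Icc.2 hδ.le) ⟨ht.1.le, ht.2⟩ ht.1
      simp only [hφ₁0, hφ₂0, one_div_one] at h
      have hφ := hpos₂ t ht.1.le (hδR t ht.2)
      exact (one_lt_div hφ).1 h
    intro r hr hrR
    by_contra hcon
    push_neg at hcon
    set B : Set ℝ := {b : ℝ | 0 < b ∧ (b : EReal) < R ∧ φ₁ b ≤ φ₂ b} with hBdef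
    have hBne : B.Nonempty := ⟨r, hr, hrR, hcon⟩
    have hBbd : BddBelow B := ⟨0, fun b hb => hb.1.le⟩
    set r₀ : ℝ := sInf B with hr₀def
    have hδr₀ : δ ≤ r₀ := by
      apply le_csInf hBne
      intro b hb
      by_contra h
      push_neg at h
      exact absurd hb.2.2 (not_le.2 (hsmall b ⟨hb.1, h.le⟩))
    have hr₀pos : 0 < r₀ := hδ.trans_le hδr₀
    have hr₀R : (r₀ : EReal) < R := by
      obtain ⟨b, hb⟩ := hBne
      exact (EReal.coe_le_coe_iff.2 (csInf_le hBbd hb)).trans_lt hb.2.1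
    have hlt : ∀ t, 0 < t → t < r₀ → φ₂ t < φ₁ t := by
      intro t ht htr
      by_contra h
      push_neg at h
      have htR : (t : EReal) < R := (EReal.coe_le_coe_iff.2 htr.le).trans_lt hr₀R
      have : t ∈ B := ⟨ht, htR, h⟩
      exact absurd (csInf_le hBbd this) (not_le.2 htr)
    -- continuity at r₀
    have hφ1r : HasDerivAt φ₁ (dφ₁ r₀) r₀ :=
      (hφ₁' r₀ hr₀pos.le hr₀R).hasDerivAt (Ici_mem_nhds hr₀pos)
    have hφ2r : HasDerivAt φ₂ (dφ₂ r₀) r₀ :=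
      (hφ₂' r₀ hr₀pos.le hr₀R).hasDerivAt (Ici_mem_nhds hr₀pos)
    have hwc : ContinuousAt (fun t => φ₁ t - φ₂ t) r₀ :=
      (hφ1r.continuousAt).sub (hφ2r.continuousAt)
    have hle1 : φ₁ r₀ ≤ φ₂ r₀ := by
      by_contra h
      push_neg at h
      have hev' : ∀ᶠ x in nhds r₀, 0 < φ₁ x - φ₂ x :=
        hwc.eventually (eventually_gt_nhds
          (show (0:ℝ) < φ₁ r₀ - φ₂ r₀ by linarith))
      obtain ⟨ε, hε, hball⟩ := Metric.eventually_nhds_iff.1 hev'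
      have : r₀ + ε ≤ r₀ := by
        apply le_csInf hBne
        intro b hb
        by_contra hh
        push_neg at hh
        have hrb : r₀ ≤ b := csInf_le hBbd hb
        have hd : dist b r₀ < ε := by
          rw [Real.dist_eq, abs_of_nonneg (by linarith)]
          linarith
        have := hball hd
        linarith [hb.2.2]
      linarith
    have hle2 : φ₂ r₀ ≤ φ₁ r₀ := by
      by_contra h
      push_neg at h
      have hev' : ∀ᶠ x in nhds r₀, 0 < φ₂ x - φ₁ x :=
        ((hφ2r.continuousAt).sub (hφ1r.continuousAt)).eventually
          (eventually_gt_nhds (show (0:ℝ) < φ₂ r₀ - φ₁ r₀ by linarith))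
      obtain ⟨ε, hε, hball⟩ := Metric.eventually_nhds_iff.1 hev'
      set t : ℝ := r₀ - min (ε / 2) (r₀ / 2) with htdef
      have ht1 : 0 < t := by
        have : min (ε / 2) (r₀ / 2) ≤ r₀ / 2 := min_le_right _ _
        simp only [htdef]; linarith
      have ht2 : t < r₀ := by
        have : 0 < min (ε / 2) (r₀ / 2) := lt_min (by linarith) (by linarith)
        simp only [htdef]; linarith
      have hd : dist t r₀ < ε := by
        rw [Real.dist_eq, abs_of_nonpos (by simp only [htdef]; linarith [lt_min (half_pos hε) (half_pos hr₀pos)])]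
        have : min (ε / 2) (r₀ / 2) ≤ ε / 2 := min_le_left _ _
        simp only [htdef]; linarith
      have h1 := hball hd
      have h2 := hlt t ht1 ht2
      linarith
    have heq : φ₁ r₀ = φ₂ r₀ := le_antisymm hle1 hle2
    -- W(r₀) > 0
    have hmono₀ := hWmono r₀ hr₀pos hr₀R (fun t ht =>
      hGpos t (hpos₂ t ht.1.le ((EReal.coe_le_coe_iff.2 ht.2.le).trans_lt hr₀R))
        (hlt t ht.1 ht.2).le)
    have hWδ : 0 < W δ := hWposδ δ ⟨hδ, le_rfl⟩
    have hWr₀ : 0 < W r₀ := by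
      rcases eq_or_lt_of_le hδr₀ with h | h
      · rw [← h]; exact hWδ
      · exact hWδ.trans (hmono₀ ⟨hδ, hδr₀⟩ ⟨hr₀pos, le_rfl⟩ h)
    -- hence dφ₁ r₀ > dφ₂ r₀
    have hφ2r₀pos : 0 < φ₂ r₀ := hpos₂ r₀ hr₀pos.le hr₀R
    have hρr₀ : 0 < ρ r₀ := hρpos r₀ hr₀pos
    have hdiff : 0 < dφ₁ r₀ - dφ₂ r₀ := by
      simp only [hWdef] at hWr₀
      rw [heq] at hWr₀
      nlinarith [mul_pos hρr₀ hφ2r₀pos]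
    -- left slope contradiction
    have hw : HasDerivAt (fun t => φ₁ t - φ₂ t) (dφ₁ r₀ - dφ₂ r₀) r₀ := hφ1r.sub hφ2r
    rw [hasDerivAt_iff_tendsto_slope] at hw
    have hwl : Filter.Tendsto (slope (fun t => φ₁ t - φ₂ t) r₀)
        (nhdsWithin r₀ (Iio r₀)) (nhds (dφ₁ r₀ - dφ₂ r₀)) :=
      hw.mono_left (nhdsWithin_mono r₀ (fun x hx => ne_of_lt hx))
    have hIoo : Ioo (0:ℝ) r₀ ∈ nhdsWithin r₀ (Iio r₀) :=
      Ioo_mem_nhdsLT_of_mem ⟨hr₀pos, le_rfl⟩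
    have hsl : ∀ᶠ t in nhdsWithin r₀ (Iio r₀),
        slope (fun t => φ₁ t - φ₂ t) r₀ t ≤ 0 := by
      filter_upwards [hIoo] with t ht
      rw [slope_def_field]
      have hw0 : φ₁ r₀ - φ₂ r₀ = 0 := by linarith [heq]
      rw [hw0, sub_zero]
      apply div_nonpos_of_nonneg_of_nonpos
      · linarith [hlt t ht.1 ht.2]
      · linarith [ht.2]
    have := le_of_tendsto hwl hsl
    linarith
end

section
/- Let N ≥ 1 be an integer, M > 0, D_v > 0, and set ρ(r) = r^{N−1} e^{r²/(4D_v)}. Suppose φ : [0,∞) → ℝ is a C² function with φ(0) = 1, φ'(0) = 0 solving D_v (ρ(r) φ'(r))' = M ρ(r) φ(r) on (0,∞). Then φ is increasing, and there exists a constant L > 0 depending only on M, D_v, N such that for all r > 1: φ(r) ≤ L r^{4M} if N = 1, and φ(r) ≤ L r^{2M} if N ≥ 2. -/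
open Real Set Filter intervalIntegral

set_option maxHeartbeats 1000000

private lemma exp_shuffle {a b x y : ℝ} (h : a * Real.exp (-x) ≤ b * Real.exp (-y)) :
    a ≤ b * Real.exp (x - y) := by
  have h2 := mul_le_mul_of_nonneg_right h (Real.exp_pos x).le
  rw [mul_assoc, mul_assoc, ← Real.exp_add, ← Real.exp_add] at h2
  simpa [neg_add_eq_sub] using h2

private lemma gronwall_aux (φ dφ c C : ℝ → ℝ) (a b : ℝ) (hab : a ≤ b)
    (hφ : ContinuousOn φ (Icc a b))
    (hd : ∀ s ∈ Ioo a b, HasDerivAt φ (dφ s) s)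
    (hC : ∀ s ∈ Icc a b, HasDerivAt C (c s) s)
    (hle : ∀ s ∈ Ioo a b, dφ s ≤ c s * φ s) :
    φ b * Real.exp (-C b) ≤ φ a * Real.exp (-C a) := by
  have hCc : ContinuousOn C (Icc a b) := fun s hs => (hC s hs).continuousAt.continuousWithinAt
  have hder : ∀ s ∈ Ioo a b, HasDerivAt (fun t => φ t * Real.exp (-C t))
      (dφ s * Real.exp (-C s) + φ s * (Real.exp (-C s) * -(c s))) s := by
    intro s hs
    exact (hd s hs).mul ((hC s (Ioo_subset_Icc_self hs)).neg.exp)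
  have hanti : AntitoneOn (fun t => φ t * Real.exp (-C t)) (Icc a b) := by
    apply antitoneOn_of_deriv_nonpos (convex_Icc a b)
    · exact hφ.mul (Real.continuous_exp.comp_continuousOn hCc.neg)
    · intro s hs
      rw [interior_Icc] at hs
      exact (hder s hs).differentiableAt.differentiableWithinAt
    · intro s hs
      rw [interior_Icc] at hs
      rw [(hder s hs).deriv]
      have h1 := Real.exp_pos (-C s)
      have h2 := hle s hs
      nlinarith [mul_le_mul_of_nonneg_right h2 h1.le]
  exact hanti (left_mem_Icc.2 hab) (right_mem_Icc.2 hab) hab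

/-- For the linearized self-similar profile equation
`Dᵥ (ρ φ')' = M ρ φ` with `ρ(r) = r^{N-1} e^{r²/(4Dᵥ)}`, `φ(0)=1`, `φ'(0)=0`,
the solution is increasing and grows at most algebraically:
`φ(r) ≤ L r^{4M}` for `N = 1` and `φ(r) ≤ L r^{2M}` for `N ≥ 2` (for `r > 1`),
where `L` depends only on `M`, `Dᵥ`, `N`. -/
theorem stmt3
    (N : ℕ) (hN : 1 ≤ N) (M Dv : ℝ) (hM : 0 < M) (hDv : 0 < Dv)
    (ρ : ℝ → ℝ) (hρ : ∀ r : ℝ, ρ r = r ^ (N - 1) * Real.exp (r ^ 2 / (4 * Dv))) :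
    ∃ L > 0, ∀ φ dφ : ℝ → ℝ,
      (∀ r ∈ Ici (0:ℝ), HasDerivWithinAt φ (dφ r) (Ici 0) r) →
      (∀ r ∈ Ioi (0:ℝ), HasDerivAt (fun s => Dv * (ρ s * dφ s)) (M * ρ r * φ r) r) →
      φ 0 = 1 → dφ 0 = 0 →
      MonotoneOn φ (Ici 0) ∧
        ∀ r : ℝ, 1 < r →
          (N = 1 → φ r ≤ L * r ^ (4 * M)) ∧ (2 ≤ N → φ r ≤ L * r ^ (2 * M)) := by
  set r0 : ℝ := max 1 (8 * Real.sqrt Dv) with hr0def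
  have hr01 : (1:ℝ) ≤ r0 := le_max_left _ _
  have hr0s : 8 * Real.sqrt Dv ≤ r0 := le_max_right _ _
  have hr0pos : (0:ℝ) < r0 := lt_of_lt_of_le one_pos hr01
  refine ⟨Real.exp (M / Dv * r0 ^ 2), Real.exp_pos _, ?_⟩
  intro φ dφ hφd hode hφ0 hdφ0
  -- ρ facts
  have hρc : Continuous ρ := by
    have h : ρ = fun r => r ^ (N - 1) * Real.exp (r ^ 2 / (4 * Dv)) := funext hρ
    rw [h]; fun_prop
  have hρpos : ∀ r : ℝ, 0 < r → 0 < ρ r := by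
    intro r hr; rw [hρ]; positivity
  have hρnn : ∀ r : ℝ, 0 ≤ r → 0 ≤ ρ r := by
    intro r hr; rw [hρ]; positivity
  have hρmono : ∀ s t : ℝ, 0 ≤ s → s ≤ t → ρ s ≤ ρ t := by
    intro s t hs hst
    rw [hρ, hρ]
    have h1 : s ^ (N-1) ≤ t ^ (N-1) := pow_le_pow_left₀ hs hst _
    have h2 : Real.exp (s^2/(4*Dv)) ≤ Real.exp (t^2/(4*Dv)) := by
      apply Real.exp_le_exp.2
      have h3 : s^2 ≤ t^2 := by nlinarith
      have h4 : (0:ℝ) ≤ 4*Dv := by linarith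
      exact div_le_div_of_nonneg_right h3 h4
    exact mul_le_mul h1 h2 (Real.exp_pos _).le (pow_nonneg (hs.trans hst) _)
  -- φ facts
  have hφcont : ContinuousOn φ (Ici 0) := fun r hr => (hφd r hr).continuousWithinAt
  have hφder : ∀ r : ℝ, 0 < r → HasDerivAt φ (dφ r) r :=
    fun r hr => (hφd r hr.le).hasDerivAt (Ici_mem_nhds hr)
  set g : ℝ → ℝ := fun s => Dv * (ρ s * dφ s) with hgdef
  have hgder : ∀ r : ℝ, 0 < r → HasDerivAt g (M * ρ r * φ r) r := fun r hr => hode r hr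
  have hInt : ∀ a b : ℝ, 0 ≤ a → 0 ≤ b → IntervalIntegrable (fun s => ρ s * φ s) MeasureTheory.volume a b := by
    intro a b ha hb
    apply ContinuousOn.intervalIntegrable
    apply (hρc.continuousOn).mul (hφcont.mono ?_)
    intro x hx
    rcases le_total a b with h | h
    · rw [uIcc_of_le h] at hx; exact le_trans ha hx.1
    · rw [uIcc_of_ge h] at hx; exact le_trans hb hx.1
  -- bound on φ near 0
  obtain ⟨B, hB⟩ := (isCompact_Icc : IsCompact (Icc (0:ℝ) 1)).exists_bound_of_continuousOn
    (hφcont.mono Icc_subset_Ici_self)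
  have hBnn : 0 ≤ B := le_trans (norm_nonneg _) (hB 0 ⟨le_rfl, zero_le_one⟩)
  set K : ℝ := M * (ρ 1 * B) with hKdef
  have hKnn : 0 ≤ K := by
    have := hρnn 1 zero_le_one
    positivity
  have hlip : ∀ ξ ε : ℝ, 0 < ξ → ξ ≤ ε → ε ≤ 1 → ‖g ε - g ξ‖ ≤ K * ‖ε - ξ‖ := by
    intro ξ ε h1 h2 h3
    apply (convex_Icc ξ ε).norm_image_sub_le_of_norm_hasDerivWithin_le
      (f' := fun x => M * ρ x * φ x)
      (fun x hx => (hgder x (lt_of_lt_of_le h1 hx.1)).hasDerivWithinAt) ?_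
      (left_mem_Icc.2 h2) (right_mem_Icc.2 h2)
    intro x hx
    have hx0 : 0 ≤ x := le_trans h1.le hx.1
    have hx1 : x ≤ 1 := le_trans hx.2 h3
    have hr1 : ρ x ≤ ρ 1 := hρmono x 1 hx0 hx1
    have hφx : ‖φ x‖ ≤ B := hB x ⟨hx0, hx1⟩
    have hρxnn := hρnn x hx0
    calc ‖M * ρ x * φ x‖ = M * (ρ x * ‖φ x‖) := by
          rw [norm_mul, norm_mul]
          rw [Real.norm_of_nonneg hM.le, Real.norm_of_nonneg hρxnn, mul_assoc]
      _ ≤ M * (ρ 1 * B) := by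
          apply mul_le_mul_of_nonneg_left ?_ hM.le
          exact mul_le_mul hr1 hφx (norm_nonneg _) (hρnn 1 zero_le_one)
  -- slope tendsto
  have hslope : Tendsto (fun ε => (φ ε - 1) / ε) (nhdsWithin 0 (Ioi 0)) (nhds 0) := by
    have h0 := hφd 0 self_mem_Ici
    rw [hdφ0] at h0
    rw [hasDerivWithinAt_iff_tendsto_slope] at h0
    rw [Ici_sdiff_left] at h0
    apply h0.congr
    intro x
    rw [slope_def_field, hφ0]
    ring_nf
  -- g tends to 0 at 0+
  have hg0 : Tendsto g (nhdsWithin 0 (Ioi 0)) (nhds 0) := by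
    apply squeeze_zero_norm' (a := fun ε => Dv * (ρ 1 * |(φ ε - 1)/ε|) + K * ε)
    · filter_upwards [Ioc_mem_nhdsGT (zero_lt_one)] with ε hε
      obtain ⟨hε0, hε1⟩ := hε
      obtain ⟨ξ, hξ, hξeq⟩ := exists_hasDerivAt_eq_slope φ dφ hε0
        (hφcont.mono (fun x hx => hx.1)) (fun x hx => hφder x hx.1)
      have hslopeeq : dφ ξ = (φ ε - 1)/ε := by rw [hξeq, hφ0]; ring_nf
      have h1 : ‖g ξ‖ ≤ Dv * (ρ 1 * |(φ ε - 1)/ε|) := by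
        have hξ0 : 0 ≤ ξ := hξ.1.le
        have hρξ : ρ ξ ≤ ρ 1 := hρmono ξ 1 hξ0 (le_trans hξ.2.le hε1)
        calc ‖g ξ‖ = Dv * (ρ ξ * |dφ ξ|) := by
              simp only [hgdef, norm_mul, Real.norm_of_nonneg hDv.le,
                Real.norm_of_nonneg (hρnn ξ hξ0), Real.norm_eq_abs]
          _ ≤ Dv * (ρ 1 * |(φ ε - 1)/ε|) := by
              rw [hslopeeq]
              exact mul_le_mul_of_nonneg_left
                (mul_le_mul_of_nonneg_right hρξ (abs_nonneg _) |>.trans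
                  (mul_le_mul_of_nonneg_left le_rfl (hρnn 1 zero_le_one))) hDv.le
      have h2 : ‖g ε - g ξ‖ ≤ K * ε := by
        calc ‖g ε - g ξ‖ ≤ K * ‖ε - ξ‖ := hlip ξ ε hξ.1 hξ.2.le hε1
          _ ≤ K * ε := by
              apply mul_le_mul_of_nonneg_left ?_ hKnn
              rw [Real.norm_of_nonneg (by linarith [hξ.2] : (0:ℝ) ≤ ε - ξ)]
              linarith [hξ.1]
      calc ‖g ε‖ = ‖g ξ + (g ε - g ξ)‖ := by ring_nf
        _ ≤ ‖g ξ‖ + ‖g ε - g ξ‖ := norm_add_le _ _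
        _ ≤ Dv * (ρ 1 * |(φ ε - 1)/ε|) + K * ε := add_le_add h1 h2
    · have t1 : Tendsto (fun ε : ℝ => Dv * (ρ 1 * |(φ ε - 1)/ε|)) (nhdsWithin 0 (Ioi 0)) (nhds 0) := by
        have := (hslope.abs).const_mul (ρ 1) |>.const_mul Dv
        simpa using this
      have t2 : Tendsto (fun ε : ℝ => K * ε) (nhdsWithin 0 (Ioi 0)) (nhds 0) := by
        have : Tendsto (fun ε : ℝ => ε) (nhdsWithin 0 (Ioi 0)) (nhds 0) :=
          tendsto_id.mono_left nhdsWithin_le_nhds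
        simpa using this.const_mul K
      simpa using t1.add t2
  -- key integral identity
  have key : ∀ r : ℝ, 0 < r → Dv * (ρ r * dφ r) = M * ∫ s in (0:ℝ)..r, ρ s * φ s := by
    intro r hr
    have hmem : Ioo (0:ℝ) r ∈ nhdsWithin (0:ℝ) (Ioi 0) := Ioo_mem_nhdsGT_of_mem ⟨le_rfl, hr⟩
    have hFTC : ∀ ε ∈ Ioo (0:ℝ) r, g r - g ε = ∫ s in ε..r, M * (ρ s * φ s) := by
      intro ε hε
      have hint : IntervalIntegrable (fun s => M * (ρ s * φ s)) MeasureTheory.volume ε r :=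
        (hInt ε r hε.1.le (hε.1.trans hε.2).le).const_mul M
      rw [intervalIntegral.integral_eq_sub_of_hasDerivAt (f := g) ?_ hint]
      intro x hx
      rw [uIcc_of_le hε.2.le] at hx
      have hx0 : 0 < x := lt_of_lt_of_le hε.1 hx.1
      have := hgder x hx0
      rwa [mul_assoc] at this
    have h1 : Tendsto (fun ε => g r - g ε) (nhdsWithin 0 (Ioi 0)) (nhds (g r)) := by
      have := tendsto_const_nhds (x := g r) (f := nhdsWithin (0:ℝ) (Ioi 0)) |>.sub hg0
      simpa using this
    have hint0r : MeasureTheory.IntegrableOn (fun s => M * (ρ s * φ s)) (uIcc (0:ℝ) r) := by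
      rw [uIcc_of_le hr.le]
      apply ContinuousOn.integrableOn_Icc
      exact continuousOn_const.mul ((hρc.continuousOn).mul (hφcont.mono Icc_subset_Ici_self))
    have hprim := intervalIntegral.continuousOn_primitive_interval hint0r
    have hcw : ContinuousWithinAt (fun x => ∫ t in (0:ℝ)..x, M * (ρ t * φ t)) (uIcc (0:ℝ) r) 0 :=
      hprim 0 (by rw [uIcc_of_le hr.le]; exact ⟨le_rfl, hr.le⟩)
    have hle' : nhdsWithin (0:ℝ) (Ioi 0) ≤ nhdsWithin (0:ℝ) (uIcc (0:ℝ) r) := by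
      rw [uIcc_of_le hr.le]
      exact le_trans (nhdsWithin_le_of_mem hmem) (nhdsWithin_mono _ Ioo_subset_Icc_self)
    have htend : Tendsto (fun ε => ∫ t in (0:ℝ)..ε, M * (ρ t * φ t)) (nhdsWithin 0 (Ioi 0))
        (nhds 0) := by
      have := hcw.tendsto.mono_left hle'
      simpa using this
    have h2 : Tendsto (fun ε => g r - g ε) (nhdsWithin 0 (Ioi 0))
        (nhds (∫ s in (0:ℝ)..r, M * (ρ s * φ s))) := by
      have hcongr : (fun ε => g r - g ε) =ᶠ[nhdsWithin (0:ℝ) (Ioi 0)]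
          (fun ε => (∫ s in (0:ℝ)..r, M * (ρ s * φ s)) - ∫ t in (0:ℝ)..ε, M * (ρ t * φ t)) := by
        filter_upwards [hmem] with ε hε
        rw [hFTC ε hε]
        rw [← intervalIntegral.integral_interval_sub_left
          ((hInt 0 r le_rfl hr.le).const_mul M) ((hInt 0 ε le_rfl hε.1.le).const_mul M)]
      rw [Filter.tendsto_congr' hcongr]
      have := tendsto_const_nhds
        (x := (∫ s in (0:ℝ)..r, M * (ρ s * φ s))) (f := nhdsWithin (0:ℝ) (Ioi 0)) |>.sub htend
      simpa using this
    have hgr : g r = ∫ s in (0:ℝ)..r, M * (ρ s * φ s) := tendsto_nhds_unique h1 h2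
    rw [← intervalIntegral.integral_const_mul]
    exact hgr
  -- positivity of φ
  have hpos : ∀ r : ℝ, 0 ≤ r → 1/2 < φ r := by
    by_contra hcon
    push_neg at hcon
    obtain ⟨b, hb0, hb⟩ := hcon
    set A : Set ℝ := {r : ℝ | 0 ≤ r ∧ φ r ≤ 1/2} with hAdef
    have hA : A.Nonempty := ⟨b, hb0, hb⟩
    have hAbdd : BddBelow A := ⟨0, fun x hx => hx.1⟩
    set c := sInf A with hcdef
    have hc0 : 0 ≤ c := le_csInf hA fun x hx => hx.1
    have hcA : φ c ≤ 1/2 := by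
      have hglb := isGLB_csInf hA hAbdd
      have hmemcl : c ∈ closure A := hglb.mem_closure hA
      have hcw : ContinuousWithinAt φ A c := (hφcont c hc0).mono fun x hx => hx.1
      have hcl := hcw.mem_closure_image hmemcl
      have himg : φ '' A ⊆ Iic (1/2) := by
        rintro y ⟨x, hx, rfl⟩
        exact hx.2
      exact (isClosed_Iic.closure_subset_iff.2 himg) hcl
    have hcpos : 0 < c := by
      rcases hc0.lt_or_eq with h | h
      · exact h
      · exfalso; rw [← h, hφ0] at hcA; norm_num at hcA
    have hlt : ∀ s : ℝ, 0 ≤ s → s < c → 1/2 < φ s := by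
      intro s hs hsc
      by_contra h'
      push_neg at h'
      exact absurd (csInf_le hAbdd ⟨hs, h'⟩) (not_le.2 hsc)
    have hdφnn : ∀ x : ℝ, x ∈ Ioo 0 c → 0 ≤ dφ x := by
      intro x hx
      have hk := key x hx.1
      have hintnn : 0 ≤ ∫ s in (0:ℝ)..x, ρ s * φ s := by
        apply intervalIntegral.integral_nonneg hx.1.le
        intro u hu
        have hu0 := hu.1
        have huφ : 0 ≤ φ u := le_of_lt (lt_trans (by norm_num) (hlt u hu0 (lt_of_le_of_lt hu.2 hx.2)))
        exact mul_nonneg (hρnn u hu0) huφ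
      have hρx := hρpos x hx.1
      nlinarith [hk, mul_pos hDv hρx]
    have hmono : MonotoneOn φ (Icc 0 c) := by
      apply monotoneOn_of_hasDerivWithinAt_nonneg (convex_Icc 0 c)
        (hφcont.mono Icc_subset_Ici_self) (f' := dφ)
      · intro x hx
        rw [interior_Icc] at hx
        exact (hφder x hx.1).hasDerivWithinAt
      · intro x hx
        rw [interior_Icc] at hx
        exact hdφnn x hx
    have : (1:ℝ) ≤ φ c := by
      have := hmono (left_mem_Icc.2 hc0) (right_mem_Icc.2 hc0) hc0
      rwa [hφ0] at this
    linarith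
  -- monotone on Ici 0
  have hdφnn : ∀ x : ℝ, 0 < x → 0 ≤ dφ x := by
    intro x hx
    have hk := key x hx
    have hintnn : 0 ≤ ∫ s in (0:ℝ)..x, ρ s * φ s := by
      apply intervalIntegral.integral_nonneg hx.le
      intro u hu
      exact mul_nonneg (hρnn u hu.1) (le_of_lt (lt_trans (by norm_num) (hpos u hu.1)))
    have hρx := hρpos x hx
    nlinarith [mul_pos hDv hρx]
  have hmono : MonotoneOn φ (Ici 0) := by
    apply monotoneOn_of_hasDerivWithinAt_nonneg (convex_Ici 0) hφcont (f' := dφ)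
    · intro x hx
      rw [interior_Ici] at hx
      exact (hφder x hx).hasDerivWithinAt
    · intro x hx
      rw [interior_Ici] at hx
      exact hdφnn x hx
  have hφge1 : ∀ r : ℝ, 0 ≤ r → 1 ≤ φ r := by
    intro r hr
    have := hmono self_mem_Ici hr hr
    rwa [hφ0] at this
  refine ⟨hmono, ?_⟩
  -- integral bounds for ρ
  have hρint : ∀ a b : ℝ, IntervalIntegrable ρ MeasureTheory.volume a b :=
    fun a b => hρc.intervalIntegrable a b
  have hintbound : ∀ r : ℝ, 0 ≤ r → ∫ s in (0:ℝ)..r, ρ s ≤ r * ρ r := by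
    intro r hr
    calc ∫ s in (0:ℝ)..r, ρ s ≤ ∫ _s in (0:ℝ)..r, ρ r :=
          intervalIntegral.integral_mono_on hr (hρint 0 r) intervalIntegrable_const
            (fun x hx => hρmono x r hx.1 hx.2)
      _ = r * ρ r := by simp
  have hI1 : ∀ r : ℝ, 0 ≤ r → ∫ s in (0:ℝ)..r, ρ s * φ s ≤ φ r * ∫ s in (0:ℝ)..r, ρ s := by
    intro r hr
    have h := intervalIntegral.integral_mono_on hr (hInt 0 r le_rfl hr)
      ((hρint 0 r).mul_const (φ r)) (fun x hx =>
        mul_le_mul_of_nonneg_left (hmono (mem_Ici.2 hx.1) (mem_Ici.2 hr) hx.2) (hρnn x hx.1))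
    rw [intervalIntegral.integral_mul_const] at h
    exact h.trans_eq (mul_comm _ _)
  have hdφle : ∀ s c : ℝ, 0 < s →
      M * (φ s * ∫ t in (0:ℝ)..s, ρ t) ≤ Dv * (ρ s * (c * φ s)) → dφ s ≤ c * φ s := by
    intro s c hs hc
    have hk := key s hs
    have h1 := hI1 s hs.le
    have h2 : M * ∫ t in (0:ℝ)..s, ρ t * φ t ≤ M * (φ s * ∫ t in (0:ℝ)..s, ρ t) :=
      mul_le_mul_of_nonneg_left h1 hM.le
    have h4 : 0 < Dv * ρ s := mul_pos hDv (hρpos s hs)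
    nlinarith [hk]
  -- N ≥ 2 integral bound
  have hintN2 : 2 ≤ N → ∀ s : ℝ, 0 < s →
      ∫ t in (0:ℝ)..s, ρ t ≤ 2*Dv*(s^(N-2) * Real.exp (s^2/(4*Dv))) := by
    intro hN2 s hs
    set F : ℝ → ℝ := fun t => 2*Dv*(t^(N-2) * Real.exp (t^2/(4*Dv))) with hFdef
    set dF : ℝ → ℝ := fun t => 2*Dv*(((N-2 : ℕ) : ℝ) * t^(N-3) * Real.exp (t^2/(4*Dv))
      + t^(N-2) * (Real.exp (t^2/(4*Dv)) * (2*t/(4*Dv)))) with hdFdef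
    have hF : ∀ t : ℝ, HasDerivAt F (dF t) t := by
      intro t
      have h1 := hasDerivAt_pow (N-2) t
      have h2 := ((hasDerivAt_pow 2 t).div_const (4*Dv)).exp
      have h3 := (h1.mul h2).const_mul (2*Dv)
      convert h3 using 1
      · rfl
      · rfl
      · rfl
      simp only [hdFdef]
      push_cast
      have hnn : N - 2 - 1 = N - 3 := by omega
      rw [← hnn]
      ring
    have hdFcont : Continuous dF := by
      simp only [hdFdef]; fun_prop
    have hmonoint : ∫ t in (0:ℝ)..s, ρ t ≤ ∫ t in (0:ℝ)..s, dF t := by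
      apply intervalIntegral.integral_mono_on hs.le (hρint 0 s)
        (hdFcont.intervalIntegrable 0 s)
      intro x hx
      rw [hρ]
      have hE := Real.exp_pos (x^2/(4*Dv))
      have hx0 := hx.1
      have hsplit : x^(N-1) = x^(N-2) * x := by
        rw [← pow_succ]
        congr 1
        omega
      have h4 : 2*Dv*(x^(N-2) * (Real.exp (x^2/(4*Dv)) * (2*x/(4*Dv))))
          = x^(N-1) * Real.exp (x^2/(4*Dv)) := by
        rw [hsplit]
        field_simp
        ring
      have h5 : 0 ≤ 2*Dv*(((N-2:ℕ):ℝ) * x^(N-3) * Real.exp (x^2/(4*Dv))) := by positivity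
      simp only [hdFdef]
      nlinarith [h4, h5]
    have hFTCF : ∫ t in (0:ℝ)..s, dF t = F s - F 0 :=
      intervalIntegral.integral_eq_sub_of_hasDerivAt (fun x _ => hF x)
        (hdFcont.intervalIntegrable 0 s)
    have hF0 : 0 ≤ F 0 := by simp only [hFdef]; positivity
    have h6 : ∫ t in (0:ℝ)..s, dF t ≤ F s := by rw [hFTCF]; linarith
    exact le_trans hmonoint h6
  -- N = 1 integral bound
  have hN1b : N = 1 → ∀ s : ℝ, 8 * Real.sqrt Dv ≤ s →
      ∫ t in (0:ℝ)..s, ρ t ≤ 4*Dv/s * ρ s := by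
    intro hN1 s hss
    have hsq : 0 < Real.sqrt Dv := Real.sqrt_pos.2 hDv
    have hs : 0 < s := lt_of_lt_of_le (by positivity) hss
    have hs2 : 64 * Dv ≤ s^2 := by
      have h0 : (0:ℝ) ≤ 8*Real.sqrt Dv := by positivity
      have h1 := pow_le_pow_left₀ h0 hss 2
      nlinarith [Real.sq_sqrt hDv.le]
    have hρe : ∀ t : ℝ, ρ t = Real.exp (t^2/(4*Dv)) := by
      intro t; rw [hρ, hN1]; norm_num
    have hsplit : ∫ t in (0:ℝ)..s, ρ t = (∫ t in (0:ℝ)..(s/2), ρ t) + ∫ t in (s/2)..s, ρ t :=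
      (intervalIntegral.integral_add_adjacent_intervals (hρint 0 (s/2)) (hρint (s/2) s)).symm
    have htail : ∫ t in (0:ℝ)..(s/2), ρ t ≤ Dv/s * ρ s := by
      have h1 := hintbound (s/2) (by positivity)
      have h2 : s/2 * ρ (s/2) ≤ Dv/s * ρ s := by
        rw [hρe, hρe]
        set y : ℝ := 3*s^2/(16*Dv) with hydef
        have hy : (12:ℝ) ≤ y := by
          rw [hydef, le_div_iff₀ (by positivity)]
          linarith
        have hexp2 : y/2 + 1 ≤ Real.exp (y/2) := Real.add_one_le_exp _
        have hey : Real.exp y = Real.exp (y/2) * Real.exp (y/2) := by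
          rw [← Real.exp_add]; ring_nf
        have hkey : s^2/(2*Dv) ≤ Real.exp y := by
          have hsy : s^2/(2*Dv) = 8*y/3 := by
            rw [hydef]; field_simp; ring
          rw [hsy, hey]
          nlinarith [hexp2, hy]
        have hE1 := Real.exp_pos ((s/2)^2/(4*Dv))
        have harg : (s/2)^2/(4*Dv) = s^2/(16*Dv) := by ring
        have hsum : s^2/(16*Dv) + y = s^2/(4*Dv) := by
          rw [hydef]; field_simp; ring
        calc s/2 * Real.exp ((s/2)^2/(4*Dv))
            = Dv/s * (Real.exp ((s/2)^2/(4*Dv)) * (s^2/(2*Dv))) := by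
              field_simp
          _ ≤ Dv/s * (Real.exp ((s/2)^2/(4*Dv)) * Real.exp y) := by
              apply mul_le_mul_of_nonneg_left ?_ (by positivity)
              exact mul_le_mul_of_nonneg_left hkey (Real.exp_pos _).le
          _ = Dv/s * Real.exp (s^2/(4*Dv)) := by
              rw [← Real.exp_add, harg, hsum]
      linarith
    have hmid : ∫ t in (s/2)..s, ρ t ≤ 3*Dv/s * ρ s := by
      set F : ℝ → ℝ := fun t => 3*Dv*(Real.exp (t^2/(4*Dv)) / t) with hFdef
      set dF : ℝ → ℝ := fun t => 3*Dv*((Real.exp (t^2/(4*Dv)) * (2*t/(4*Dv)) * t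
        - Real.exp (t^2/(4*Dv)) * 1) / t^2) with hdFdef
      have hF : ∀ t : ℝ, t ≠ 0 → HasDerivAt F (dF t) t := by
        intro t ht
        have h2 := ((hasDerivAt_pow 2 t).div_const (4*Dv)).exp
        have h3 := (h2.div (hasDerivAt_id t) ht).const_mul (3*Dv)
        convert h3 using 1
        · rfl
        · rfl
        · rfl
        simp only [hdFdef, id_eq]
        push_cast
        ring
      have hdFcont : ContinuousOn dF (Icc (s/2) s) := by
        simp only [hdFdef]
        apply ContinuousOn.mul continuousOn_const
        apply ContinuousOn.div
        · fun_prop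
        · fun_prop
        · intro x hx
          have hx0 : 0 < x := lt_of_lt_of_le (by positivity) hx.1
          positivity
      have hρleF : ∀ x ∈ Icc (s/2) s, ρ x ≤ dF x := by
        intro x hx
        have hx0 : 0 < x := lt_of_lt_of_le (by positivity) hx.1
        have hx2 : 16*Dv ≤ x^2 := by
          have := pow_le_pow_left₀ (by positivity : (0:ℝ) ≤ s/2) hx.1 2
          nlinarith
        have hE := Real.exp_pos (x^2/(4*Dv))
        rw [hρe]
        simp only [hdFdef]
        have heq : 3*Dv*((Real.exp (x^2/(4*Dv)) * (2*x/(4*Dv)) * x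
            - Real.exp (x^2/(4*Dv)) * 1) / x^2)
            = 3/2 * Real.exp (x^2/(4*Dv)) - 3*Dv*Real.exp (x^2/(4*Dv))/x^2 := by
          field_simp
          ring
        rw [heq]
        have h7 : 3*Dv*Real.exp (x^2/(4*Dv))/x^2 ≤ Real.exp (x^2/(4*Dv))/2 := by
          rw [div_le_div_iff₀ (by positivity) (by norm_num)]
          nlinarith
        linarith
      have hs2le : s/2 ≤ s := by linarith
      have hFTCF : ∫ t in (s/2)..s, dF t = F s - F (s/2) := by
        apply intervalIntegral.integral_eq_sub_of_hasDerivAt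
        · intro x hx
          rw [uIcc_of_le hs2le] at hx
          exact hF x (ne_of_gt (lt_of_lt_of_le (by positivity) hx.1))
        · apply ContinuousOn.intervalIntegrable
          rwa [uIcc_of_le hs2le]
      have hmono2 : ∫ t in (s/2)..s, ρ t ≤ ∫ t in (s/2)..s, dF t := by
        apply intervalIntegral.integral_mono_on hs2le (hρint _ _)
          (ContinuousOn.intervalIntegrable (by rwa [uIcc_of_le hs2le]))
        exact hρleF
      have hFs2 : 0 ≤ F (s/2) := by
        simp only [hFdef]
        positivity
      have hFs : F s = 3*Dv/s * ρ s := by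
        rw [hρe]
        simp only [hFdef]
        field_simp
      calc ∫ t in (s/2)..s, ρ t ≤ F s - F (s/2) := hmono2.trans_eq hFTCF
        _ ≤ F s := by linarith
        _ = 3*Dv/s * ρ s := hFs
    have hfin : Dv/s * ρ s + 3*Dv/s * ρ s = 4*Dv/s * ρ s := by ring
    rw [hsplit]
    linarith
  -- Gronwall on [0, r0]
  have hgron0 : φ r0 ≤ Real.exp (M/Dv * (r0^2/2)) := by
    have h := gronwall_aux φ dφ (fun s => M/Dv*s) (fun s => M/Dv*(s^2/2)) 0 r0 hr0pos.le
      (hφcont.mono Icc_subset_Ici_self)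
      (fun s hs => hφder s hs.1)
      (fun s _hs => by
        have h0 := ((hasDerivAt_pow 2 s).div_const 2).const_mul (M/Dv)
        convert h0 using 1
        · rfl
        · rfl
        push_cast
        ring)
      ?_
    · rw [hφ0] at h
      have h2 := exp_shuffle h
      simpa using h2
    · intro s hs
      apply hdφle s (M/Dv*s) hs.1
      have h2 := hintbound s hs.1.le
      have heq : Dv * (ρ s * (M/Dv*s * φ s)) = M * (φ s * (s * ρ s)) := by
        field_simp
      rw [heq]
      exact mul_le_mul_of_nonneg_left
        (mul_le_mul_of_nonneg_left h2 (by linarith [hφge1 s hs.1.le])) hM.le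
  have hφr0L : φ r0 ≤ Real.exp (M/Dv*r0^2) := by
    apply hgron0.trans
    apply Real.exp_le_exp.2
    nlinarith [div_pos hM hDv, sq_nonneg r0]
  intro r hr1
  have hrpos : (0:ℝ) < r := lt_trans one_pos hr1
  constructor
  · -- N = 1
    intro hN1
    rcases le_or_gt r r0 with hcase | hcase
    · have h1 : φ r ≤ φ r0 := hmono (mem_Ici.2 (by linarith)) (mem_Ici.2 hr0pos.le) hcase
      have h2 : (1:ℝ) ≤ r ^ (4*M) := by
        calc (1:ℝ) = r ^ (0:ℝ) := (Real.rpow_zero r).symm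
          _ ≤ r ^ (4*M) := Real.rpow_le_rpow_of_exponent_le hr1.le (by positivity)
      calc φ r ≤ Real.exp (M/Dv*r0^2) := h1.trans hφr0L
        _ = Real.exp (M/Dv*r0^2) * 1 := (mul_one _).symm
        _ ≤ Real.exp (M/Dv*r0^2) * r^(4*M) :=
            mul_le_mul_of_nonneg_left h2 (Real.exp_pos _).le
    · have h := gronwall_aux φ dφ (fun s => 4*M/s) (fun s => 4*M*Real.log s) r0 r hcase.le
        (hφcont.mono (fun x hx => le_trans hr0pos.le hx.1))
        (fun s hs => hφder s (lt_trans hr0pos hs.1))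
        (fun s hs => by
          have hs0 : s ≠ 0 := ne_of_gt (lt_of_lt_of_le hr0pos hs.1)
          simpa [div_eq_mul_inv] using (Real.hasDerivAt_log hs0).const_mul (4*M))
        ?_
      · have h2 := exp_shuffle h
        have h3 : Real.exp (4*M*Real.log r - 4*M*Real.log r0) ≤ Real.exp (4*M*Real.log r) := by
          apply Real.exp_le_exp.2
          have h5 : 0 ≤ Real.log r0 := Real.log_nonneg hr01
          nlinarith
        have h4 : Real.exp (4*M*Real.log r) = r ^ (4*M) := by
          rw [Real.rpow_def_of_pos hrpos]
          congr 1
          ring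
        have hφr0pos : 0 < φ r0 := lt_of_lt_of_le one_pos (hφge1 r0 hr0pos.le)
        calc φ r ≤ φ r0 * Real.exp (4*M*Real.log r - 4*M*Real.log r0) := h2
          _ ≤ Real.exp (M/Dv*r0^2) * r^(4*M) := by
              rw [← h4]
              exact mul_le_mul hφr0L h3 (Real.exp_pos _).le (Real.exp_pos _).le
      · intro s hs
        have hs0 : 0 < s := lt_trans hr0pos hs.1
        apply hdφle s (4*M/s) hs0
        have h2 := hN1b hN1 s (le_trans hr0s hs.1.le)
        have heq : Dv * (ρ s * (4*M/s * φ s)) = M * (φ s * (4*Dv/s * ρ s)) := by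
          field_simp
        rw [heq]
        exact mul_le_mul_of_nonneg_left
          (mul_le_mul_of_nonneg_left h2 (by linarith [hφge1 s hs0.le])) hM.le
  · -- N ≥ 2
    intro hN2
    have h := gronwall_aux φ dφ (fun s => 2*M/s) (fun s => 2*M*Real.log s) 1 r hr1.le
      (hφcont.mono (fun x hx => le_trans zero_le_one hx.1))
      (fun s hs => hφder s (lt_trans one_pos hs.1))
      (fun s hs => by
        have hs0 : s ≠ 0 := ne_of_gt (lt_of_lt_of_le one_pos hs.1)
        simpa [div_eq_mul_inv] using (Real.hasDerivAt_log hs0).const_mul (2*M))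
      ?_
    · have h2 := exp_shuffle h
      simp only [Real.log_one, mul_zero, sub_zero] at h2
      have h4 : Real.exp (2*M*Real.log r) = r ^ (2*M) := by
        rw [Real.rpow_def_of_pos hrpos]
        congr 1
        ring
      have hφ1 : φ 1 ≤ Real.exp (M/Dv*r0^2) :=
        le_trans (hmono (mem_Ici.2 zero_le_one) (mem_Ici.2 hr0pos.le) hr01) hφr0L
      calc φ r ≤ φ 1 * Real.exp (2*M*Real.log r) := h2
        _ ≤ Real.exp (M/Dv*r0^2) * r^(2*M) := by
            rw [← h4]
            exact mul_le_mul hφ1 le_rfl (Real.exp_pos _).le (Real.exp_pos _).le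
    · intro s hs
      have hs0 : 0 < s := lt_trans one_pos hs.1
      apply hdφle s (2*M/s) hs0
      have h2 := hintN2 hN2 s hs0
      have hsplit : ρ s = s^(N-2) * s * Real.exp (s^2/(4*Dv)) := by
        rw [hρ]
        have hnn : N - 1 = (N-2) + 1 := by omega
        rw [hnn, pow_succ]
      have heq : Dv * (ρ s * (2*M/s * φ s))
          = M * (φ s * (2*Dv*(s^(N-2) * Real.exp (s^2/(4*Dv))))) := by
        rw [hsplit]
        field_simp
      rw [heq]
      exact mul_le_mul_of_nonneg_left
        (mul_le_mul_of_nonneg_left h2 (by linarith [hφge1 s hs0.le])) hM.le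
end

section
/- Let N ≥ 1 be an integer, D_u, D_v > 0, q ≥ 1 and κ ≥ 0, and set ρ(r) = r^{N−1} e^{r²/(4D_v)}. There exist constants ε > 0 and L > 0 (depending only on N, D_u, D_v, κ, q) such that for every 0 < λ ≤ ε and every positive C² solution φ : [0,R) → ℝ of D_v (ρ φ')' = κ ρ φ + λ ρ e^{−r²/(4D_u)} φ^q on (0,R) with φ(0) = 1, φ'(0) = 0, one has φ(r) ≤ L max(r,1)^{4(κ+1)} for all r ∈ [0,R); in particular φ cannot blow up at a finite point. Moreover, when q = 1 the same conclusion (with L and the exponent depending on λ) holds for every λ > 0. -/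
open Real Set

/-- A positive C² solution of the self-similar profile equation
`Dᵥ (ρ φ')' = κ ρ φ + λ ρ e^{-r²/(4Dᵤ)} φ^q` on `[0,R)` with `φ(0)=1`, `φ'(0)=0`,
where `ρ(r) = r^{N-1} e^{r²/(4Dᵥ)}`. -/
def IsProfileSol (N : ℕ) (Du Dv lam q κ : ℝ) (R : EReal) (φ dφ : ℝ → ℝ) : Prop :=
  (∀ r : ℝ, 0 ≤ r → (r : EReal) < R → 0 < φ r) ∧
  (∀ r : ℝ, 0 ≤ r → (r : EReal) < R → HasDerivWithinAt φ (dφ r) (Ici 0) r) ∧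
  (∀ r : ℝ, 0 < r → (r : EReal) < R →
    HasDerivAt (fun s => Dv * ((s ^ (N - 1) * Real.exp (s ^ 2 / (4 * Dv))) * dφ s))
      (κ * (r ^ (N - 1) * Real.exp (r ^ 2 / (4 * Dv))) * φ r
        + lam * (r ^ (N - 1) * Real.exp (r ^ 2 / (4 * Dv)))
            * Real.exp (-(r ^ 2) / (4 * Du)) * φ r ^ q) r) ∧
  φ 0 = 1 ∧ dφ 0 = 0


noncomputable def rho (N : ℕ) (Dv : ℝ) (s : ℝ) : ℝ := s ^ (N - 1) * Real.exp (s ^ 2 / (4 * Dv))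

lemma rho_nonneg (N : ℕ) (Dv : ℝ) {s : ℝ} (hs : 0 ≤ s) : 0 ≤ rho N Dv s :=
  mul_nonneg (pow_nonneg hs _) (Real.exp_pos _).le

lemma rho_pos (N : ℕ) (Dv : ℝ) {s : ℝ} (hs : 0 < s) : 0 < rho N Dv s :=
  mul_pos (pow_pos hs _) (Real.exp_pos _)

lemma rho_mono (N : ℕ) {Dv : ℝ} (hDv : 0 < Dv) {t s : ℝ} (ht : 0 ≤ t) (hts : t ≤ s) :
    rho N Dv t ≤ rho N Dv s := by
  unfold rho
  have h1 : t ^ (N-1) ≤ s ^ (N-1) := pow_le_pow_left₀ ht hts _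
  have h2 : Real.exp (t ^ 2 / (4 * Dv)) ≤ Real.exp (s ^ 2 / (4 * Dv)) := by
    apply Real.exp_le_exp.mpr
    apply div_le_div_of_nonneg_right ?_ (by linarith) |>.trans_eq rfl
    · nlinarith
  exact mul_le_mul h1 h2 (Real.exp_pos _).le (pow_nonneg (ht.trans hts) _)

lemma rho_continuous (N : ℕ) (Dv : ℝ) : Continuous (rho N Dv) := by
  unfold rho; fun_prop

lemma rho_integral_le_left (N : ℕ) {Dv : ℝ} (hDv : 0 < Dv) {s : ℝ} (hs : 0 ≤ s) :
    ∫ t in (0:ℝ)..s, rho N Dv t ≤ s * rho N Dv s := by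
  have h := intervalIntegral.integral_mono_on (f := rho N Dv) (g := fun _ => rho N Dv s)
    (μ := MeasureTheory.volume) hs
    ((rho_continuous N Dv).continuousOn.intervalIntegrable)
    (intervalIntegrable_const)
    (fun x hx => rho_mono N hDv hx.1 hx.2)
  simpa using h

lemma rho_integral_le_right (N : ℕ) {Dv : ℝ} (hDv : 0 < Dv) {s : ℝ} (hs : 0 < s) :
    ∫ t in (0:ℝ)..s, rho N Dv t ≤ (4 * Dv / s) * rho N Dv s := by
  -- pointwise: rho t ≤ s^{N-1} * exp (t*s/(4 Dv)) for t ∈ [0,s]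
  have hpt : ∀ t ∈ Icc (0:ℝ) s, rho N Dv t ≤ s ^ (N-1) * Real.exp (t * s / (4 * Dv)) := by
    intro t ht
    unfold rho
    have h1 : t ^ (N-1) ≤ s ^ (N-1) := pow_le_pow_left₀ ht.1 ht.2 _
    have h2 : Real.exp (t ^ 2 / (4 * Dv)) ≤ Real.exp (t * s / (4 * Dv)) := by
      apply Real.exp_le_exp.mpr
      apply div_le_div_of_nonneg_right ?_ (by linarith) |>.trans_eq rfl
      nlinarith [ht.1, ht.2]
    exact mul_le_mul h1 h2 (Real.exp_pos _).le (pow_nonneg hs.le _)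
  -- ∫ exp(t*s/(4Dv)) dt = (4Dv/s)(exp(s^2/(4Dv)) - 1)
  have hds : ∀ t ∈ uIcc (0:ℝ) s,
      HasDerivAt (fun t => (4 * Dv / s) * Real.exp (t * s / (4 * Dv)))
        (Real.exp (t * s / (4 * Dv))) t := by
    intro t _
    have h : HasDerivAt (fun t : ℝ => t * s / (4 * Dv)) (s / (4 * Dv)) t := by
      simpa using ((hasDerivAt_id t).mul_const s).div_const (4 * Dv)
    have := (h.exp).const_mul (4 * Dv / s)
    have hk : 4 * Dv / s * (s / (4 * Dv)) = 1 := by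
      rw [div_mul_div_comm, mul_comm (4 * Dv) s, div_self (by positivity)]
    exact this.congr_deriv (by linear_combination (Real.exp (t * s / (4 * Dv))) * hk)
  have hInt : IntervalIntegrable (fun t => Real.exp (t * s / (4 * Dv)))
      MeasureTheory.volume 0 s := by
    apply Continuous.intervalIntegrable; fun_prop
  have hcalc := intervalIntegral.integral_eq_sub_of_hasDerivAt hds hInt
  have hle : ∫ t in (0:ℝ)..s, rho N Dv t
      ≤ ∫ t in (0:ℝ)..s, s ^ (N-1) * Real.exp (t * s / (4 * Dv)) := by
    apply intervalIntegral.integral_mono_on hs.le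
      ((rho_continuous N Dv).continuousOn.intervalIntegrable)
      (by apply Continuous.intervalIntegrable; fun_prop)
      hpt
  have hsplit : ∫ t in (0:ℝ)..s, s ^ (N-1) * Real.exp (t * s / (4 * Dv))
      = s ^ (N-1) * ∫ t in (0:ℝ)..s, Real.exp (t * s / (4 * Dv)) := by
    simp [intervalIntegral.integral_const_mul]
  rw [hsplit, hcalc] at hle
  refine hle.trans ?_
  unfold rho
  have h1 : (0:ℝ) < 4 * Dv / s := by positivity
  have h2 : s * s / (4 * Dv) = s ^ 2 / (4 * Dv) := by ring
  rw [h2]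
  have : Real.exp (s ^ 2 / (4 * Dv)) - Real.exp (0 * s / (4 * Dv)) ≤ Real.exp (s ^ 2 / (4*Dv)) := by
    have := Real.exp_pos ((0:ℝ) * s / (4 * Dv))
    linarith
  nlinarith [pow_nonneg hs.le (N-1), Real.exp_pos (s^2/(4*Dv)), h1, this,
    mul_le_mul_of_nonneg_left this (mul_nonneg (le_of_lt h1) (pow_nonneg hs.le (N-1)))]

/-- If `φ` has right-derivative `0` at `0` but `dφ ≥ k` on `(0,s₀)`, then `k ≤ 0`. -/
lemma slope_lower {φ dφ : ℝ → ℝ} {s₀ k : ℝ} (hs₀ : 0 < s₀)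
    (hcont : ContinuousOn φ (Icc 0 s₀))
    (hder : ∀ a ∈ Ioo (0:ℝ) s₀, HasDerivAt φ (dφ a) a)
    (hk : ∀ a ∈ Ioo (0:ℝ) s₀, k ≤ dφ a)
    (h0 : HasDerivWithinAt φ 0 (Ici 0) 0) : k ≤ 0 := by
  have hmono : MonotoneOn (fun x => φ x - k * x) (Icc 0 s₀) := by
    apply monotoneOn_of_deriv_nonneg (convex_Icc 0 s₀)
    · exact hcont.sub (by fun_prop)
    · intro x hx
      rw [interior_Icc] at hx
      exact ((hder x hx).sub ((hasDerivAt_id x).const_mul k)).differentiableAt.differentiableWithinAt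
    · intro x hx
      rw [interior_Icc] at hx
      have hd : HasDerivAt (fun x => φ x - k * x) (dφ x - k * 1) x :=
        (hder x hx).sub ((hasDerivAt_id x).const_mul k)
      rw [hd.deriv]
      have := hk x hx; linarith
  have hslope : ∀ h ∈ Ioc (0:ℝ) s₀, k ≤ slope φ 0 h := by
    intro h hh
    have := hmono (left_mem_Icc.mpr hs₀.le) ⟨hh.1.le, hh.2⟩ hh.1.le
    simp only [slope_def_field]
    rw [le_div_iff₀ (by linarith [hh.1] : (0:ℝ) < h - 0)]
    simp only [mul_zero, sub_zero] at this ⊢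
    nlinarith [hh.1]
  have htend := hasDerivWithinAt_iff_tendsto_slope.mp h0
  rw [Set.Ici_sdiff_left] at htend
  refine ge_of_tendsto htend ?_
  filter_upwards [Ioc_mem_nhdsGT_of_mem (left_mem_Ico.mpr hs₀)] with h hh
  exact hslope h hh

lemma slope_upper {φ dφ : ℝ → ℝ} {s₀ k : ℝ} (hs₀ : 0 < s₀)
    (hcont : ContinuousOn φ (Icc 0 s₀))
    (hder : ∀ a ∈ Ioo (0:ℝ) s₀, HasDerivAt φ (dφ a) a)
    (hk : ∀ a ∈ Ioo (0:ℝ) s₀, dφ a ≤ k)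
    (h0 : HasDerivWithinAt φ 0 (Ici 0) 0) : 0 ≤ k := by
  have := slope_lower (φ := fun x => -φ x) (dφ := fun x => -(dφ x)) (k := -k) hs₀
    hcont.neg (fun a ha => (hder a ha).neg) (fun a ha => neg_le_neg (hk a ha))
    (by simpa using h0.fun_neg)
  linarith

lemma gronwall1 {φ dφ : ℝ → ℝ} {b c : ℝ} (hc : 0 ≤ c)
    (hcont : ContinuousOn φ (Icc 0 b))
    (hder : ∀ s ∈ Ioo (0:ℝ) b, HasDerivAt φ (dφ s) s)
    (hineq : ∀ s ∈ Ioo (0:ℝ) b, dφ s ≤ c * s * φ s)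
    (hφ0 : φ 0 = 1) :
    ∀ r ∈ Icc (0:ℝ) b, φ r ≤ Real.exp (c * r ^ 2 / 2) := by
  have hE : ∀ x : ℝ, HasDerivAt (fun x : ℝ => Real.exp (-(c * x ^ 2 / 2)))
      (Real.exp (-(c * x ^ 2 / 2)) * (-(c * (2 * x) / 2))) x := by
    intro x
    have h1 : HasDerivAt (fun x : ℝ => x ^ 2) (2 * x) x := by simpa using hasDerivAt_pow 2 x
    have h2 : HasDerivAt (fun x : ℝ => -(c * x ^ 2 / 2)) (-(c * (2 * x) / 2)) x :=
      (((h1.const_mul c).div_const 2).neg)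
    exact h2.exp
  have hanti : AntitoneOn (fun x => φ x * Real.exp (-(c * x ^ 2 / 2))) (Icc 0 b) := by
    apply antitoneOn_of_deriv_nonpos (convex_Icc 0 b)
    · exact hcont.mul (by fun_prop)
    · intro x hx
      rw [interior_Icc] at hx
      exact ((hder x hx).mul (hE x)).differentiableAt.differentiableWithinAt
    · intro x hx
      rw [interior_Icc] at hx
      have hd := (hder x hx).fun_mul (hE x)
      rw [hd.deriv]
      have h1 := hineq x hx
      have h2 := Real.exp_pos (-(c * x ^ 2 / 2))
      nlinarith
  intro r hr
  have := hanti (left_mem_Icc.mpr (hr.1.trans hr.2)) hr hr.1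
  simp only [hφ0, one_mul] at this
  have h3 := Real.exp_pos (-(c * r ^ 2 / 2))
  have h4 : Real.exp (-(c * r ^ 2 / 2)) * Real.exp (c * r ^ 2 / 2) = 1 := by
    rw [← Real.exp_add]; simp
  simp only [mul_zero, zero_pow, ne_eq, OfNat.ofNat_ne_zero, not_false_eq_true,
    zero_div, neg_zero, Real.exp_zero] at this
  nlinarith [Real.exp_pos (c * r ^ 2 / 2)]

lemma gronwall2 {φ dφ : ℝ → ℝ} {b c : ℝ} (hc : 0 ≤ c)
    (hcont : ContinuousOn φ (Icc 1 b))
    (hder : ∀ s ∈ Ioo (1:ℝ) b, HasDerivAt φ (dφ s) s)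
    (hineq : ∀ s ∈ Ioo (1:ℝ) b, dφ s ≤ (c / s) * φ s) :
    ∀ r ∈ Icc (1:ℝ) b, φ r ≤ φ 1 * r ^ c := by
  have hanti : AntitoneOn (fun x => φ x * x ^ (-c)) (Icc 1 b) := by
    apply antitoneOn_of_deriv_nonpos (convex_Icc 1 b)
    · apply hcont.mul
      intro x hx
      exact (Real.continuousAt_rpow_const x (-c) (Or.inl (by linarith [hx.1]))).continuousWithinAt
    · intro x hx
      rw [interior_Icc] at hx
      have hR : HasDerivAt (fun x : ℝ => x ^ (-c)) (-c * x ^ (-c - 1)) x :=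
        Real.hasDerivAt_rpow_const (Or.inl (by linarith [hx.1]))
      exact ((hder x hx).mul hR).differentiableAt.differentiableWithinAt
    · intro x hx
      rw [interior_Icc] at hx
      have hx1 : (1:ℝ) < x := hx.1
      have hx0 : (0:ℝ) < x := by linarith
      have hR : HasDerivAt (fun x : ℝ => x ^ (-c)) (-c * x ^ (-c - 1)) x :=
        Real.hasDerivAt_rpow_const (Or.inl (by linarith))
      have hd := (hder x hx).fun_mul hR
      rw [hd.deriv]
      have h1 := hineq x hx
      have h2 : x ^ (-c - 1) * x = x ^ (-c) := by
        nth_rewrite 2 [← Real.rpow_one x]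
        rw [← Real.rpow_add hx0]; ring_nf
      have h5 : (0:ℝ) < x ^ (-c - 1) := Real.rpow_pos_of_pos hx0 _
      have h1' : dφ x * x ≤ c * φ x := by
        rw [div_mul_eq_mul_div, le_div_iff₀ hx0] at h1; linarith
      have h6 : dφ x * x ^ (-c) = dφ x * x * x ^ (-c - 1) := by rw [← h2]; ring
      rw [h6]
      nlinarith [mul_le_mul_of_nonneg_right h1' h5.le]
  intro r hr
  have := hanti (left_mem_Icc.mpr (hr.1.trans hr.2)) hr hr.1
  simp only [Real.one_rpow, mul_one] at this
  have hr0 : (0:ℝ) < r := by linarith [hr.1]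
  have h3 : (0:ℝ) < r ^ c := Real.rpow_pos_of_pos hr0 _
  have h4 : r ^ (-c) * r ^ c = 1 := by
    rw [← Real.rpow_add hr0]; simp
  have h5 : φ r * r ^ (-c) * r ^ c = φ r := by rw [mul_assoc, h4, mul_one]
  nlinarith [mul_le_mul_of_nonneg_right this h3.le]

lemma gauss_poly_bound {Du β qq t : ℝ} (hDu : 0 < Du) (hβ : 0 ≤ β) (hq : 0 ≤ qq) (ht : 0 ≤ t) :
    Real.exp (-(t ^ 2) / (4 * Du)) * ((max t 1) ^ β) ^ qq
      ≤ Real.exp (β * qq + Du * (β * qq) ^ 2) := by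
  set a := β * qq with ha
  have ha0 : 0 ≤ a := mul_nonneg hβ hq
  have hm0 : (0:ℝ) < max t 1 := lt_of_lt_of_le one_pos (le_max_right _ _)
  have h1 : ((max t 1) ^ β) ^ qq = (max t 1) ^ a := (Real.rpow_mul hm0.le β qq).symm
  rw [h1]
  have h2 : max t 1 ≤ Real.exp (t + 1) := by
    have hh : max t 1 ≤ t + 1 := max_le (by linarith) (by linarith)
    exact hh.trans (by linarith [Real.add_one_le_exp (t + 1)])
  have h3 : (max t 1) ^ a ≤ (Real.exp (t + 1)) ^ a := Real.rpow_le_rpow hm0.le h2 ha0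
  have h4 : (Real.exp (t + 1)) ^ a = Real.exp ((t + 1) * a) := by
    rw [← Real.exp_one_rpow (t + 1), ← Real.rpow_mul (Real.exp_pos 1).le, Real.exp_one_rpow]
  calc Real.exp (-(t ^ 2) / (4 * Du)) * (max t 1) ^ a
      ≤ Real.exp (-(t ^ 2) / (4 * Du)) * Real.exp ((t + 1) * a) := by
        rw [← h4]; exact mul_le_mul_of_nonneg_left h3 (Real.exp_pos _).le
    _ = Real.exp (-(t ^ 2) / (4 * Du) + (t + 1) * a) := by rw [← Real.exp_add]
    _ ≤ Real.exp (a + Du * a ^ 2) := by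
        apply Real.exp_le_exp.mpr
        have h5 : (t * a - Du * a ^ 2) * (4 * Du) ≤ t ^ 2 := by
          nlinarith [sq_nonneg (t - 2 * Du * a)]
        have h6 : t * a - Du * a ^ 2 ≤ t ^ 2 / (4 * Du) := by
          rw [← le_div_iff₀ (by positivity)] at h5; exact h5
        have h7 : -(t ^ 2) / (4 * Du) = -(t ^ 2 / (4 * Du)) := by ring
        rw [h7]; linarith

lemma master {N : ℕ} {Dv b c : ℝ} {φ dφ : ℝ → ℝ}
    (hb : 0 ≤ b) (hc : 0 ≤ c) (hDv : 0 < Dv)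
    (hcont : ContinuousOn φ (Icc 0 b))
    (hder : ∀ s ∈ Ioo (0:ℝ) b, HasDerivAt φ (dφ s) s)
    (hφ0 : φ 0 = 1)
    (hpos : ∀ s ∈ Icc (0:ℝ) b, 0 < φ s)
    (hkey : ∀ s ∈ Ioo (0:ℝ) b,
      Dv * (rho N Dv s * dφ s) ≤ c * φ s * ∫ t in (0:ℝ)..s, rho N Dv t) :
    ∀ r ∈ Icc (0:ℝ) b, φ r ≤ Real.exp (c / (2 * Dv)) * (max r 1) ^ (4 * c) := by
  have hineq1 : ∀ s ∈ Ioo (0:ℝ) b, dφ s ≤ (c / Dv) * s * φ s := by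
    intro s hs
    have hρ := rho_pos N Dv hs.1
    have hφs := hpos s ⟨hs.1.le, hs.2.le⟩
    have h1 := (hkey s hs).trans (mul_le_mul_of_nonneg_left
      (rho_integral_le_left N hDv hs.1.le) (by positivity : (0:ℝ) ≤ c * φ s))
    have h2 : dφ s * (Dv * rho N Dv s) ≤ ((c / Dv) * s * φ s) * (Dv * rho N Dv s) := by
      have he : ((c / Dv) * s * φ s) * (Dv * rho N Dv s) = c * φ s * (s * rho N Dv s) := by
        field_simp
      rw [he]; nlinarith
    exact le_of_mul_le_mul_right h2 (by positivity)
  have hineq2 : ∀ s ∈ Ioo (0:ℝ) b, dφ s ≤ ((4 * c) / s) * φ s := by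
    intro s hs
    have hρ := rho_pos N Dv hs.1
    have hφs := hpos s ⟨hs.1.le, hs.2.le⟩
    have h1 := (hkey s hs).trans (mul_le_mul_of_nonneg_left
      (rho_integral_le_right N hDv hs.1) (by positivity : (0:ℝ) ≤ c * φ s))
    have h2 : dφ s * (Dv * rho N Dv s) ≤ (((4 * c) / s) * φ s) * (Dv * rho N Dv s) := by
      have he : (((4 * c) / s) * φ s) * (Dv * rho N Dv s)
          = c * φ s * ((4 * Dv / s) * rho N Dv s) := by
        field_simp
      rw [he]; nlinarith
    exact le_of_mul_le_mul_right h2 (by positivity)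
  intro r hr
  rcases le_or_gt r 1 with hr1 | hr1
  · have hg1 := gronwall1 (c := c / Dv) (by positivity) hcont hder hineq1 hφ0 r hr
    have hle : (c / Dv) * r ^ 2 / 2 ≤ c / (2 * Dv) := by
      rw [div_le_div_iff₀ (by norm_num) (by positivity)]
      have h2 : r ^ 2 ≤ 1 := by nlinarith [hr.1]
      have key : c / Dv * r ^ 2 * (2 * Dv) = 2 * c * r ^ 2 := by field_simp
      rw [key]; nlinarith
    have hmax : max r 1 = 1 := max_eq_right hr1
    rw [hmax, Real.one_rpow, mul_one]
    exact hg1.trans (Real.exp_le_exp.mpr hle)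
  · have hb1 : 1 ≤ b := hr1.le.trans hr.2
    have hφ1 : φ 1 ≤ Real.exp (c / (2 * Dv)) := by
      have hg1 := gronwall1 (c := c / Dv) (by positivity)
        (hcont.mono (Icc_subset_Icc le_rfl hb1))
        (fun s hs => hder s ⟨hs.1, lt_of_lt_of_le hs.2 hb1⟩)
        (fun s hs => hineq1 s ⟨hs.1, lt_of_lt_of_le hs.2 hb1⟩) hφ0 1 ⟨zero_le_one, le_rfl⟩
      refine hg1.trans (Real.exp_le_exp.mpr ?_)
      rw [div_le_div_iff₀ (by norm_num) (by positivity)]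
      have key : c / Dv * 1 ^ 2 * (2 * Dv) = 2 * c := by field_simp
      rw [key]; ring_nf; linarith
    have hg2 := gronwall2 (c := 4 * c) (by positivity)
      (hcont.mono (Icc_subset_Icc zero_le_one le_rfl))
      (fun s hs => hder s ⟨lt_trans zero_lt_one hs.1, hs.2⟩)
      (fun s hs => hineq2 s ⟨lt_trans zero_lt_one hs.1, hs.2⟩) r ⟨hr1.le, hr.2⟩
    have hmax : max r 1 = r := max_eq_left hr1.le
    rw [hmax]
    have hrc : (0:ℝ) < r ^ (4 * c) := Real.rpow_pos_of_pos (by linarith) _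
    exact hg2.trans (mul_le_mul_of_nonneg_right hφ1 hrc.le)
noncomputable def RHS (N : ℕ) (Du Dv lam q κ : ℝ) (φ : ℝ → ℝ) (t : ℝ) : ℝ :=
  κ * rho N Dv t * φ t + lam * rho N Dv t * Real.exp (-(t ^ 2) / (4 * Du)) * φ t ^ q

lemma coe_lt_R {r s : ℝ} {R : EReal} (hsr : s ≤ r) (h : (r:EReal) < R) : (s:EReal) < R :=
  lt_of_le_of_lt (EReal.coe_le_coe_iff.mpr hsr) h

section Sol
variable {N : ℕ} {Du Dv lam q κ : ℝ} {R : EReal} {φ dφ : ℝ → ℝ}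
  (h : IsProfileSol N Du Dv lam q κ R φ dφ)

include h

lemma sol_ode : ∀ r : ℝ, 0 < r → (r:EReal) < R →
    HasDerivAt (fun s => Dv * (rho N Dv s * dφ s)) (RHS N Du Dv lam q κ φ r) r :=
  h.2.2.1

lemma sol_cont {b : ℝ} (hbR : (b:EReal) < R) : ContinuousOn φ (Icc 0 b) := by
  intro t ht
  exact ((h.2.1 t ht.1 (coe_lt_R ht.2 hbR)).continuousWithinAt).mono Icc_subset_Ici_self

lemma sol_deriv {t : ℝ} (ht : 0 < t) (htR : (t:EReal) < R) : HasDerivAt φ (dφ t) t :=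
  (h.2.1 t ht.le htR).hasDerivAt (Ici_mem_nhds ht)

lemma sol_d0 {r : ℝ} (hr : 0 ≤ r) (hrR : (r:EReal) < R) :
    HasDerivWithinAt φ 0 (Ici 0) 0 := by
  have := h.2.1 0 le_rfl (coe_lt_R hr hrR)
  rwa [h.2.2.2.2] at this

lemma RHS_nonneg (hκ : 0 ≤ κ) (hlam : 0 < lam) {t : ℝ} (ht : 0 ≤ t) (htR : (t:EReal) < R) :
    0 ≤ RHS N Du Dv lam q κ φ t := by
  have hφ := h.1 t ht htR
  have h1 : 0 ≤ rho N Dv t := rho_nonneg N Dv ht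
  have h2 : 0 ≤ φ t ^ q := Real.rpow_nonneg hφ.le q
  have h3 := (Real.exp_pos (-(t ^ 2) / (4 * Du))).le
  unfold RHS
  have t1 : 0 ≤ κ * rho N Dv t * φ t := mul_nonneg (mul_nonneg hκ h1) hφ.le
  have t2 : 0 ≤ lam * rho N Dv t * Real.exp (-(t ^ 2) / (4 * Du)) * φ t ^ q :=
    mul_nonneg (mul_nonneg (mul_nonneg hlam.le h1) h3) h2
  linarith

lemma RHS_cont (hκ : 0 ≤ κ) {b : ℝ} (hbR : (b:EReal) < R) :
    ContinuousOn (RHS N Du Dv lam q κ φ) (Icc 0 b) := by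
  have hφc := sol_cont h hbR
  have hφne : ∀ t ∈ Icc (0:ℝ) b, φ t ≠ 0 ∨ 0 ≤ q :=
    fun t ht => Or.inl (ne_of_gt (h.1 t ht.1 (coe_lt_R ht.2 hbR)))
  unfold RHS
  apply ContinuousOn.add
  · exact ((continuous_const.mul (rho_continuous N Dv)).continuousOn).mul hφc
  · exact (((continuous_const.mul (rho_continuous N Dv)).mul
      (by fun_prop : Continuous fun t : ℝ => Real.exp (-(t ^ 2) / (4 * Du)))).continuousOn).mul
      (hφc.rpow_const hφne)

lemma sol_psi_mono (hDv : 0 < Dv) (hκ : 0 ≤ κ) (hlam : 0 < lam)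
    {a b : ℝ} (ha : 0 < a) (hab : a ≤ b) (hbR : (b:EReal) < R) :
    Dv * (rho N Dv a * dφ a) ≤ Dv * (rho N Dv b * dφ b) := by
  have hmono : MonotoneOn (fun s => Dv * (rho N Dv s * dφ s)) (Icc a b) := by
    apply monotoneOn_of_deriv_nonneg (convex_Icc a b)
    · intro x hx
      exact (sol_ode h x (lt_of_lt_of_le ha hx.1) (coe_lt_R hx.2 hbR)).continuousAt.continuousWithinAt
    · intro x hx
      rw [interior_Icc] at hx
      exact (sol_ode h x (lt_of_lt_of_le ha hx.1.le) (coe_lt_R hx.2.le hbR)).differentiableAt.differentiableWithinAt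
    · intro x hx
      rw [interior_Icc] at hx
      have hx0 : 0 < x := lt_of_lt_of_le ha hx.1.le
      rw [(sol_ode h x hx0 (coe_lt_R hx.2.le hbR)).deriv]
      exact RHS_nonneg h hκ hlam hx0.le (coe_lt_R hx.2.le hbR)
  exact hmono (left_mem_Icc.mpr hab) (right_mem_Icc.mpr hab) hab

lemma sol_psi_nonneg (hDv : 0 < Dv) (hκ : 0 ≤ κ) (hlam : 0 < lam)
    {r : ℝ} (hr : 0 < r) (hrR : (r:EReal) < R) : 0 ≤ rho N Dv r * dφ r := by
  by_contra hc
  push_neg at hc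
  set c := rho N Dv r * dφ r with hcdef
  have hk : ∀ a ∈ Ioo (0:ℝ) r, dφ a ≤ c / rho N Dv r := by
    intro a ha
    have h1 := sol_psi_mono h hDv hκ hlam ha.1 ha.2.le hrR
    have h2 : rho N Dv a * dφ a ≤ c := by
      have := mul_le_mul_of_nonneg_left h1 (le_of_lt (inv_pos.mpr hDv))
      rw [inv_mul_cancel_left₀ (ne_of_gt hDv), inv_mul_cancel_left₀ (ne_of_gt hDv)] at this
      exact this
    have hra : 0 < rho N Dv a := rho_pos N Dv ha.1
    have hrr : 0 < rho N Dv r := rho_pos N Dv hr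
    have h3 : dφ a ≤ c / rho N Dv a := by
      rw [le_div_iff₀ hra]; linarith [h2]
    refine h3.trans ?_
    rw [div_le_div_iff₀ hra hrr]
    have := rho_mono N hDv ha.1.le ha.2.le
    nlinarith
  have hup := slope_upper hr (sol_cont h hrR) (fun a ha => sol_deriv h ha.1 (coe_lt_R ha.2.le hrR))
    hk (sol_d0 h hr.le hrR)
  have hrr : 0 < rho N Dv r := rho_pos N Dv hr
  have : c / rho N Dv r < 0 := div_neg_of_neg_of_pos hc hrr
  linarith

lemma sol_mono (hDv : 0 < Dv) (hκ : 0 ≤ κ) (hlam : 0 < lam)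
    {t s : ℝ} (ht : 0 ≤ t) (hts : t ≤ s) (hsR : (s:EReal) < R) : φ t ≤ φ s := by
  have hmono : MonotoneOn φ (Icc 0 s) := by
    apply monotoneOn_of_deriv_nonneg (convex_Icc 0 s)
    · exact sol_cont h hsR
    · intro x hx
      rw [interior_Icc] at hx
      exact (sol_deriv h hx.1 (coe_lt_R hx.2.le hsR)).differentiableAt.differentiableWithinAt
    · intro x hx
      rw [interior_Icc] at hx
      rw [(sol_deriv h hx.1 (coe_lt_R hx.2.le hsR)).deriv]
      have h1 := sol_psi_nonneg h hDv hκ hlam hx.1 (coe_lt_R hx.2.le hsR)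
      have h2 := rho_pos N Dv hx.1
      by_contra hcon
      push_neg at hcon
      nlinarith
  exact hmono ⟨ht, hts⟩ ⟨ht.trans hts, le_rfl⟩ hts

lemma sol_one_le (hDv : 0 < Dv) (hκ : 0 ≤ κ) (hlam : 0 < lam)
    {s : ℝ} (hs : 0 ≤ s) (hsR : (s:EReal) < R) : 1 ≤ φ s := by
  have := sol_mono h hDv hκ hlam le_rfl hs hsR
  rwa [h.2.2.2.1] at this

lemma sol_key (hDv : 0 < Dv) (hκ : 0 ≤ κ) (hlam : 0 < lam)
    {s : ℝ} (hs : 0 < s) (hsR : (s:EReal) < R) :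
    Dv * (rho N Dv s * dφ s) ≤ ∫ t in (0:ℝ)..s, RHS N Du Dv lam q κ φ t := by
  have hRc : ContinuousOn (RHS N Du Dv lam q κ φ) (Icc 0 s) := RHS_cont h hκ hsR
  refine le_of_forall_pos_le_add ?_
  intro η hη
  have hex : ∃ a ∈ Ioo (0:ℝ) s, Dv * (rho N Dv a * dφ a) < η := by
    by_contra hcon
    push_neg at hcon
    have hrs : 0 < rho N Dv s := rho_pos N Dv hs
    have hk : ∀ a ∈ Ioo (0:ℝ) s, η / (Dv * rho N Dv s) ≤ dφ a := by
      intro a ha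
      have h1 := hcon a ha
      have hra : 0 < rho N Dv a := rho_pos N Dv ha.1
      have h2 : η / (Dv * rho N Dv a) ≤ dφ a := by
        rw [div_le_iff₀ (by positivity)]; nlinarith
      refine le_trans ?_ h2
      apply div_le_div_of_nonneg_left hη.le (by positivity)
      have := rho_mono N hDv ha.1.le ha.2.le
      nlinarith
    have hlow := slope_lower hs (sol_cont h hsR)
      (fun a ha => sol_deriv h ha.1 (coe_lt_R ha.2.le hsR)) hk (sol_d0 h hs.le hsR)
    have : 0 < η / (Dv * rho N Dv s) := by positivity
    linarith
  obtain ⟨a, ha, hψa⟩ := hex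
  have hsub1 : uIcc (0:ℝ) a ⊆ Icc 0 s := by
    rw [uIcc_of_le ha.1.le]; exact Icc_subset_Icc le_rfl ha.2.le
  have hsub2 : uIcc a s ⊆ Icc 0 s := by
    rw [uIcc_of_le ha.2.le]; exact Icc_subset_Icc ha.1.le le_rfl
  have hInt1 : IntervalIntegrable (RHS N Du Dv lam q κ φ) MeasureTheory.volume 0 a :=
    (hRc.mono hsub1).intervalIntegrable
  have hInt2 : IntervalIntegrable (RHS N Du Dv lam q κ φ) MeasureTheory.volume a s :=
    (hRc.mono hsub2).intervalIntegrable
  have hFTC : ∫ t in a..s, RHS N Du Dv lam q κ φ t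
      = Dv * (rho N Dv s * dφ s) - Dv * (rho N Dv a * dφ a) := by
    apply intervalIntegral.integral_eq_sub_of_hasDerivAt ?_ hInt2
    intro x hx
    rw [uIcc_of_le ha.2.le] at hx
    exact sol_ode h x (lt_of_lt_of_le ha.1 hx.1) (coe_lt_R hx.2 hsR)
  have hnn : 0 ≤ ∫ t in (0:ℝ)..a, RHS N Du Dv lam q κ φ t := by
    apply intervalIntegral.integral_nonneg ha.1.le
    intro u hu
    exact RHS_nonneg h hκ hlam hu.1 (coe_lt_R (hu.2.trans ha.2.le) hsR)
  have hadd := intervalIntegral.integral_add_adjacent_intervals hInt1 hInt2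
  linarith

end Sol


/-- For `κ ≥ 0` and `q ≥ 1` there are `ε, L > 0` (depending only on the
parameters) such that for every `0 < λ ≤ ε`, every positive C² solution of the profile
equation on `[0,R)` satisfies `φ(r) ≤ L max(r,1)^{4(κ+1)}`; when `q = 1` the same kind
of algebraic bound (with `L` and the exponent depending on `λ`) holds for every `λ > 0`. -/
theorem stmt4
    (N : ℕ) (hN : 1 ≤ N) (Du Dv q κ : ℝ)
    (hDu : 0 < Du) (hDv : 0 < Dv) (hq : 1 ≤ q) (hκ : 0 ≤ κ) :
    (∃ ε > 0, ∃ L > 0, ∀ lam : ℝ, 0 < lam → lam ≤ ε →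
      ∀ (R : EReal) (φ dφ : ℝ → ℝ), IsProfileSol N Du Dv lam q κ R φ dφ →
        ∀ r : ℝ, 0 ≤ r → (r : EReal) < R → φ r ≤ L * (max r 1) ^ (4 * (κ + 1))) ∧
    (q = 1 → ∀ lam : ℝ, 0 < lam → ∃ L > 0, ∃ e : ℝ,
      ∀ (R : EReal) (φ dφ : ℝ → ℝ), IsProfileSol N Du Dv lam q κ R φ dφ →
        ∀ r : ℝ, 0 ≤ r → (r : EReal) < R → φ r ≤ L * (max r 1) ^ e) := by
  constructor
  · -- small λ, general q ≥ 1 : bootstrap argument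
    set β : ℝ := 4 * (κ + 1) with hβdef
    have hβ0 : 0 ≤ β := by rw [hβdef]; linarith
    set C₃ : ℝ := Real.exp ((κ + 1) / (2 * Dv)) with hC3def
    have hC3pos : 0 < C₃ := Real.exp_pos _
    have hC3one : 1 ≤ C₃ := Real.one_le_exp (by positivity)
    set Mq : ℝ := Real.exp (β * q + Du * (β * q) ^ 2) with hMqdef
    have hMqpos : 0 < Mq := Real.exp_pos _
    have h2C3q : 0 < (2 * C₃) ^ q := Real.rpow_pos_of_pos (by linarith) q
    refine ⟨((2 * C₃) ^ q * Mq)⁻¹, by positivity, 2 * C₃, by positivity, ?_⟩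
    intro lam hlam hlamle R φ dφ hsol r hr0 hrR
    have hsmall : lam * ((2 * C₃) ^ q * Mq) ≤ 1 := by
      have hp : (0:ℝ) < (2 * C₃) ^ q * Mq := by positivity
      have := mul_le_mul_of_nonneg_right hlamle hp.le
      rwa [inv_mul_cancel₀ (ne_of_gt hp)] at this
    by_contra hcon
    push_neg at hcon
    -- the set where the bound 2·C₃·(max x 1)^β fails
    set G : ℝ → ℝ := fun x => 2 * C₃ * (max x 1) ^ β with hGdef
    have hGcont : Continuous G := by
      apply continuous_const.mul
      exact (continuous_id.max continuous_const).rpow_const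
        (fun x => Or.inl (ne_of_gt (lt_of_lt_of_le one_pos (le_max_right x 1))))
    have hGpos : ∀ x : ℝ, 0 < G x := by
      intro x
      have : (0:ℝ) < (max x 1) ^ β :=
        Real.rpow_pos_of_pos (lt_of_lt_of_le one_pos (le_max_right x 1)) β
      rw [hGdef]; positivity
    set A : Set ℝ := Icc 0 r ∩ (fun x => φ x - G x) ⁻¹' (Ici 0) with hAdef
    have hφcont : ContinuousOn φ (Icc 0 r) := sol_cont hsol hrR
    have hA_closed : IsClosed A :=
      ContinuousOn.preimage_isClosed_of_isClosed
        (hφcont.sub hGcont.continuousOn) isClosed_Icc isClosed_Ici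
    have hA_ne : A.Nonempty := by
      refine ⟨r, ⟨hr0, le_rfl⟩, ?_⟩
      simp only [mem_preimage, mem_Ici, sub_nonneg]
      exact hcon.le
    have hbdd : BddBelow A := ⟨0, fun x hx => hx.1.1⟩
    set T := sInf A with hTdef
    have hTA : T ∈ A := hA_closed.csInf_mem hA_ne hbdd
    have hTIcc : T ∈ Icc 0 r := hTA.1
    have hT2 : G T ≤ φ T := by
      have := hTA.2
      simp only [mem_preimage, mem_Ici, sub_nonneg] at this
      exact this
    have hTR : (T : EReal) < R := coe_lt_R hTIcc.2 hrR
    have hTpos : 0 < T := by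
      rcases eq_or_lt_of_le hTIcc.1 with h | h
      · exfalso
        have h1 : G 0 ≤ φ 0 := by rw [h]; exact hT2
        have hG0 : G 0 = 2 * C₃ := by
          simp only [hGdef]
          rw [max_eq_right zero_le_one, Real.one_rpow, mul_one]
        rw [hG0, hsol.2.2.2.1] at h1
        linarith
      · exact h
    have hnotA : ∀ x : ℝ, 0 ≤ x → x < T → φ x ≤ G x := by
      intro x hx hxT
      by_contra hc
      push_neg at hc
      have hxA : x ∈ A := by
        refine ⟨⟨hx, hxT.le.trans hTIcc.2⟩, ?_⟩
        simp only [mem_preimage, mem_Ici, sub_nonneg]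
        exact hc.le
      exact absurd (csInf_le hbdd hxA) (not_le.mpr hxT)
    have hkey : ∀ s ∈ Ioo (0:ℝ) T,
        Dv * (rho N Dv s * dφ s) ≤ (κ + 1) * φ s * ∫ t in (0:ℝ)..s, rho N Dv t := by
      intro s hs
      have hsR : (s : EReal) < R := coe_lt_R (hs.2.le.trans hTIcc.2) hrR
      refine (sol_key hsol hDv hκ hlam hs.1 hsR).trans ?_
      have hle : ∀ t ∈ Icc (0:ℝ) s, RHS N Du Dv lam q κ φ t ≤ ((κ + 1) * φ s) * rho N Dv t := by
        intro t ht
        have htR : (t : EReal) < R := coe_lt_R (ht.2.trans (hs.2.le.trans hTIcc.2)) hrR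
        have hφt := hsol.1 t ht.1 htR
        have hmon := sol_mono hsol hDv hκ hlam ht.1 ht.2 hsR
        have hφs1 := sol_one_le hsol hDv hκ hlam (ht.1.trans ht.2) hsR
        have hρ := rho_nonneg N Dv ht.1
        have hboot := hnotA t ht.1 (lt_of_le_of_lt ht.2 hs.2)
        have hφtq : φ t ^ q ≤ (2 * C₃ * (max t 1) ^ β) ^ q :=
          Real.rpow_le_rpow hφt.le hboot (by linarith)
        have hsplit : (2 * C₃ * (max t 1) ^ β) ^ q = (2 * C₃) ^ q * ((max t 1) ^ β) ^ q :=
          Real.mul_rpow (by positivity) (Real.rpow_nonneg (by positivity) β)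
        have hgauss := gauss_poly_bound (β := β) (qq := q) hDu hβ0 (by linarith) ht.1
        have h6 : Real.exp (-(t ^ 2) / (4 * Du)) * φ t ^ q ≤ (2 * C₃) ^ q * Mq := by
          calc Real.exp (-(t ^ 2) / (4 * Du)) * φ t ^ q
              ≤ Real.exp (-(t ^ 2) / (4 * Du)) * ((2 * C₃) ^ q * ((max t 1) ^ β) ^ q) :=
                mul_le_mul_of_nonneg_left (hφtq.trans_eq hsplit) (Real.exp_pos _).le
            _ = (2 * C₃) ^ q * (Real.exp (-(t ^ 2) / (4 * Du)) * ((max t 1) ^ β) ^ q) := by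
                ring
            _ ≤ (2 * C₃) ^ q * Mq := mul_le_mul_of_nonneg_left hgauss h2C3q.le
        have t2 : lam * rho N Dv t * Real.exp (-(t ^ 2) / (4 * Du)) * φ t ^ q
            ≤ rho N Dv t * 1 := by
          have h7 : lam * (Real.exp (-(t ^ 2) / (4 * Du)) * φ t ^ q)
              ≤ lam * ((2 * C₃) ^ q * Mq) := mul_le_mul_of_nonneg_left h6 hlam.le
          calc lam * rho N Dv t * Real.exp (-(t ^ 2) / (4 * Du)) * φ t ^ q
              = rho N Dv t * (lam * (Real.exp (-(t ^ 2) / (4 * Du)) * φ t ^ q)) := by ring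
            _ ≤ rho N Dv t * (lam * ((2 * C₃) ^ q * Mq)) := mul_le_mul_of_nonneg_left h7 hρ
            _ ≤ rho N Dv t * 1 := mul_le_mul_of_nonneg_left hsmall hρ
        have t1 : κ * rho N Dv t * φ t ≤ κ * rho N Dv t * φ s :=
          mul_le_mul_of_nonneg_left hmon (mul_nonneg hκ hρ)
        have t3 : rho N Dv t * 1 ≤ rho N Dv t * φ s := mul_le_mul_of_nonneg_left hφs1 hρ
        unfold RHS
        nlinarith
      have hIcc : uIcc (0:ℝ) s = Icc 0 s := uIcc_of_le hs.1.le
      have hint := intervalIntegral.integral_mono_on hs.1.le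
        ((RHS_cont hsol hκ hsR).mono (by rw [hIcc]) |>.intervalIntegrable (μ := MeasureTheory.volume))
        ((Continuous.intervalIntegrable (by
          exact continuous_const.mul (rho_continuous N Dv)) 0 s))
        hle
      rwa [intervalIntegral.integral_const_mul] at hint
    have hmaster := master (b := T) (c := κ + 1) hTIcc.1 (by linarith) hDv
      (sol_cont hsol hTR)
      (fun s hs => sol_deriv hsol hs.1 (coe_lt_R hs.2.le hTR))
      hsol.2.2.2.1
      (fun s hs => hsol.1 s hs.1 (coe_lt_R hs.2 hTR))
      hkey T ⟨hTIcc.1, le_rfl⟩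
    -- φ T ≤ C₃ (max T 1)^β  but  2 C₃ (max T 1)^β ≤ φ T
    have hmp : (0:ℝ) < (max T 1) ^ β :=
      Real.rpow_pos_of_pos (lt_of_lt_of_le one_pos (le_max_right T 1)) β
    rw [hGdef] at hT2
    rw [← hC3def, ← hβdef] at hmaster
    have hT2' : 2 * C₃ * (max T 1) ^ β ≤ φ T := hT2
    nlinarith [mul_pos hC3pos hmp]
  · -- q = 1, arbitrary λ
    intro hq1 lam hlam
    refine ⟨Real.exp ((κ + lam) / (2 * Dv)), Real.exp_pos _, 4 * (κ + lam), ?_⟩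
    intro R φ dφ hsol r hr0 hrR
    have hkey : ∀ s ∈ Ioo (0:ℝ) r,
        Dv * (rho N Dv s * dφ s) ≤ (κ + lam) * φ s * ∫ t in (0:ℝ)..s, rho N Dv t := by
      intro s hs
      have hsR : (s : EReal) < R := coe_lt_R hs.2.le hrR
      refine (sol_key hsol hDv hκ hlam hs.1 hsR).trans ?_
      have hle : ∀ t ∈ Icc (0:ℝ) s, RHS N Du Dv lam q κ φ t ≤ ((κ + lam) * φ s) * rho N Dv t := by
        intro t ht
        have htR : (t : EReal) < R := coe_lt_R (ht.2.trans hs.2.le) hrR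
        have hφt := hsol.1 t ht.1 htR
        have hmon := sol_mono hsol hDv hκ hlam ht.1 ht.2 hsR
        have hφs1 := sol_one_le hsol hDv hκ hlam (ht.1.trans ht.2) hsR
        have hρ := rho_nonneg N Dv ht.1
        have hexple : Real.exp (-(t ^ 2) / (4 * Du)) ≤ 1 := by
          apply Real.exp_le_one_iff.mpr
          apply div_nonpos_of_nonpos_of_nonneg (by nlinarith [sq_nonneg t]) (by linarith)
        have hpow : φ t ^ q = φ t := by rw [hq1, Real.rpow_one]
        have t1 : κ * rho N Dv t * φ t ≤ κ * rho N Dv t * φ s :=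
          mul_le_mul_of_nonneg_left hmon (mul_nonneg hκ hρ)
        have t2 : lam * rho N Dv t * Real.exp (-(t ^ 2) / (4 * Du)) * φ t ^ q
            ≤ lam * rho N Dv t * φ s := by
          rw [hpow]
          have h1 : Real.exp (-(t ^ 2) / (4 * Du)) * φ t ≤ 1 * φ s :=
            mul_le_mul hexple (hmon) hφt.le one_pos.le
          calc lam * rho N Dv t * Real.exp (-(t ^ 2) / (4 * Du)) * φ t
              = (lam * rho N Dv t) * (Real.exp (-(t ^ 2) / (4 * Du)) * φ t) := by ring
            _ ≤ (lam * rho N Dv t) * (1 * φ s) :=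
                mul_le_mul_of_nonneg_left h1 (mul_nonneg hlam.le hρ)
            _ = lam * rho N Dv t * φ s := by ring
        unfold RHS
        nlinarith
      have hIcc : uIcc (0:ℝ) s = Icc 0 s := uIcc_of_le hs.1.le
      have hint := intervalIntegral.integral_mono_on hs.1.le
        ((RHS_cont hsol hκ hsR).mono (by rw [hIcc]) |>.intervalIntegrable (μ := MeasureTheory.volume))
        ((Continuous.intervalIntegrable (by
          exact continuous_const.mul (rho_continuous N Dv)) 0 s))
        hle
      rwa [intervalIntegral.integral_const_mul] at hint
    exact master (b := r) (c := κ + lam) hr0 (by linarith) hDv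
      (sol_cont hsol hrR)
      (fun s hs => sol_deriv hsol hs.1 (coe_lt_R hs.2.le hrR))
      hsol.2.2.2.1
      (fun s hs => hsol.1 s hs.1 (coe_lt_R hs.2 hrR))
      hkey r ⟨hr0, le_rfl⟩
end

section
/- Let A > 0, a > 1 and r₀ ∈ ℝ. There is no twice differentiable function f : (r₀, ∞) → ℝ such that f(r) > 0 and f'(r) > 0 for all r > r₀ and f''(r) ≥ A f(r)^a for all r > r₀. Equivalently: if f is twice differentiable with f, f' > 0 on its maximal interval of existence (r₀, R) and f'' ≥ A f^a there, then R < ∞ and f(r) → ∞ as r → R⁻. -/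
open Real Set

private lemma mono_aux {g g' : ℝ → ℝ} {s : ℝ}
    (hg : ∀ r ∈ Ici s, HasDerivAt g (g' r) r)
    (h0 : ∀ r ∈ Ici s, 0 ≤ g' r) : MonotoneOn g (Ici s) := by
  apply monotoneOn_of_deriv_nonneg (convex_Ici s)
  · exact fun r hr => (hg r hr).continuousAt.continuousWithinAt
  · rw [interior_Ici]
    exact fun r hr => ((hg r (Ioi_subset_Ici_self hr)).differentiableAt).differentiableWithinAt
  · rw [interior_Ici]
    intro r hr
    rw [(hg r (Ioi_subset_Ici_self hr)).deriv]
    exact h0 r (Ioi_subset_Ici_self hr)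

private lemma anti_aux {g g' : ℝ → ℝ} {s : ℝ}
    (hg : ∀ r ∈ Ici s, HasDerivAt g (g' r) r)
    (h0 : ∀ r ∈ Ici s, g' r ≤ 0) : AntitoneOn g (Ici s) := by
  apply antitoneOn_of_deriv_nonpos (convex_Ici s)
  · exact fun r hr => (hg r hr).continuousAt.continuousWithinAt
  · rw [interior_Ici]
    exact fun r hr => ((hg r (Ioi_subset_Ici_self hr)).differentiableAt).differentiableWithinAt
  · rw [interior_Ici]
    intro r hr
    rw [(hg r (Ioi_subset_Ici_self hr)).deriv]
    exact h0 r (Ioi_subset_Ici_self hr)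

/-- Blow-up lemma for second order differential inequalities:
there is no twice differentiable `f : (r₀,∞) → ℝ` with `f > 0`, `f' > 0` and
`f'' ≥ A f^a` on `(r₀,∞)` when `A > 0` and `a > 1`. -/
theorem stmt5 (A a r₀ : ℝ) (hA : 0 < A) (ha : 1 < a) :
    ¬ ∃ f df ddf : ℝ → ℝ,
        (∀ r : ℝ, r₀ < r → HasDerivAt f (df r) r) ∧
        (∀ r : ℝ, r₀ < r → HasDerivAt df (ddf r) r) ∧
        (∀ r : ℝ, r₀ < r → 0 < f r) ∧
        (∀ r : ℝ, r₀ < r → 0 < df r) ∧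
        (∀ r : ℝ, r₀ < r → A * f r ^ a ≤ ddf r) := by
  rintro ⟨f, df, ddf, hf, hdf, hfpos, hdfpos, hineq⟩
  have ha1 : (0:ℝ) < a + 1 := by linarith
  set r₁ : ℝ := r₀ + 1 with hr₁def
  have hr₁ : r₀ < r₁ := by simp [hr₁def]
  have hmem : ∀ r, r₁ ≤ r → r₀ < r := fun r hr => lt_of_lt_of_le hr₁ hr
  -- f' is monotone on [r₁, ∞)
  have hdfmono : MonotoneOn df (Ici r₁) := by
    apply mono_aux (fun r hr => hdf r (hmem r hr))
    intro r hr
    have h1 := hineq r (hmem r hr)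
    have h2 : (0:ℝ) < A * f r ^ a := by
      have := hfpos r (hmem r hr); positivity
    linarith
  set m : ℝ := df r₁ with hmdef
  have hm : 0 < m := hdfpos r₁ hr₁
  -- linear lower bound for f on [r₁, ∞)
  have hphi : MonotoneOn (fun r => f r - r * m) (Ici r₁) := by
    apply mono_aux (g' := fun r => df r - m)
      (fun r hr => ((hf r (hmem r hr)).sub (hasDerivAt_mul_const m)))
    intro r hr
    have := hdfmono (self_mem_Ici) hr hr
    linarith
  have flin : ∀ r, r₁ ≤ r → f r₁ + m * (r - r₁) ≤ f r := by
    intro r hr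
    have := hphi self_mem_Ici hr hr
    simp only at this
    nlinarith
  -- f is monotone on [r₁, ∞)
  have hfmono : MonotoneOn f (Ici r₁) := by
    apply mono_aux (fun r hr => hf r (hmem r hr))
    exact fun r hr => (hdfpos r (hmem r hr)).le
  -- energy
  set E : ℝ → ℝ := fun r => df r ^ 2 - 2 * A / (a + 1) * f r ^ (a + 1) with hEdef
  have hE : ∀ r ∈ Ici r₁, HasDerivAt E
      (2 * df r * ddf r - 2 * A / (a + 1) * (df r * (a + 1) * f r ^ a)) r := by
    intro r hr
    have h1 : HasDerivAt (fun y => df y ^ 2) (2 * df r * ddf r) r := by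
      have := (hdf r (hmem r hr)).pow 2
      have h' : HasDerivAt (df ^ 2) (2 * df r * ddf r) r := by
        simpa [mul_comm, mul_assoc, mul_left_comm] using this
      exact h'
    have h2 : HasDerivAt (fun y => f y ^ (a + 1)) (df r * (a + 1) * f r ^ a) r := by
      have := (hf r (hmem r hr)).rpow_const
        (p := a + 1) (Or.inl (ne_of_gt (hfpos r (hmem r hr))))
      simpa using this
    exact h1.sub ((h2.const_mul (2 * A / (a + 1))))
  have hEmono : MonotoneOn E (Ici r₁) := by
    apply mono_aux hE
    intro r hr
    have hd := hdfpos r (hmem r hr)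
    have hi := hineq r (hmem r hr)
    have hc : 2 * A / (a + 1) * (df r * (a + 1) * f r ^ a) = 2 * df r * (A * f r ^ a) := by
      field_simp
    rw [hc]
    nlinarith
  -- choose r₂ with f r₂ large
  set E₁ : ℝ := E r₁ with hE₁def
  set T : ℝ := max 1 ((a + 1) * max 0 (-E₁) / A) with hTdef
  have hT1 : (1:ℝ) ≤ T := le_max_left _ _
  have hT0 : 0 < T := lt_of_lt_of_le one_pos hT1
  set r₂ : ℝ := r₁ + T / m with hr₂def
  have hr₂ : r₁ ≤ r₂ := by
    have : 0 < T / m := div_pos hT0 hm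
    simp [hr₂def]; linarith
  have hfr₂ : T ≤ f r₂ := by
    have h1 := flin r₂ hr₂
    have h2 : m * (r₂ - r₁) = T := by
      rw [hr₂def]; field_simp; ring
    have := hfpos r₁ hr₁
    nlinarith
  have hfT : ∀ r, r₂ ≤ r → T ≤ f r := by
    intro r hr
    exact le_trans hfr₂ (hfmono (mem_Ici.mpr hr₂) (mem_Ici.mpr (hr₂.trans hr)) hr)
  -- df r ^ 2 ≥ (A/(a+1)) f r ^ (a+1) for r ≥ r₂
  have hkey : ∀ r, r₂ ≤ r → A / (a + 1) * f r ^ (a + 1) ≤ df r ^ 2 := by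
    intro r hr
    have hEr := hEmono self_mem_Ici (mem_Ici.mpr (hr₂.trans hr)) (hr₂.trans hr)
    have hfr : 1 ≤ f r := le_trans hT1 (hfT r hr)
    have hpow : f r ≤ f r ^ (a + 1) := by
      calc f r = f r ^ (1:ℝ) := (rpow_one _).symm
      _ ≤ f r ^ (a + 1) := rpow_le_rpow_of_exponent_le hfr (by linarith)
    have hTr : (a + 1) * max 0 (-E₁) / A ≤ f r := le_trans (le_max_right _ _) (hfT r hr)
    have hAfr : (a + 1) * max 0 (-E₁) / A ≤ f r ^ (a + 1) := le_trans hTr hpow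
    have h5 : -E₁ ≤ A / (a + 1) * f r ^ (a + 1) := by
      calc -E₁ ≤ max 0 (-E₁) := le_max_right _ _
        _ = A / (a + 1) * ((a + 1) * max 0 (-E₁) / A) := by field_simp
        _ ≤ A / (a + 1) * f r ^ (a + 1) :=
            mul_le_mul_of_nonneg_left hAfr (by positivity)
    have hE2 : E₁ ≤ df r ^ 2 - 2 * A / (a + 1) * f r ^ (a + 1) := hEr
    have hre : 2 * A / (a + 1) * f r ^ (a + 1) = 2 * (A / (a + 1) * f r ^ (a + 1)) := by
      ring
    rw [hre] at hE2
    linarith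
  -- df ≥ K f^b
  set K : ℝ := Real.sqrt (A / (a + 1)) with hKdef
  have hK : 0 < K := Real.sqrt_pos.mpr (div_pos hA ha1)
  set b : ℝ := (a + 1) / 2 with hbdef
  have hb1 : 1 < b := by rw [hbdef]; linarith
  have hdfge : ∀ r, r₂ ≤ r → K * f r ^ b ≤ df r := by
    intro r hr
    have hfp : 0 < f r := hfpos r (hmem r (hr₂.trans hr))
    have hdp : 0 < df r := hdfpos r (hmem r (hr₂.trans hr))
    have h1 : Real.sqrt (A / (a + 1) * f r ^ (a + 1)) ≤ Real.sqrt (df r ^ 2) :=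
      Real.sqrt_le_sqrt (hkey r hr)
    rw [Real.sqrt_sq hdp.le] at h1
    have h2 : Real.sqrt (A / (a + 1) * f r ^ (a + 1)) = K * f r ^ b := by
      rw [Real.sqrt_mul (div_pos hA ha1).le, hKdef]
      congr 1
      rw [Real.sqrt_eq_rpow, ← Real.rpow_mul hfp.le]
      congr 1
      rw [hbdef]; ring
    rw [h2] at h1
    exact h1
  -- g = f^(1-b) decreases at fixed rate, contradiction
  set g : ℝ → ℝ := fun r => f r ^ (1 - b) with hgdef
  set C : ℝ := (b - 1) * K with hCdef
  have hC : 0 < C := mul_pos (by linarith) hK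
  have hganti : AntitoneOn (fun r => g r + C * r) (Ici r₂) := by
    apply anti_aux (g' := fun r => df r * (1 - b) * f r ^ (-b) + C)
    · intro r hr
      have hfp : 0 < f r := hfpos r (hmem r (hr₂.trans hr))
      have h1 : HasDerivAt g (df r * (1 - b) * f r ^ (1 - b - 1)) r :=
        (hf r (hmem r (hr₂.trans hr))).rpow_const (Or.inl (ne_of_gt hfp))
      have h2 : (1 : ℝ) - b - 1 = -b := by ring
      rw [h2] at h1
      have h' : HasDerivAt (g + fun y => C * y) (df r * (1 - b) * f r ^ (-b) + C) r := by
        simpa using h1.add ((hasDerivAt_id r).const_mul C)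
      exact h'
    · intro r hr
      have hfp : 0 < f r := hfpos r (hmem r (hr₂.trans hr))
      have hfb : (0:ℝ) < f r ^ (-b) := rpow_pos_of_pos hfp _
      have h3 : K ≤ df r * f r ^ (-b) := by
        have := hdfge r hr
        have h4 : K * f r ^ b * f r ^ (-b) ≤ df r * f r ^ (-b) :=
          mul_le_mul_of_nonneg_right this hfb.le
        have h5 : f r ^ b * f r ^ (-b) = 1 := by
          rw [← Real.rpow_add hfp]; simp
        rw [mul_assoc, h5, mul_one] at h4
        exact h4
      have : df r * (1 - b) * f r ^ (-b) = -((b - 1) * (df r * f r ^ (-b))) := by ring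
      rw [this, hCdef]
      have h6 : (b - 1) * K ≤ (b - 1) * (df r * f r ^ (-b)) :=
        mul_le_mul_of_nonneg_left h3 (by linarith)
      linarith
  -- final contradiction
  set r₃ : ℝ := r₂ + g r₂ / C with hr₃def
  have hg₂ : 0 < g r₂ := rpow_pos_of_pos (hfpos r₂ (hmem r₂ hr₂)) _
  have hr₃ : r₂ ≤ r₃ := by
    have : 0 < g r₂ / C := div_pos hg₂ hC
    rw [hr₃def]; linarith
  have hfinal := hganti (self_mem_Ici) (mem_Ici.mpr hr₃) hr₃
  have hg₃ : 0 < g r₃ := rpow_pos_of_pos (hfpos r₃ (hmem r₃ (hr₂.trans hr₃))) _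
  have hCr : C * r₃ = C * r₂ + g r₂ := by
    rw [hr₃def]; field_simp
  simp only at hfinal
  nlinarith
end

section
/- Let N ≥ 1 be an integer, D_u, D_v > 0, κ ∈ ℝ and q > 1, and set ρ(r) = r^{N−1} e^{r²/(4D_v)}. There exists Λ > 0 such that for every λ ≥ Λ there is no positive C² function φ : [0,∞) → ℝ with φ(0) = 1, φ'(0) = 0 solving D_v (ρ φ')' = κ ρ φ + λ ρ e^{−r²/(4D_u)} φ^q on (0,∞); that is, for λ large the local solution blows up at a finite point R_max < ∞. -/
open Real Set

lemma mono_aux_s6 {f f' : ℝ → ℝ} {a b : ℝ}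
    (hc : ContinuousOn f (Icc a b))
    (hd : ∀ x ∈ Ioo a b, HasDerivAt f (f' x) x)
    (h0 : ∀ x ∈ Ioo a b, 0 ≤ f' x) :
    ∀ x ∈ Icc a b, ∀ y ∈ Icc a b, x ≤ y → f x ≤ f y := by
  intro x hx y hy hxy
  refine monotoneOn_of_deriv_nonneg (convex_Icc a b) hc ?_ ?_ hx hy hxy
  · intro z hz
    rw [interior_Icc] at hz
    exact (hd z hz).differentiableAt.differentiableWithinAt
  · intro z hz
    rw [interior_Icc] at hz
    rw [(hd z hz).deriv]
    exact h0 z hz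

set_option maxHeartbeats 4000000 in
/-- For the self-similar profile equation
`Dᵥ (ρ φ')' = κ ρ φ + λ ρ e^{-r²/(4Dᵤ)} φ^q`, `ρ(r) = r^{N-1} e^{r²/(4Dᵥ)}`,
`φ(0)=1`, `φ'(0)=0`, `q > 1`: there exists `Λ > 0` such that for every `λ ≥ Λ`
there is no positive C² solution on all of `[0,∞)` (the local solution blows up
at a finite point). -/
theorem stmt6
    (N : ℕ) (hN : 1 ≤ N) (Du Dv κ q : ℝ)
    (hDu : 0 < Du) (hDv : 0 < Dv) (hq : 1 < q)
    (ρ : ℝ → ℝ) (hρ : ∀ r : ℝ, ρ r = r ^ (N - 1) * Real.exp (r ^ 2 / (4 * Dv))) :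
    ∃ Λ > 0, ∀ lam : ℝ, Λ ≤ lam →
      ¬ ∃ φ dφ : ℝ → ℝ,
          (∀ r ∈ Ici (0:ℝ), 0 < φ r) ∧
          (∀ r ∈ Ici (0:ℝ), HasDerivWithinAt φ (dφ r) (Ici 0) r) ∧
          (∀ r ∈ Ioi (0:ℝ), HasDerivAt (fun s => Dv * (ρ s * dφ s))
            (κ * ρ r * φ r + lam * ρ r * Real.exp (-(r ^ 2) / (4 * Du)) * φ r ^ q) r) ∧
          φ 0 = 1 ∧ dφ 0 = 0 := by
  -- constants
  obtain ⟨e0, he0def⟩ : ∃ x : ℝ, x = Real.exp (-(1 / (4 * Du))) := ⟨_, rfl⟩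
  have he0 : 0 < e0 := by rw [he0def]; positivity
  obtain ⟨M, hMdef⟩ : ∃ x : ℝ, x = Real.exp (1 / (4 * Dv)) := ⟨_, rfl⟩
  have hM : 0 < M := by rw [hMdef]; positivity
  have hM1 : 1 ≤ M := by rw [hMdef]; exact Real.one_le_exp (by positivity)
  obtain ⟨m, hmdef⟩ : ∃ x : ℝ, x = (1/4 : ℝ) ^ (N - 1) := ⟨_, rfl⟩
  have hm : 0 < m := by rw [hmdef]; positivity
  obtain ⟨c, hcdef⟩ : ∃ x : ℝ, x = m * e0 / 2 := ⟨_, rfl⟩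
  have hc : 0 < c := by rw [hcdef]; positivity
  obtain ⟨K, hKdef⟩ : ∃ x : ℝ, x = c / (2 * Dv * M) := ⟨_, rfl⟩
  have hK : 0 < K := by rw [hKdef]; positivity
  obtain ⟨θ, hθdef⟩ : ∃ x : ℝ, x = (2:ℝ) ^ (-(q - 1) / 2) := ⟨_, rfl⟩
  have hθ : 0 < θ := by rw [hθdef]; positivity
  have hθ1 : θ < 1 := by rw [hθdef]; exact Real.rpow_lt_one_of_one_lt_of_neg one_lt_two (by nlinarith)
  have h2q : (2:ℝ) ≤ (2:ℝ) ^ q := by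
    calc (2:ℝ) = (2:ℝ) ^ (1:ℝ) := (Real.rpow_one 2).symm
    _ ≤ (2:ℝ) ^ q := Real.rpow_le_rpow_of_exponent_le one_le_two hq.le
  have h2qpos : (0:ℝ) < (2:ℝ) ^ q := Real.rpow_pos_of_pos two_pos _
  obtain ⟨Λa, hΛadef⟩ : ∃ x : ℝ, x = (|κ| + 1) * (2:ℝ) ^ q / e0 := ⟨_, rfl⟩
  have hΛa : 0 < Λa := by rw [hΛadef]; exact div_pos (mul_pos (by positivity) h2qpos) he0
  obtain ⟨Λc, hΛcdef⟩ : ∃ x : ℝ, x = 4 / (K * (1 - θ)^2) := ⟨_, rfl⟩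
  have hΛc : 0 < Λc := by rw [hΛcdef]; exact div_pos (by norm_num) (mul_pos hK (pow_pos (by linarith) 2))
  refine ⟨max Λa Λc, lt_of_lt_of_le hΛa (le_max_left _ _), ?_⟩
  intro lam hlam
  rintro ⟨φ, dφ, hφpos, hφd, hFd0, hφ0, hdφ0⟩
  have hlamA : Λa ≤ lam := le_trans (le_max_left _ _) hlam
  have hlamC : Λc ≤ lam := le_trans (le_max_right _ _) hlam
  have hlampos : 0 < lam := lt_of_lt_of_le hΛa hlamA
  -- key lambda inequalities
  have hlk : (|κ| + 1) * (2:ℝ) ^ q ≤ lam * e0 := by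
    rw [hΛadef, div_le_iff₀ he0] at hlamA
    linarith
  have hlk1 : |κ| + 1 ≤ lam * e0 * (2:ℝ) ^ (-q) := by
    have h1 : ((|κ| + 1) * (2:ℝ) ^ q) * (2:ℝ) ^ (-q) ≤ (lam * e0) * (2:ℝ) ^ (-q) :=
      mul_le_mul_of_nonneg_right hlk (Real.rpow_pos_of_pos two_pos _).le
    have h2 : (2:ℝ) ^ q * (2:ℝ) ^ (-q) = 1 := by
      rw [← Real.rpow_add two_pos]; simp
    calc |κ| + 1 = (|κ| + 1) * ((2:ℝ) ^ q * (2:ℝ) ^ (-q)) := by rw [h2, mul_one]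
      _ = (|κ| + 1) * (2:ℝ) ^ q * (2:ℝ) ^ (-q) := by ring
      _ ≤ lam * e0 * (2:ℝ) ^ (-q) := h1
  have hlk2 : 2 * |κ| ≤ lam * e0 := by nlinarith [abs_nonneg κ]
  -- basic function facts
  have hρpos : ∀ r : ℝ, 0 < r → 0 < ρ r := by
    intro r hr; rw [hρ]; positivity
  have hρleM : ∀ r ∈ Ioc (0:ℝ) 1, ρ r ≤ M := by
    intro r hr
    rw [hρ]
    have h1 : r ^ (N - 1) ≤ 1 := pow_le_one₀ hr.1.le hr.2
    have h2 : Real.exp (r ^ 2 / (4 * Dv)) ≤ M := by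
      rw [hMdef]
      apply Real.exp_le_exp.2
      have h3 : r ^ 2 ≤ 1 := by nlinarith [hr.1.le, hr.2]
      gcongr
    calc r ^ (N-1) * Real.exp (r ^ 2 / (4 * Dv)) ≤ 1 * M :=
          mul_le_mul h1 h2 (Real.exp_pos _).le one_pos.le
      _ = M := one_mul M
  have hρgem : ∀ r ∈ Icc (1/4:ℝ) 1, m ≤ ρ r := by
    intro r hr
    rw [hρ, hmdef]
    have h1 : (1/4:ℝ) ^ (N - 1) ≤ r ^ (N - 1) := pow_le_pow_left₀ (by norm_num) hr.1 _
    have h2 : (1:ℝ) ≤ Real.exp (r ^ 2 / (4 * Dv)) := Real.one_le_exp (by positivity)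
    calc (1/4:ℝ) ^ (N-1) = (1/4:ℝ) ^ (N-1) * 1 := (mul_one _).symm
      _ ≤ r ^ (N-1) * Real.exp (r ^ 2 / (4 * Dv)) :=
          mul_le_mul h1 h2 one_pos.le (pow_nonneg (le_trans (by norm_num) hr.1) _)
  have hwge : ∀ r ∈ Icc (0:ℝ) 1, e0 ≤ Real.exp (-(r ^ 2) / (4 * Du)) := by
    intro r hr
    rw [he0def]
    apply Real.exp_le_exp.2
    rw [show -(1/(4*Du)) = -1 / (4*Du) by ring]
    have h3 : r ^ 2 ≤ 1 := by nlinarith [hr.1, hr.2]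
    exact (div_le_div_iff_of_pos_right (by positivity : (0:ℝ) < 4*Du)).2 (neg_le_neg h3)
  have hwle1 : ∀ r : ℝ, Real.exp (-(r ^ 2) / (4 * Du)) ≤ 1 := by
    intro r
    apply Real.exp_le_one_iff.2
    have h1 : -(r^2) ≤ 0 := by nlinarith [sq_nonneg r]
    exact div_nonpos_iff.2 (Or.inr ⟨h1, by positivity⟩)
  -- function F and its derivative g
  obtain ⟨F, hFdef⟩ : ∃ F : ℝ → ℝ, F = fun s => Dv * (ρ s * dφ s) := ⟨_, rfl⟩
  obtain ⟨g, hgdef⟩ : ∃ g : ℝ → ℝ,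
      g = fun r => κ * ρ r * φ r + lam * ρ r * Real.exp (-(r ^ 2) / (4 * Du)) * φ r ^ q := ⟨_, rfl⟩
  have hFd : ∀ r : ℝ, 0 < r → HasDerivAt F (g r) r := by
    intro r hr
    rw [hFdef, hgdef]
    exact hFd0 r hr
  have hFcont : ∀ r : ℝ, 0 < r → ContinuousAt F r := fun r hr => (hFd r hr).continuousAt
  have hφc : ∀ s : ℝ, 0 ≤ s → ContinuousWithinAt φ (Ici 0) s := fun s hs =>
    (hφd s hs).continuousWithinAt
  have hφcIcc : ∀ y : ℝ, ContinuousOn φ (Icc 0 y) := by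
    intro y s hs
    exact (hφc s hs.1).mono (fun z hz => hz.1)
  have hφda : ∀ r : ℝ, 0 < r → HasDerivAt φ (dφ r) r := fun r hr =>
    (hφd r hr.le).hasDerivAt (Ici_mem_nhds hr)
  have hdφeq : ∀ r : ℝ, 0 < r → dφ r = F r / (Dv * ρ r) := by
    intro r hr
    simp only [hFdef]
    rw [eq_div_iff (mul_ne_zero hDv.ne' (hρpos r hr).ne')]
    ring
  have hφpos' : ∀ r : ℝ, 0 ≤ r → 0 < φ r := fun r hr => hφpos r hr
  -- inequality (i): if 1/2 ≤ φ r and r ∈ (0,1] then g r ≥ ρ r * φ r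
  have hgpos : ∀ r : ℝ, r ∈ Ioc (0:ℝ) 1 → 1/2 ≤ φ r → ρ r * φ r ≤ g r := by
    intro r hr hφr
    have hρr := hρpos r hr.1
    have hφr0 := hφpos' r hr.1.le
    have hφq : (2:ℝ) ^ (-q) * φ r ≤ φ r ^ q := by
      rcases le_or_gt (φ r) 1 with h1 | h1
      · have e1 : ((1:ℝ)/2) ^ q ≤ φ r ^ q := Real.rpow_le_rpow (by norm_num) hφr (by linarith)
        have e2 : ((1:ℝ)/2) ^ (q:ℝ) = (2:ℝ) ^ (-q) := by
          rw [Real.rpow_neg (by norm_num : (0:ℝ) ≤ 2), ← Real.inv_rpow (by norm_num : (0:ℝ) ≤ 2)]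
          norm_num
        have e3 : (2:ℝ) ^ (-q) * φ r ≤ (2:ℝ) ^ (-q) * 1 :=
          mul_le_mul_of_nonneg_left h1 (Real.rpow_pos_of_pos two_pos _).le
        rw [mul_one] at e3
        rw [e2] at e1
        linarith
      · have e1 : φ r ^ (1:ℝ) ≤ φ r ^ q := Real.rpow_le_rpow_of_exponent_le h1.le hq.le
        rw [Real.rpow_one] at e1
        have e4 : (2:ℝ) ^ (-q) ≤ 1 := Real.rpow_le_one_of_one_le_of_nonpos one_le_two (by linarith)
        nlinarith
    have hw := hwge r ⟨hr.1.le, hr.2⟩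
    have hP : (0:ℝ) ≤ lam * ρ r := mul_nonneg hlampos.le hρr.le
    have t1 : lam * ρ r * e0 * ((2:ℝ) ^ (-q) * φ r) ≤ lam * ρ r * e0 * φ r ^ q :=
      mul_le_mul_of_nonneg_left hφq (mul_nonneg hP he0.le)
    have t2 : lam * ρ r * e0 * φ r ^ q ≤ lam * ρ r * Real.exp (-(r ^ 2) / (4 * Du)) * φ r ^ q :=
      mul_le_mul_of_nonneg_right (mul_le_mul_of_nonneg_left hw hP)
        (Real.rpow_pos_of_pos hφr0 q).le
    have e5 : lam * ρ r * e0 * ((2:ℝ) ^ (-q) * φ r) = (lam * e0 * (2:ℝ) ^ (-q)) * (ρ r * φ r) := by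
      ring
    have t4 : (|κ| + 1) * (ρ r * φ r) ≤ (lam * e0 * (2:ℝ) ^ (-q)) * (ρ r * φ r) :=
      mul_le_mul_of_nonneg_right hlk1 (mul_pos hρr hφr0).le
    have e6 : -(|κ| * (ρ r * φ r)) ≤ κ * ρ r * φ r := by
      nlinarith [mul_nonneg (by linarith [neg_abs_le κ] : (0:ℝ) ≤ κ + |κ|)
        (mul_pos hρr hφr0).le]
    rw [hgdef]
    simp only []
    linarith [t1, t2, t4, e6, e5 ▸ t1]
  -- inequality (ii): quantitative lower bound on [1/4, 1]
  have hg2 : ∀ r ∈ Icc (1/4:ℝ) 1, ∀ A : ℝ, 1 ≤ A → A ≤ φ r → c * lam * A ^ q ≤ g r := by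
    intro r hr A hA hAφ
    have hρr := hρpos r (by linarith [hr.1] : (0:ℝ) < r)
    have hρm := hρgem r hr
    have hw := hwge r ⟨by linarith [hr.1], hr.2⟩
    have hφ1 : 1 ≤ φ r := le_trans hA hAφ
    have hAq : A ^ q ≤ φ r ^ q := Real.rpow_le_rpow (by linarith) hAφ (by linarith)
    have hAqpos : (0:ℝ) < A ^ q := Real.rpow_pos_of_pos (by linarith) q
    have hφφq : φ r ≤ φ r ^ q := by
      have h0 := Real.rpow_le_rpow_of_exponent_le hφ1 hq.le
      rwa [Real.rpow_one] at h0
    have hφqpos : (0:ℝ) < φ r ^ q := Real.rpow_pos_of_pos (by linarith) q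
    have t1 : lam * ρ r * e0 * φ r ^ q ≤ lam * ρ r * Real.exp (-(r ^ 2) / (4 * Du)) * φ r ^ q :=
      mul_le_mul_of_nonneg_right
        (mul_le_mul_of_nonneg_left hw (mul_nonneg hlampos.le hρr.le)) hφqpos.le
    have t2 : -(|κ| * (ρ r * φ r ^ q)) ≤ κ * ρ r * φ r := by
      have h1 : -(|κ| * (ρ r * φ r)) ≤ κ * ρ r * φ r := by
        nlinarith [mul_nonneg (by linarith [neg_abs_le κ] : (0:ℝ) ≤ κ + |κ|)
          (mul_pos hρr (by linarith : (0:ℝ) < φ r)).le]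
      have h2 : |κ| * (ρ r * φ r) ≤ |κ| * (ρ r * φ r ^ q) :=
        mul_le_mul_of_nonneg_left (mul_le_mul_of_nonneg_left hφφq hρr.le) (abs_nonneg κ)
      linarith
    have t3 : (lam * e0 / 2) * (m * A ^ q) ≤ (lam * e0 - |κ|) * (ρ r * φ r ^ q) := by
      have h3 : (0:ℝ) < lam * e0 / 2 := div_pos (mul_pos hlampos he0) two_pos
      have h4 : m * A ^ q ≤ ρ r * φ r ^ q := mul_le_mul hρm hAq hAqpos.le hρr.le
      have h5 : lam * e0 / 2 ≤ lam * e0 - |κ| := by linarith [hlk2]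
      exact mul_le_mul h5 h4 (mul_nonneg hm.le hAqpos.le) (by linarith)
    have e7 : (lam * e0 - |κ|) * (ρ r * φ r ^ q)
        = lam * ρ r * e0 * φ r ^ q - |κ| * (ρ r * φ r ^ q) := by ring
    have e8 : c * lam * A ^ q = (lam * e0 / 2) * (m * A ^ q) := by rw [hcdef]; ring
    rw [hgdef]
    simp only []
    linarith [t1, t2, t3]
  -- Key bootstrap lemma
  have hkey : ∀ b : ℝ, 0 < b → b ≤ 1 → (∀ s ∈ Icc (0:ℝ) b, 1/2 ≤ φ s) →
      ∀ r ∈ Ioc (0:ℝ) b, 0 ≤ F r ∧ 1 ≤ φ r := by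
    intro b hb0 hb1 hbφ
    have hg0 : ∀ s ∈ Ioc (0:ℝ) b, 0 ≤ g s := by
      intro s hs
      have h1 := hgpos s ⟨hs.1, le_trans hs.2 hb1⟩ (hbφ s ⟨hs.1.le, hs.2⟩)
      nlinarith [mul_pos (hρpos s hs.1) (hφpos' s hs.1.le)]
    have hFcontOn : ∀ x y : ℝ, 0 < x → ContinuousOn F (Icc x y) := by
      intro x y hx s hs
      exact (hFcont s (lt_of_lt_of_le hx hs.1)).continuousWithinAt
    have Fmono : ∀ x y : ℝ, 0 < x → x ≤ y → y ≤ b → F x ≤ F y := by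
      intro x y hx hxy hyb
      exact mono_aux_s6 (f' := g) (hFcontOn x y hx)
        (fun z hz => hFd z (lt_trans hx hz.1))
        (fun z hz => hg0 z ⟨lt_trans hx hz.1, le_trans hz.2.le hyb⟩)
        x ⟨le_rfl, hxy⟩ y ⟨hxy, le_rfl⟩ hxy
    obtain ⟨x0, hx0mem, hx0⟩ :=
      isCompact_Icc.exists_isMaxOn (nonempty_Icc.2 (by norm_num : (0:ℝ) ≤ 1)) (hφcIcc 1)
    rw [isMaxOn_iff] at hx0
    obtain ⟨Cφ, hCdef⟩ : ∃ x : ℝ, x = φ x0 := ⟨_, rfl⟩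
    have hCφ : ∀ s ∈ Icc (0:ℝ) 1, φ s ≤ Cφ := by
      intro s hs; rw [hCdef]; exact hx0 s hs
    have hC1 : 1 ≤ Cφ := by
      have h1 := hCφ 0 ⟨le_rfl, by norm_num⟩
      rwa [hφ0] at h1
    have hCq : (0:ℝ) < Cφ ^ q := Real.rpow_pos_of_pos (by linarith) q
    obtain ⟨B, hBdef⟩ : ∃ x : ℝ, x = |κ| * M * Cφ + lam * M * Cφ ^ q + 1 := ⟨_, rfl⟩
    have hB : 0 < B := by
      rw [hBdef]
      have h1 : (0:ℝ) ≤ |κ| * M * Cφ :=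
        mul_nonneg (mul_nonneg (abs_nonneg κ) hM.le) (by linarith)
      have h2 : (0:ℝ) ≤ lam * M * Cφ ^ q := mul_nonneg (mul_nonneg hlampos.le hM.le) hCq.le
      linarith
    have hgB : ∀ s ∈ Ioc (0:ℝ) b, g s ≤ B := by
      intro s hs
      have hs1 : s ∈ Ioc (0:ℝ) 1 := ⟨hs.1, le_trans hs.2 hb1⟩
      have hρs := hρpos s hs.1
      have hρM := hρleM s hs1
      have hφs := hφpos' s hs.1.le
      have hφC := hCφ s ⟨hs.1.le, hs1.2⟩
      have hφqC : φ s ^ q ≤ Cφ ^ q := Real.rpow_le_rpow hφs.le hφC (by linarith)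
      have hφqpos : (0:ℝ) < φ s ^ q := Real.rpow_pos_of_pos hφs q
      have u1 : κ * ρ s * φ s ≤ |κ| * M * Cφ := by
        have h1 : κ * ρ s * φ s ≤ |κ| * (ρ s * φ s) := by
          nlinarith [mul_nonneg (by linarith [le_abs_self κ] : (0:ℝ) ≤ |κ| - κ)
            (mul_pos hρs hφs).le]
        have h2 : |κ| * (ρ s * φ s) ≤ |κ| * (M * Cφ) :=
          mul_le_mul_of_nonneg_left (mul_le_mul hρM hφC hφs.le hM.le) (abs_nonneg κ)
        have h3 : |κ| * (M * Cφ) = |κ| * M * Cφ := by ring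
        linarith
      have u2 : lam * ρ s * Real.exp (-(s ^ 2) / (4 * Du)) * φ s ^ q ≤ lam * M * Cφ ^ q := by
        have h1 : ρ s * φ s ^ q ≤ M * Cφ ^ q := mul_le_mul hρM hφqC hφqpos.le hM.le
        have h3 : lam * ρ s * Real.exp (-(s ^ 2) / (4 * Du)) * φ s ^ q ≤ lam * ρ s * 1 * φ s ^ q :=
          mul_le_mul_of_nonneg_right
            (mul_le_mul_of_nonneg_left (hwle1 s) (mul_nonneg hlampos.le hρs.le)) hφqpos.le
        have h4 : lam * ρ s * 1 * φ s ^ q = lam * (ρ s * φ s ^ q) := by ring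
        have h5 : lam * (ρ s * φ s ^ q) ≤ lam * (M * Cφ ^ q) :=
          mul_le_mul_of_nonneg_left h1 hlampos.le
        have h6 : lam * (M * Cφ ^ q) = lam * M * Cφ ^ q := by ring
        linarith
      rw [hgdef]
      simp only []
      rw [hBdef]
      linarith
    have Fslope : ∀ x y : ℝ, 0 < x → x ≤ y → y ≤ b → F y - F x ≤ B * (y - x) := by
      intro x y hx hxy hyb
      have h := mono_aux_s6 (f := fun r => B * r - F r) (f' := fun r => B - g r)
        ((continuousOn_const.mul continuousOn_id).sub (hFcontOn x y hx))
        (fun z hz => by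
          exact (((hasDerivAt_id z).const_mul B).sub (hFd z (lt_trans hx hz.1))).congr_deriv (by ring))
        (fun z hz => by
          have h2 := hgB z ⟨lt_trans hx hz.1, le_trans hz.2.le hyb⟩
          linarith)
        x ⟨le_rfl, hxy⟩ y ⟨hxy, le_rfl⟩ hxy
      linarith
    obtain ⟨L, hLdef⟩ : ∃ x : ℝ, x = sInf (F '' Ioc 0 b) := ⟨_, rfl⟩
    have hne : (F '' Ioc 0 b).Nonempty := ⟨F b, mem_image_of_mem F ⟨hb0, le_rfl⟩⟩
    have hbdd : BddBelow (F '' Ioc 0 b) := by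
      refine ⟨F b - B * b, ?_⟩
      rintro y ⟨x, hx, rfl⟩
      have h1 := Fslope x b hx.1 hx.2 le_rfl
      have h2 : B * (b - x) ≤ B * b := mul_le_mul_of_nonneg_left (by linarith [hx.1.le]) hB.le
      linarith
    have hLle : ∀ x ∈ Ioc (0:ℝ) b, L ≤ F x := by
      intro x hx; rw [hLdef]; exact csInf_le hbdd (mem_image_of_mem F hx)
    have hleL : ∀ x ∈ Ioc (0:ℝ) b, F x - B * x ≤ L := by
      intro x hx; rw [hLdef]
      refine le_csInf hne ?_
      rintro y ⟨z, hz, rfl⟩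
      rcases le_total z x with h | h
      · have h1 := Fslope z x hz.1 h hx.2
        have h2 : B * (x - z) ≤ B * x := mul_le_mul_of_nonneg_left (by linarith [hz.1.le]) hB.le
        linarith
      · have h1 := Fmono x z hx.1 h hz.2
        nlinarith [mul_pos hB hx.1]
    have hL0 : 0 ≤ L := by
      by_contra hL
      push_neg at hL
      obtain ⟨ε, hεdef⟩ : ∃ x : ℝ, x = -L / (2 * (Dv * M)) := ⟨_, rfl⟩
      have hε : 0 < ε := by
        rw [hεdef]; exact div_pos (by linarith) (by positivity)
      obtain ⟨a1, ha1def⟩ : ∃ x : ℝ, x = min b (-L / (2 * B)) := ⟨_, rfl⟩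
      have ha1 : 0 < a1 := by
        rw [ha1def]; exact lt_min hb0 (div_pos (by linarith) (by linarith))
      have ha1b : a1 ≤ b := by rw [ha1def]; exact min_le_left _ _
      have hdφneg : ∀ x ∈ Ioc (0:ℝ) a1, dφ x ≤ -ε := by
        intro x hx
        have hxb : x ∈ Ioc (0:ℝ) b := ⟨hx.1, le_trans hx.2 ha1b⟩
        have hFx : F x ≤ L / 2 := by
          have h1 := hleL x hxb
          have h2 : x ≤ -L / (2 * B) := le_trans hx.2 (by rw [ha1def]; exact min_le_right _ _)
          have h3 : B * x ≤ B * (-L / (2 * B)) := mul_le_mul_of_nonneg_left h2 hB.le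
          have h4 : B * (-L / (2 * B)) = -L / 2 := by
            field_simp
          linarith only [h1, h3, h4]
        have hρx := hρpos x hx.1
        have hρxM := hρleM x ⟨hx.1, le_trans hxb.2 hb1⟩
        rw [hdφeq x hx.1]
        have h5 : F x / (Dv * ρ x) ≤ (L / 2) / (Dv * ρ x) :=
          (div_le_div_iff_of_pos_right (mul_pos hDv hρx)).2 hFx
        have h6 : (L / 2) / (Dv * ρ x) ≤ (L / 2) / (Dv * M) := by
          rw [div_le_div_iff₀ (mul_pos hDv hρx) (mul_pos hDv hM)]
          have h7 : Dv * ρ x ≤ Dv * M := mul_le_mul_of_nonneg_left hρxM hDv.le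
          have h7' : 0 ≤ (Dv * M - Dv * ρ x) * (-L / 2) :=
            mul_nonneg (sub_nonneg.2 h7) (by linarith only [hL] : (0:ℝ) ≤ -L / 2)
          linarith only [h7']
        have h8 : (L / 2) / (Dv * M) = -ε := by
          rw [hεdef, neg_div, neg_neg, div_div]
        linarith only [h5, h6, h8]
      have hφup : ∀ r ∈ Ioc (0:ℝ) a1, φ r + ε * r ≤ 1 := by
        intro r hr
        have hcont : ContinuousOn (fun s => -(φ s + ε * s)) (Icc 0 r) :=
          ((hφcIcc r).add (continuousOn_const.mul continuousOn_id)).neg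
        have hder : ∀ x ∈ Ioo (0:ℝ) r, HasDerivAt (fun s => -(φ s + ε * s)) (-(dφ x + ε)) x := by
          intro x hx
          exact (((hφda x hx.1).add ((hasDerivAt_id x).const_mul ε)).neg).congr_deriv (by ring)
        have hnn : ∀ x ∈ Ioo (0:ℝ) r, 0 ≤ -(dφ x + ε) := by
          intro x hx
          have h1 := hdφneg x ⟨hx.1, le_trans hx.2.le hr.2⟩
          linarith
        have h := mono_aux_s6 hcont hder hnn 0 ⟨le_rfl, hr.1.le⟩ r ⟨hr.1.le, le_rfl⟩ hr.1.le
        simp only [hφ0] at h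
        linarith [h]
      have hd0 := hφd 0 self_mem_Ici
      rw [hasDerivWithinAt_iff_tendsto_slope] at hd0
      rw [hdφ0, Ici_sdiff_left] at hd0
      have hev : ∀ᶠ x in nhdsWithin (0:ℝ) (Ioi 0), slope φ 0 x ≤ -ε := by
        filter_upwards [Ioc_mem_nhdsGT_of_mem (⟨le_rfl, ha1⟩ : (0:ℝ) ∈ Ico 0 a1)] with x hx
        have h1 := hφup x hx
        rw [slope_def_field, hφ0, sub_zero, div_le_iff₀ hx.1]
        nlinarith
      have h0ε := le_of_tendsto hd0 hev
      linarith
    intro r hr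
    refine ⟨le_trans hL0 (hLle r hr), ?_⟩
    have hder : ∀ x ∈ Ioo (0:ℝ) r, HasDerivAt φ (dφ x) x := fun x hx => hφda x hx.1
    have hnn : ∀ x ∈ Ioo (0:ℝ) r, 0 ≤ dφ x := by
      intro x hx
      have hxb : x ∈ Ioc (0:ℝ) b := ⟨hx.1, le_trans hx.2.le hr.2⟩
      rw [hdφeq x hx.1]
      exact div_nonneg (le_trans hL0 (hLle x hxb)) (mul_pos hDv (hρpos x hx.1)).le
    have h := mono_aux_s6 (hφcIcc r) hder hnn 0 ⟨le_rfl, hr.1.le⟩ r ⟨hr.1.le, le_rfl⟩ hr.1.le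
    rwa [hφ0] at h
  -- initial interval where φ ≥ 1/2
  obtain ⟨η, hη0, hη1, hηφ⟩ : ∃ η : ℝ, 0 < η ∧ η ≤ 1 ∧ ∀ s ∈ Icc (0:ℝ) η, 1/2 ≤ φ s := by
    have hcw : ContinuousWithinAt φ (Ici 0) 0 := hφc 0 le_rfl
    have hev : ∀ᶠ s in nhdsWithin (0:ℝ) (Ici 0), 1/2 < φ s :=
      hcw.eventually (eventually_gt_nhds (by rw [hφ0]; norm_num))
    obtain ⟨δ, hδ, hball⟩ := Metric.mem_nhdsWithin_iff.1 hev
    refine ⟨min (δ/2) 1, lt_min (by linarith) one_pos, min_le_right _ _, ?_⟩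
    intro s hs
    have hs1 : s ∈ Metric.ball (0:ℝ) δ := by
      rw [Metric.mem_ball, Real.dist_eq, sub_zero, abs_of_nonneg hs.1]
      exact lt_of_le_of_lt (le_trans hs.2 (min_le_left _ _)) (by linarith)
    exact (hball ⟨hs1, hs.1⟩).le
  -- continuation: φ ≥ 1/2 on all of [0,1]
  obtain ⟨S, hSdef⟩ : ∃ S : Set ℝ,
      S = {r : ℝ | r ∈ Icc η 1 ∧ ∀ s ∈ Icc (0:ℝ) r, 1/2 ≤ φ s} := ⟨_, rfl⟩
  have hηS : η ∈ S := by rw [hSdef]; exact ⟨⟨le_rfl, hη1⟩, hηφ⟩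
  have hSne : S.Nonempty := ⟨η, hηS⟩
  have hSbdd : BddAbove S := by
    refine ⟨1, ?_⟩
    rintro x hx
    rw [hSdef] at hx
    exact hx.1.2
  obtain ⟨T, hTdef⟩ : ∃ x : ℝ, x = sSup S := ⟨_, rfl⟩
  have hηT : η ≤ T := by rw [hTdef]; exact le_csSup hSbdd hηS
  have hT1 : T ≤ 1 := by
    rw [hTdef]
    exact csSup_le hSne (fun x hx => by rw [hSdef] at hx; exact hx.1.2)
  have hT0 : 0 < T := lt_of_lt_of_le hη0 hηT
  have hTlt : ∀ s : ℝ, 0 ≤ s → s < T → 1/2 ≤ φ s := by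
    intro s hs0 hsT
    have hnub : ¬ (∀ x ∈ S, x ≤ s) := by
      intro hub
      have : T ≤ s := by rw [hTdef]; exact csSup_le hSne hub
      linarith
    push_neg at hnub
    obtain ⟨x, hxS, hsx⟩ := hnub
    rw [hSdef] at hxS
    exact hxS.2 s ⟨hs0, hsx.le⟩
  have hTfull : ∀ s ∈ Icc (0:ℝ) T, 1/2 ≤ φ s := by
    intro s hs
    rcases lt_or_eq_of_le hs.2 with h | h
    · exact hTlt s hs.1 h
    · subst h
      have hct : ContinuousAt φ s := (hφda s hT0).continuousAt
      have htd : Filter.Tendsto φ (nhdsWithin s (Iio s)) (nhds (φ s)) :=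
        hct.continuousWithinAt
      refine ge_of_tendsto htd ?_
      filter_upwards [Ioo_mem_nhdsLT_of_mem (⟨hT0, le_rfl⟩ : s ∈ Ioc 0 s)] with x hx
      exact hTlt x hx.1.le hx.2
  have hTeq : T = 1 := by
    by_contra hne
    have hTlt1 : T < 1 := lt_of_le_of_ne hT1 hne
    have hφT1 : 1 ≤ φ T := (hkey T hT0 hT1 hTfull T ⟨hT0, le_rfl⟩).2
    have hct : ContinuousAt φ T := (hφda T hT0).continuousAt
    have hev2 : ∀ᶠ x in nhds T, 1/2 < φ x := hct.eventually (eventually_gt_nhds (by linarith))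
    obtain ⟨ε, hε, hball⟩ := Metric.eventually_nhds_iff.1 hev2
    obtain ⟨x, hxdef⟩ : ∃ x : ℝ, x = min 1 (T + ε/2) := ⟨_, rfl⟩
    have hxT : T < x := by rw [hxdef]; exact lt_min hTlt1 (by linarith)
    have hx1 : x ≤ 1 := by rw [hxdef]; exact min_le_left _ _
    have hxS : x ∈ S := by
      rw [hSdef]
      refine ⟨⟨le_trans hηT hxT.le, hx1⟩, ?_⟩
      intro s hs
      rcases le_or_gt s T with h | h
      · exact hTfull s ⟨hs.1, h⟩
      · refine (hball ?_).le
        rw [Real.dist_eq, abs_of_pos (by linarith : (0:ℝ) < s - T)]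
        have hxe : x ≤ T + ε/2 := by rw [hxdef]; exact min_le_right _ _
        have := hs.2
        linarith
    have : x ≤ T := by rw [hTdef]; exact le_csSup hSbdd hxS
    linarith
  rw [hTeq] at hTfull
  -- consequences on (0,1]
  have hfin := hkey 1 one_pos le_rfl hTfull
  have hφ1' : ∀ r ∈ Ioc (0:ℝ) 1, 1 ≤ φ r := fun r hr => (hfin r hr).2
  have hF0 : ∀ r ∈ Ioc (0:ℝ) 1, 0 ≤ F r := fun r hr => (hfin r hr).1
  have hdφnn : ∀ r ∈ Ioc (0:ℝ) 1, 0 ≤ dφ r := by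
    intro r hr
    rw [hdφeq r hr.1]
    exact div_nonneg (hF0 r hr) (mul_pos hDv (hρpos r hr.1)).le
  have hφmono : ∀ x y : ℝ, 0 ≤ x → x ≤ y → y ≤ 1 → φ x ≤ φ y := by
    intro x y hx hxy hy1
    exact mono_aux_s6 (f' := dφ) ((hφcIcc y).mono (Icc_subset_Icc hx le_rfl))
      (fun z hz => hφda z (lt_of_le_of_lt hx hz.1))
      (fun z hz => hdφnn z ⟨lt_of_le_of_lt hx hz.1, le_trans hz.2.le hy1⟩)
      x ⟨le_rfl, hxy⟩ y ⟨hxy, le_rfl⟩ hxy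
  -- doubling construction
  obtain ⟨s0, hs0def⟩ : ∃ x : ℝ, x = (Real.sqrt (K * lam))⁻¹ := ⟨_, rfl⟩
  have hKl : 0 < K * lam := mul_pos hK hlampos
  have hs0 : 0 < s0 := by rw [hs0def]; exact inv_pos.2 (Real.sqrt_pos.2 hKl)
  have hs0sq : s0 ^ 2 * (K * lam) = 1 := by
    rw [hs0def, inv_pow, Real.sq_sqrt hKl.le]
    exact inv_mul_cancel₀ hKl.ne'
  have hθ1' : (0:ℝ) < 1 - θ := by linarith only [hθ1]
  have hs0small : s0 ≤ (1 - θ) / 2 := by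
    have h1 : 4 / ((1 - θ)^2) ≤ K * lam := by
      rw [hΛcdef, div_le_iff₀ (mul_pos hK (pow_pos hθ1' 2))] at hlamC
      rw [div_le_iff₀ (pow_pos hθ1' 2)]
      linarith only [hlamC]
    have h2 : 2 / (1 - θ) ≤ Real.sqrt (K * lam) := by
      rw [show (4:ℝ) / ((1-θ)^2) = (2/(1-θ))^2 by rw [div_pow]; norm_num] at h1
      calc 2/(1-θ) = Real.sqrt ((2/(1-θ))^2) := (Real.sqrt_sq (by positivity)).symm
        _ ≤ Real.sqrt (K*lam) := Real.sqrt_le_sqrt h1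
    have h4 : ((1-θ)/2)⁻¹ ≤ Real.sqrt (K * lam) := by
      rw [show ((1-θ)/2)⁻¹ = 2/(1-θ) by rw [inv_div]]
      exact h2
    calc s0 = (Real.sqrt (K*lam))⁻¹ := hs0def
      _ ≤ (((1-θ)/2)⁻¹)⁻¹ := inv_anti₀ (inv_pos.2 (by positivity)) h4
      _ = (1-θ)/2 := inv_inv _
  obtain ⟨aseq, haseq⟩ : ∃ a : ℕ → ℝ,
      a = fun k => 1/4 + s0 * ∑ j ∈ Finset.range k, θ^j := ⟨_, rfl⟩
  have ha0 : aseq 0 = 1/4 := by rw [haseq]; simp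
  have hastep : ∀ k, aseq (k+1) = aseq k + s0 * θ^k := by
    intro k
    rw [haseq]
    simp only [Finset.sum_range_succ]
    ring
  have hsumle : ∀ k, ∑ j ∈ Finset.range k, θ^j ≤ (1-θ)⁻¹ := by
    intro k
    have h := Summable.sum_le_tsum (Finset.range k) (fun i _ => by positivity)
      (hasSum_geometric_of_lt_one hθ.le hθ1).summable
    rwa [tsum_geometric_of_lt_one hθ.le hθ1] at h
  have halb : ∀ k, 1/4 ≤ aseq k := by
    intro k
    rw [haseq]
    simp only []
    have h1 : 0 ≤ s0 * ∑ j ∈ Finset.range k, θ^j :=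
      mul_nonneg hs0.le (Finset.sum_nonneg fun i _ => by positivity)
    linarith only [h1]
  have haub : ∀ k, aseq k ≤ 3/4 := by
    intro k
    rw [haseq]
    simp only []
    have h1 : s0 * ∑ j ∈ Finset.range k, θ^j ≤ s0 * (1-θ)⁻¹ :=
      mul_le_mul_of_nonneg_left (hsumle k) hs0.le
    have h2 : s0 * (1-θ)⁻¹ ≤ ((1-θ)/2) * (1-θ)⁻¹ :=
      mul_le_mul_of_nonneg_right hs0small (inv_pos.2 hθ1').le
    have h3 : ((1-θ)/2) * (1-θ)⁻¹ = 1/2 := by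
      field_simp
    linarith only [h1, h2, h3]
  have hpowid : ∀ k : ℕ, ((2:ℝ)^k) ^ q * θ^(k*2) = (2:ℝ)^k := by
    intro k
    have hθk : θ^(k*2) = (2:ℝ) ^ ((-(q-1)/2) * ((k*2 : ℕ) : ℝ)) := by
      rw [hθdef, Real.rpow_mul (by norm_num : (0:ℝ) ≤ 2), Real.rpow_natCast]
    rw [← Real.rpow_natCast (2:ℝ) k, ← Real.rpow_mul (by norm_num : (0:ℝ) ≤ 2), hθk,
      ← Real.rpow_add two_pos]
    congr 1
    push_cast
    ring
  have hdouble_eq : ∀ k : ℕ, K * lam * ((2:ℝ)^k) ^ q * (s0 * θ^k)^2 = (2:ℝ)^k := by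
    intro k
    have h2 : (s0 * θ^k)^2 = s0^2 * θ^(k*2) := by
      rw [mul_pow, ← pow_mul]
    calc K * lam * ((2:ℝ)^k) ^ q * (s0 * θ^k)^2
        = (s0^2 * (K*lam)) * (((2:ℝ)^k)^q * θ^(k*2)) := by rw [h2]; ring
      _ = ((2:ℝ)^k)^q * θ^(k*2) := by rw [hs0sq]; ring
      _ = (2:ℝ)^k := hpowid k
  have hmain : ∀ k : ℕ, (2:ℝ)^k ≤ φ (aseq k) := by
    intro k
    induction k with
    | zero =>
      rw [ha0, pow_zero]
      exact hφ1' (1/4) ⟨by norm_num, by norm_num⟩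
    | succ k ih =>
      obtain ⟨A, hAdef⟩ : ∃ x : ℝ, x = (2:ℝ)^k := ⟨_, rfl⟩
      obtain ⟨δ, hδdef⟩ : ∃ x : ℝ, x = s0 * θ^k := ⟨_, rfl⟩
      have hδpos : 0 < δ := by rw [hδdef]; positivity
      have hA1 : 1 ≤ A := by rw [hAdef]; exact one_le_pow₀ one_le_two
      have hApos : 0 < A := by linarith only [hA1]
      have hak := halb k
      have haku := haub k
      have hak1 := halb (k+1)
      have haku1 := haub (k+1)
      have hstep : aseq (k+1) = aseq k + δ := by rw [hastep k, hδdef]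
      have hle : aseq k ≤ aseq (k+1) := by rw [hstep]; linarith only [hδpos]
      have hAq : (0:ℝ) < A ^ q := Real.rpow_pos_of_pos hApos q
      have hφA : ∀ s : ℝ, aseq k ≤ s → s ≤ 1 → A ≤ φ s := by
        intro s h1 h2
        have h3 := hφmono (aseq k) s (by linarith only [hak]) h1 h2
        rw [hAdef]
        linarith only [ih, h3]
      have hFlow : ∀ r ∈ Icc (aseq k) (aseq (k+1)), c * lam * A^q * (r - aseq k) ≤ F r := by
        intro r hrm
        have hcont : ContinuousOn (fun s => F s - c * lam * A^q * (s - aseq k))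
            (Icc (aseq k) r) := by
          apply ContinuousOn.sub
          · intro z hz
            exact (hFcont z (by linarith only [hz.1, hak] : (0:ℝ) < z)).continuousWithinAt
          · exact (continuous_const.mul (continuous_id.sub continuous_const)).continuousOn
        have hder : ∀ x ∈ Ioo (aseq k) r,
            HasDerivAt (fun s => F s - c * lam * A^q * (s - aseq k)) (g x - c * lam * A^q) x := by
          intro x hx
          have h1 := (hFd x (by linarith only [hx.1, hak] : (0:ℝ) < x)).sub
            (((hasDerivAt_id x).sub_const (aseq k)).const_mul (c * lam * A^q))
          exact h1.congr_deriv (by ring)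
        have hnn : ∀ x ∈ Ioo (aseq k) r, 0 ≤ g x - c * lam * A^q := by
          intro x hx
          have hx14 : (1/4:ℝ) ≤ x := by linarith only [hx.1, hak]
          have hx1 : x ≤ 1 := by linarith only [hx.2, hrm.2, haku1]
          have h5 := hg2 x ⟨hx14, hx1⟩ A hA1 (hφA x hx.1.le hx1)
          linarith only [h5]
        have h := mono_aux_s6 hcont hder hnn (aseq k) ⟨le_rfl, hrm.1⟩ r ⟨hrm.1, le_rfl⟩ hrm.1
        have hF0k : 0 ≤ F (aseq k) :=
          hF0 (aseq k) ⟨by linarith only [hak], by linarith only [haku]⟩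
        have he : F (aseq k) - c*lam*A^q*(aseq k - aseq k) = F (aseq k) := by ring
        linarith only [h, hF0k, he]
      have hgrow : A + K * lam * A^q * δ^2 ≤ φ (aseq (k+1)) := by
        have hcont : ContinuousOn (fun s => φ s - K * lam * A^q * (s - aseq k)^2)
            (Icc (aseq k) (aseq (k+1))) := by
          apply ContinuousOn.sub
          · exact (hφcIcc (aseq (k+1))).mono (Icc_subset_Icc (by linarith only [hak]) le_rfl)
          · exact (continuous_const.mul ((continuous_id.sub continuous_const).pow 2)).continuousOn
        have hder : ∀ x ∈ Ioo (aseq k) (aseq (k+1)),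
            HasDerivAt (fun s => φ s - K * lam * A^q * (s - aseq k)^2)
              (dφ x - K * lam * A^q * (2 * (x - aseq k))) x := by
          intro x hx
          have h1 := (hφda x (by linarith only [hx.1, hak] : (0:ℝ) < x)).sub
            ((((hasDerivAt_id x).sub_const (aseq k)).pow 2).const_mul (K * lam * A^q))
          exact h1.congr_deriv (by rw [show (2:ℕ)-1 = 1 from rfl]; simp only [id, pow_one, Nat.cast_ofNat]; ring)
        have hnn : ∀ x ∈ Ioo (aseq k) (aseq (k+1)),
            0 ≤ dφ x - K * lam * A^q * (2 * (x - aseq k)) := by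
          intro x hx
          have hx0 : (0:ℝ) < x := by linarith only [hx.1, hak]
          have hx1 : x ≤ 1 := by linarith only [hx.2, haku1]
          have hF1 := hFlow x ⟨hx.1.le, hx.2.le⟩
          have hxk : 0 ≤ x - aseq k := by linarith only [hx.1]
          have hcA : 0 ≤ c * lam * A^q * (x - aseq k) :=
            mul_nonneg (mul_nonneg (mul_nonneg hc.le hlampos.le) hAq.le) hxk
          have hFx0 : 0 ≤ F x := le_trans hcA hF1
          rw [hdφeq x hx0]
          have hρx := hρpos x hx0
          have hρxM := hρleM x ⟨hx0, hx1⟩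
          have hd1 : F x / (Dv * M) ≤ F x / (Dv * ρ x) := by
            rw [div_le_div_iff₀ (mul_pos hDv hM) (mul_pos hDv hρx)]
            exact mul_le_mul_of_nonneg_left (mul_le_mul_of_nonneg_left hρxM hDv.le) hFx0
          have hd2 : c * lam * A^q * (x - aseq k) / (Dv * M) ≤ F x / (Dv * M) :=
            (div_le_div_iff_of_pos_right (mul_pos hDv hM)).2 hF1
          have hDvM : Dv * M ≠ 0 := (mul_pos hDv hM).ne'
          have hd3 : c * lam * A^q * (x - aseq k) / (Dv * M)
              = K * lam * A^q * (2 * (x - aseq k)) := by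
            rw [hKdef]
            field_simp
          linarith only [hd1, hd2, hd3]
        have h := mono_aux_s6 hcont hder hnn (aseq k) ⟨le_rfl, hle⟩ (aseq (k+1)) ⟨hle, le_rfl⟩ hle
        have hL : φ (aseq k) - K*lam*A^q*(aseq k - aseq k)^2 = φ (aseq k) := by ring
        have hR : K*lam*A^q*(aseq (k+1) - aseq k)^2 = K*lam*A^q*δ^2 := by rw [hstep]; ring
        have hik : A ≤ φ (aseq k) := by rw [hAdef]; exact ih
        linarith only [h, hL, hR, hik]
      have heq2 : K * lam * A^q * δ^2 = A := by rw [hAdef, hδdef]; exact hdouble_eq k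
      calc (2:ℝ)^(k+1) = A + A := by rw [hAdef]; ring
        _ ≤ φ (aseq (k+1)) := by linarith only [hgrow, heq2]
  obtain ⟨n, hn⟩ := pow_unbounded_of_one_lt (φ 1) (one_lt_two : (1:ℝ) < 2)
  have h1 := hmain n
  have h2 := hφmono (aseq n) 1 (by linarith only [halb n]) (by linarith only [haub n]) le_rfl
  linarith only [h1, h2, hn]
end

section
/- Let N ≥ 1 be an integer, D_u, D_v > 0, q > 1, κ < 0, and set σ = 1/(4 D_u (q−1)). Suppose 0 < λ < 2 N σ D_v − κ, and let θ : [0,R) → ℝ be a positive C² solution of D_v θ'' + (4σ D_v + 1/2) r θ' + D_v (N−1) θ'/r + (4σ² D_v + σ) r² θ + (2 N σ D_v − κ) θ = λ θ^q on (0,R), with θ(0) = 1 and θ'(0) = 0. Then θ'(r) < 0 for all r ∈ (0,R); that is, θ is strictly decreasing on [0,R). -/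
open Real Set

/-- For the transformed profile equation (with `σ = 1/(4Dᵤ(q−1))`)
`Dᵥ θ'' + (4σDᵥ + 1/2) r θ' + Dᵥ(N−1)θ'/r + (4σ²Dᵥ + σ) r² θ + (2NσDᵥ − κ) θ = λ θ^q`
on `(0,R)` with `θ(0)=1`, `θ'(0)=0`, `κ < 0` and `0 < λ < 2NσDᵥ − κ`, any positive
C² solution satisfies `θ'(r) < 0` on `(0,R)`, i.e. `θ` is strictly decreasing on `[0,R)`. -/
theorem stmt7
    (N : ℕ) (hN : 1 ≤ N) (Du Dv q κ lam σ : ℝ)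
    (hDu : 0 < Du) (hDv : 0 < Dv) (hq : 1 < q) (hκ : κ < 0)
    (hσ : σ = 1 / (4 * Du * (q - 1)))
    (hlam : 0 < lam) (hlam' : lam < 2 * N * σ * Dv - κ)
    (R : EReal) (hR : 0 < R)
    (θ dθ ddθ : ℝ → ℝ)
    (hpos : ∀ r : ℝ, 0 ≤ r → (r : EReal) < R → 0 < θ r)
    (hθ' : ∀ r : ℝ, 0 ≤ r → (r : EReal) < R → HasDerivWithinAt θ (dθ r) (Ici 0) r)
    (hθ'' : ∀ r : ℝ, 0 ≤ r → (r : EReal) < R → HasDerivWithinAt dθ (ddθ r) (Ici 0) r)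
    (hODE : ∀ r : ℝ, 0 < r → (r : EReal) < R →
      Dv * ddθ r + (4 * σ * Dv + 1/2) * r * dθ r + Dv * ((N : ℝ) - 1) * dθ r / r
        + (4 * σ ^ 2 * Dv + σ) * r ^ 2 * θ r + (2 * N * σ * Dv - κ) * θ r
          = lam * θ r ^ q)
    (hθ0 : θ 0 = 1) (hdθ0 : dθ 0 = 0) :
    (∀ r : ℝ, 0 < r → (r : EReal) < R → dθ r < 0) ∧
      StrictAntiOn θ {r : ℝ | 0 ≤ r ∧ (r : EReal) < R} := by
  have hDv0 : Dv ≠ 0 := ne_of_gt hDv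
  have hσpos : 0 < σ := by
    rw [hσ]
    apply div_pos one_pos
    have h1 : (0:ℝ) < 4 * Du := by linarith
    have h2 : (0:ℝ) < q - 1 := by linarith
    nlinarith
  set C : ℝ := 2 * N * σ * Dv - κ with hCdef
  have hlC : lam < C := hlam'
  have hCpos : 0 < C := lt_trans hlam hlC
  set a : ℝ := 2 * σ + 1 / (4 * Dv) with ha
  -- choose ε > 0 with lam * (1+ε)^(q-1) < C
  obtain ⟨ε, hε, hεlam⟩ : ∃ ε : ℝ, 0 < ε ∧ lam * (1 + ε) ^ (q - 1) < C := by
    set t : ℝ := (lam + C) / (2 * lam) with ht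
    have ht1 : 1 < t := by
      rw [ht, lt_div_iff₀ (by linarith)]
      linarith
    have ht0 : 0 < t := by linarith
    refine ⟨t ^ (1 / (q - 1)) - 1, ?_, ?_⟩
    · have : 1 < t ^ (1 / (q - 1)) := by
        rw [Real.one_lt_rpow_iff_of_pos ht0]
        exact Or.inl ⟨ht1, one_div_pos.mpr (by linarith)⟩
      linarith
    · have h1 : (1 + (t ^ (1 / (q - 1)) - 1)) = t ^ (1 / (q - 1)) := by ring
      rw [h1, ← Real.rpow_mul (le_of_lt ht0)]
      have : 1 / (q - 1) * (q - 1) = 1 := by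
        field_simp
        exact div_self (sub_ne_zero.mpr (ne_of_gt hq))
      rw [this, Real.rpow_one, ht, mul_div_assoc', div_lt_iff₀ (by linarith)]
      nlinarith
  set g : ℝ → ℝ := fun x => x ^ (N-1) * Real.exp (a * x^2) * dθ x with hgdef
  -- derivative of g
  have hg' : ∀ r : ℝ, 0 < r → (r : EReal) < R →
      HasDerivWithinAt g
        (r ^ (N-1) * Real.exp (a * r^2) *
          ((lam * θ r ^ q - (4 * σ ^ 2 * Dv + σ) * r ^ 2 * θ r - C * θ r) / Dv))
        (Ici 0) r := by
    intro r hr hrR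
    have hr0 : r ≠ 0 := ne_of_gt hr
    have hinner : HasDerivAt (fun x : ℝ => a * x^2) (a * (2 * r)) r := by
      simpa using (hasDerivAt_pow 2 r).const_mul a
    have he : HasDerivAt (fun x : ℝ => Real.exp (a * x^2))
        (Real.exp (a * r^2) * (a * (2 * r))) r := hinner.exp
    have hp : HasDerivAt (fun x : ℝ => x ^ (N-1)) (((N-1 : ℕ) : ℝ) * r ^ (N-1-1)) r :=
      hasDerivAt_pow (N-1) r
    have h1 : HasDerivAt (fun x : ℝ => x ^ (N-1) * Real.exp (a * x^2))
        (((N-1 : ℕ) : ℝ) * r ^ (N-1-1) * Real.exp (a * r^2)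
          + r ^ (N-1) * (Real.exp (a * r^2) * (a * (2 * r)))) r := hp.mul he
    have h2 := (h1.hasDerivWithinAt).mul (hθ'' r (le_of_lt hr) hrR)
    refine h2.congr_deriv ?_
    have hNc : ((N - 1 : ℕ) : ℝ) = (N : ℝ) - 1 := by
      have := Nat.cast_sub hN (R := ℝ)
      simpa using this
    have hpow : ((N:ℝ) - 1) * r ^ (N-1-1) = ((N:ℝ) - 1) / r * r ^ (N-1) := by
      obtain ⟨m, rfl⟩ : ∃ m, N = m + 1 := ⟨N - 1, by omega⟩
      cases m with
      | zero => simp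
      | succ k =>
        simp only [Nat.add_sub_cancel]
        rw [pow_succ]
        field_simp
    have hode := hODE r hr hrR
    rw [hNc, hpow]
    have hdd : ddθ r = (lam * θ r ^ q - (4 * σ ^ 2 * Dv + σ) * r ^ 2 * θ r - C * θ r
        - (4 * σ * Dv + 1/2) * r * dθ r - Dv * ((N:ℝ) - 1) * dθ r / r) / Dv := by
      rw [eq_div_iff hDv0]
      linear_combination hode
    rw [hdd, ha]
    field_simp
    ring
  -- key lemma
  have key : ∀ r1 : ℝ, 0 < r1 → (r1:EReal) < R →
      (∀ s, 0 ≤ s → s ≤ r1 → θ s ≤ 1 + ε) → dθ r1 < 0 := by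
    intro r1 hr1 hr1R hbd
    have hsub : ∀ s : ℝ, s ≤ r1 → (s:EReal) < R := fun s hs =>
      lt_of_le_of_lt (EReal.coe_le_coe_iff.mpr hs) hr1R
    have hF : ∀ s, 0 < s → s ≤ r1 →
        lam * θ s ^ q - (4 * σ ^ 2 * Dv + σ) * s ^ 2 * θ s - C * θ s < 0 := by
      intro s hs0 hsr
      have hθp : 0 < θ s := hpos s (le_of_lt hs0) (hsub s hsr)
      have hθle := hbd s (le_of_lt hs0) hsr
      have h1 : θ s ^ q = θ s ^ (q-1) * θ s := by
        have hq1 : q - 1 + 1 = q := by ring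
        have := Real.rpow_add_one (ne_of_gt hθp) (q-1)
        rw [hq1] at this
        exact this
      have h2 : θ s ^ (q-1) ≤ (1+ε)^(q-1) :=
        Real.rpow_le_rpow (le_of_lt hθp) hθle (by linarith)
      have h3 : lam * θ s ^ q ≤ lam * (1+ε)^(q-1) * θ s := by
        rw [h1]
        nlinarith [mul_le_mul_of_nonneg_left (mul_le_mul_of_nonneg_right h2 hθp.le) hlam.le]
      have h4 : lam * (1+ε)^(q-1) * θ s < C * θ s :=
        mul_lt_mul_of_pos_right hεlam hθp
      have h5 : 0 ≤ (4 * σ ^ 2 * Dv + σ) * s ^ 2 * θ s := by positivity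
      linarith
    have hganti : StrictAntiOn g (Icc 0 r1) := by
      apply strictAntiOn_of_deriv_neg (convex_Icc 0 r1)
      · intro s hs
        have h1 : ContinuousWithinAt dθ (Icc 0 r1) s :=
          ((hθ'' s hs.1 (hsub s hs.2)).continuousWithinAt).mono (fun z hz => hz.1)
        exact ((continuous_pow (N-1)).continuousWithinAt.mul
          ((Real.continuous_exp.comp (continuous_const.mul (continuous_pow 2))).continuousWithinAt)).mul h1
      · intro s hs
        rw [interior_Icc] at hs
        have hds : HasDerivAt g
            (s ^ (N-1) * Real.exp (a * s^2) *
              ((lam * θ s ^ q - (4 * σ ^ 2 * Dv + σ) * s ^ 2 * θ s - C * θ s) / Dv)) s :=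
          (hg' s hs.1 (hsub s (le_of_lt hs.2))).hasDerivAt (Ici_mem_nhds hs.1)
        rw [hds.deriv]
        apply mul_neg_of_pos_of_neg
        · have := hs.1
          positivity
        · exact div_neg_of_neg_of_pos (hF s hs.1 (le_of_lt hs.2)) hDv
    have hg0 : g 0 = 0 := by simp [hgdef, hdθ0]
    have hgr1 : g r1 < 0 := by
      have := hganti (left_mem_Icc.mpr hr1.le) (right_mem_Icc.mpr hr1.le) hr1
      rw [hg0] at this
      exact this
    by_contra hcon
    push_neg at hcon
    have hPE : 0 ≤ r1 ^ (N-1) * Real.exp (a * r1^2) := by positivity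
    have : 0 ≤ g r1 := mul_nonneg hPE hcon
    linarith
  -- monotonicity helper
  have anti : ∀ x y : ℝ, 0 ≤ x → x < y → (y:EReal) < R →
      (∀ s, x < s → s < y → dθ s < 0) → θ y < θ x := by
    intro x y hx hxy hyR hneg
    have hsub : ∀ s : ℝ, s ≤ y → (s:EReal) < R := fun s hs =>
      lt_of_le_of_lt (EReal.coe_le_coe_iff.mpr hs) hyR
    have hanti : StrictAntiOn θ (Icc x y) := by
      apply strictAntiOn_of_deriv_neg (convex_Icc x y)
      · intro s hs
        exact ((hθ' s (le_trans hx hs.1) (hsub s hs.2)).continuousWithinAt).mono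
          (fun z hz => le_trans hx hz.1)
      · intro s hs
        rw [interior_Icc] at hs
        have hs0 : 0 < s := lt_of_le_of_lt hx hs.1
        have hd := (hθ' s hs0.le (hsub s hs.2.le)).hasDerivAt (Ici_mem_nhds hs0)
        rw [hd.deriv]
        exact hneg s hs.1 hs.2
    exact hanti (left_mem_Icc.mpr hxy.le) (right_mem_Icc.mpr hxy.le) hxy
  -- base neighborhood where θ < 1 + ε
  obtain ⟨x0, hx0, hx0R⟩ : ∃ x : ℝ, 0 < x ∧ (x : EReal) < R := by
    by_cases hT : R = ⊤
    · refine ⟨1, one_pos, ?_⟩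
      rw [hT]; exact EReal.coe_lt_top 1
    · have hB : R ≠ ⊥ := ne_of_gt (lt_trans (by simp) hR)
      have hco := EReal.coe_toReal hT hB
      have h0 : 0 < R.toReal := by
        have : (0:EReal) < (R.toReal : EReal) := by rw [hco]; exact hR
        exact_mod_cast this
      refine ⟨R.toReal / 2, by linarith, ?_⟩
      calc ((R.toReal / 2 : ℝ) : EReal) < (R.toReal : EReal) := by
            exact_mod_cast half_lt_self h0
        _ = R := hco
  have hcont0 : ContinuousWithinAt θ (Ici 0) 0 := (hθ' 0 le_rfl hR).continuousWithinAt
  have hev : ∀ᶠ s in nhdsWithin 0 (Ici 0), θ s < 1 + ε := by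
    apply Filter.Tendsto.eventually_lt_const _ hcont0
    rw [hθ0]; linarith
  obtain ⟨δ1, hδ1, hδ1p⟩ := Metric.mem_nhdsWithin_iff.mp hev
  set δ : ℝ := min (δ1/2) (x0/2) with hδdef
  have hδpos : 0 < δ := lt_min (by linarith) (by linarith)
  have hδR : (δ:EReal) < R := by
    have h1 : δ < x0 := lt_of_le_of_lt (min_le_right _ _) (by linarith)
    exact lt_trans (EReal.coe_lt_coe_iff.mpr h1) hx0R
  have hδθ : ∀ s : ℝ, 0 ≤ s → s ≤ δ → θ s < 1 + ε := by
    intro s hs0 hsδ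
    apply hδ1p
    constructor
    · rw [Metric.mem_ball, Real.dist_eq, sub_zero, abs_of_nonneg hs0]
      have : δ ≤ δ1/2 := min_le_left _ _
      linarith
    · exact hs0
  -- main claim
  have main : ∀ r : ℝ, 0 < r → (r : EReal) < R → dθ r < 0 := by
    by_contra hcon
    push_neg at hcon
    obtain ⟨r, hr0, hrR, hdge⟩ := hcon
    set B : Set ℝ := {b : ℝ | 0 < b ∧ (b:EReal) < R ∧ 0 ≤ dθ b} with hBdef
    have hBne : B.Nonempty := ⟨r, hr0, hrR, hdge⟩
    have hBbdd : BddBelow B := ⟨0, fun b hb => hb.1.le⟩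
    have hlb : ∀ b ∈ B, δ ≤ b := by
      intro b hb
      by_contra hbδ
      push_neg at hbδ
      have : dθ b < 0 := by
        apply key b hb.1 hb.2.1
        intro s hs0 hsb
        exact le_of_lt (hδθ s hs0 (le_of_lt (lt_of_le_of_lt hsb hbδ)))
      linarith [hb.2.2]
    set r1 : ℝ := sInf B with hr1def
    have hr1δ : δ ≤ r1 := le_csInf hBne hlb
    have hr1pos : 0 < r1 := lt_of_lt_of_le hδpos hr1δ
    obtain ⟨b0, hb0⟩ := id hBne
    have hr1R : (r1:EReal) < R :=
      lt_of_le_of_lt (EReal.coe_le_coe_iff.mpr (csInf_le hBbdd hb0)) hb0.2.1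
    have hbelow : ∀ s, 0 < s → s < r1 → dθ s < 0 := by
      intro s hs0 hsr1
      by_contra h'
      push_neg at h'
      have hsR : (s:EReal) < R := lt_trans (EReal.coe_lt_coe_iff.mpr hsr1) hr1R
      have : r1 ≤ s := csInf_le hBbdd ⟨hs0, hsR, h'⟩
      linarith
    have hθle1 : ∀ s, 0 ≤ s → s ≤ r1 → θ s ≤ 1 + ε := by
      intro s hs0 hsr1
      rcases eq_or_lt_of_le hs0 with h | h
      · rw [← h, hθ0]; linarith
      · have hsR : (s:EReal) < R :=
          lt_of_le_of_lt (EReal.coe_le_coe_iff.mpr hsr1) hr1R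
        have := anti 0 s le_rfl h hsR (fun u hu0 hus => hbelow u hu0 (lt_of_lt_of_le hus hsr1))
        rw [hθ0] at this
        linarith
    have hkey := key r1 hr1pos hr1R hθle1
    -- but dθ is eventually < 0 near r1, contradicting inf of B
    have hc : ContinuousWithinAt dθ (Ici 0) r1 := (hθ'' r1 hr1pos.le hr1R).continuousWithinAt
    have hev2 : ∀ᶠ s in nhdsWithin r1 (Ici 0), dθ s < 0 := by
      exact Filter.Tendsto.eventually_lt_const hkey hc
    obtain ⟨η, hη, hηp⟩ := Metric.mem_nhdsWithin_iff.mp hev2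
    have : r1 + η ≤ r1 := by
      apply le_csInf hBne
      intro b hb
      by_contra hbη
      push_neg at hbη
      have hbr1 : r1 ≤ b := csInf_le hBbdd hb
      have : dθ b < 0 := by
        apply hηp
        constructor
        · rw [Metric.mem_ball, Real.dist_eq, abs_of_nonneg (by linarith)]
          linarith
        · exact hb.1.le
      linarith [hb.2.2]
    linarith
  refine ⟨main, ?_⟩
  intro x hx y hy hxy
  exact anti x y hx.1 hxy hy.2
    (fun s hs1 hs2 => main s (lt_of_le_of_lt hx.1 hs1)
      (lt_trans (EReal.coe_lt_coe_iff.mpr hs2) hy.2))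
end

section
/- Let N ≥ 1 be an integer, D_u, D_v, λ > 0, q ≥ 1 and −N/2 ≤ κ < 0, and set ρ(r) = r^{N−1} e^{r²/(4D_v)}. Let φ : [0,R) → ℝ be a positive C² solution of D_v (ρ φ')' = κ ρ φ + λ ρ e^{−r²/(4D_u)} φ^q on (0,R) with φ(0) = 1 and φ'(0) = 0. Then φ(r) > e^{−r²/(4D_v)} for all r ∈ (0,R). -/
open Real Set Filter Topology

set_option maxHeartbeats 2000000

/-- For the self-similar profile equation
`Dᵥ (ρ φ')' = κ ρ φ + λ ρ e^{-r²/(4Dᵤ)} φ^q` with `ρ(r) = r^{N-1} e^{r²/(4Dᵥ)}`,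
`φ(0)=1`, `φ'(0)=0`, and `−N/2 ≤ κ < 0`, any positive C² solution on `[0,R)`
satisfies `φ(r) > e^{−r²/(4Dᵥ)}` on `(0,R)`. -/
theorem stmt8
    (N : ℕ) (hN : 1 ≤ N) (Du Dv lam q κ : ℝ)
    (hDu : 0 < Du) (hDv : 0 < Dv) (hlam : 0 < lam) (hq : 1 ≤ q)
    (hκ₁ : -(N : ℝ) / 2 ≤ κ) (hκ₂ : κ < 0)
    (R : EReal) (hR : 0 < R)
    (ρ : ℝ → ℝ) (hρ : ∀ r : ℝ, ρ r = r ^ (N - 1) * Real.exp (r ^ 2 / (4 * Dv)))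
    (φ dφ : ℝ → ℝ)
    (hpos : ∀ r : ℝ, 0 ≤ r → (r : EReal) < R → 0 < φ r)
    (hφ' : ∀ r : ℝ, 0 ≤ r → (r : EReal) < R → HasDerivWithinAt φ (dφ r) (Ici 0) r)
    (hODE : ∀ r : ℝ, 0 < r → (r : EReal) < R →
      HasDerivAt (fun s => Dv * (ρ s * dφ s))
        (κ * ρ r * φ r + lam * ρ r * Real.exp (-(r ^ 2) / (4 * Du)) * φ r ^ q) r)
    (hφ0 : φ 0 = 1) (hdφ0 : dφ 0 = 0) :
    ∀ r : ℝ, 0 < r → (r : EReal) < R → Real.exp (-(r ^ 2) / (4 * Dv)) < φ r := by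
  have h0R : ((0:ℝ) : EReal) < R := by simpa using hR
  -- coercion helper
  have hcoe : ∀ {x r : ℝ}, x ≤ r → (r : EReal) < R → (x : EReal) < R := by
    intro x r hxr hrR
    exact lt_of_le_of_lt (EReal.coe_le_coe_iff.mpr hxr) hrR
  -- a helper: exp(-a)*exp(a)=1
  have hExp : ∀ s : ℝ, Real.exp (-(s ^ 2) / (4 * Dv)) * Real.exp (s ^ 2 / (4 * Dv)) = 1 := by
    intro s
    rw [← Real.exp_add, show -(s ^ 2) / (4 * Dv) + s ^ 2 / (4 * Dv) = 0 by ring, Real.exp_zero]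
  have hrNpow : ∀ r : ℝ, r ^ N = r ^ (N - 1) * r := by
    intro r
    conv_lhs => rw [show N = (N - 1) + 1 from (Nat.succ_pred_eq_of_pos hN).symm]
    rw [pow_succ]
  -- φ has HasDerivAt at interior points
  have hφat : ∀ r : ℝ, 0 < r → (r : EReal) < R → HasDerivAt φ (dφ r) r := by
    intro r hr hrR
    exact (hφ' r hr.le hrR).hasDerivAt (Ici_mem_nhds hr)
  -- general strict monotonicity from positive derivative on (0,R)
  have mono : ∀ (f f' : ℝ → ℝ),
      (∀ x : ℝ, 0 < x → (x : EReal) < R → HasDerivAt f (f' x) x) →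
      (∀ x : ℝ, 0 < x → (x : EReal) < R → 0 < f' x) →
      ∀ s r : ℝ, 0 < s → s < r → (r : EReal) < R → f s < f r := by
    intro f f' hd hp s r hs hsr hrR
    have hIn : ∀ x ∈ Icc s r, 0 < x ∧ (x : EReal) < R := by
      intro x hx
      exact ⟨lt_of_lt_of_le hs hx.1, hcoe hx.2 hrR⟩
    have hcont : ContinuousOn f (Icc s r) := by
      intro x hx
      obtain ⟨hx1, hx2⟩ := hIn x hx
      exact (hd x hx1 hx2).continuousAt.continuousWithinAt
    have hderiv : ∀ x ∈ interior (Icc s r), 0 < deriv f x := by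
      intro x hx
      rw [interior_Icc] at hx
      obtain ⟨hx1, hx2⟩ := hIn x ⟨hx.1.le, hx.2.le⟩
      rw [(hd x hx1 hx2).deriv]
      exact hp x hx1 hx2
    exact strictMonoOn_of_deriv_pos (convex_Icc s r) hcont hderiv
      (left_mem_Icc.mpr hsr.le) (right_mem_Icc.mpr hsr.le) hsr
  -- the key function G
  set G : ℝ → ℝ := fun s => Real.exp (-(s ^ 2) / (4 * Dv)) * (Dv * (ρ s * dφ s))
      + s ^ N * φ s / 2 with hGdef
  clear_value G
  have hGeq : ∀ s : ℝ, G s = Dv * s ^ (N - 1) * dφ s + s ^ N * φ s / 2 := by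
    intro s
    rw [hGdef]
    simp only
    rw [hρ s]
    linear_combination (Dv * s ^ (N - 1) * dφ s) * hExp s
  -- derivative of G
  have hG' : ∀ r : ℝ, 0 < r → (r : EReal) < R →
      HasDerivAt G ((κ + (N : ℝ) / 2) * r ^ (N - 1) * φ r
        + lam * r ^ (N - 1) * Real.exp (-(r ^ 2) / (4 * Du)) * φ r ^ q) r := by
    intro r hr hrR
    rw [hGdef]
    have hinner : HasDerivAt (fun s : ℝ => -(s ^ 2) / (4 * Dv)) (-(2 * r) / (4 * Dv)) r := by
      have h := ((hasDerivAt_pow 2 r).neg).div_const (4 * Dv)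
      simpa using h.congr_deriv (by ring)
    have hψ : HasDerivAt (fun s : ℝ => Real.exp (-(s ^ 2) / (4 * Dv)))
        (Real.exp (-(r ^ 2) / (4 * Dv)) * (-(2 * r) / (4 * Dv))) r := hinner.exp
    have hF := hODE r hr hrR
    have hpow : HasDerivAt (fun s : ℝ => s ^ N) ((N : ℝ) * r ^ (N - 1)) r := hasDerivAt_pow N r
    have hφr := hφat r hr hrR
    have hmain := (hψ.mul hF).add ((hpow.mul hφr).div_const 2)
    refine hmain.congr_deriv ?_
    rw [hρ r, hrNpow r]
    have he2 : Real.exp (r ^ 2 / (4 * Dv)) = (Real.exp (-(r ^ 2) / (4 * Dv)))⁻¹ := by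
      rw [show -(r ^ 2) / (4 * Dv) = -(r ^ 2 / (4 * Dv)) by ring, Real.exp_neg, inv_inv]
    rw [he2]
    field_simp
    ring
  have hG'pos : ∀ r : ℝ, 0 < r → (r : EReal) < R →
      0 < (κ + (N : ℝ) / 2) * r ^ (N - 1) * φ r
        + lam * r ^ (N - 1) * Real.exp (-(r ^ 2) / (4 * Du)) * φ r ^ q := by
    intro r hr hrR
    have hφp := hpos r hr.le hrR
    have h1 : 0 ≤ (κ + (N : ℝ) / 2) * r ^ (N - 1) * φ r := by
      apply mul_nonneg (mul_nonneg (by linarith) (by positivity)) hφp.le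
    have h2 : 0 < lam * r ^ (N - 1) * Real.exp (-(r ^ 2) / (4 * Du)) * φ r ^ q := by
      have := Real.rpow_pos_of_pos hφp q
      positivity
    linarith
  have hGmono : ∀ s r : ℝ, 0 < s → s < r → (r : EReal) < R → G s < G r :=
    mono G _ hG' hG'pos
  -- G is nonnegative on (0,R)
  have hGnn : ∀ r : ℝ, 0 < r → (r : EReal) < R → 0 ≤ G r := by
    intro r hr hrR
    by_contra hneg
    push_neg at hneg
    obtain ⟨ε, hεpos, hεeq⟩ : ∃ ε : ℝ, 0 < ε ∧ G r = -ε := ⟨-G r, by linarith, by ring⟩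
    -- slope of φ at 0 tends to 0
    have hslope : Tendsto (slope φ 0) (𝓝[Ioi (0:ℝ)] 0) (𝓝 0) := by
      have h := (hφ' 0 le_rfl h0R)
      rw [hasDerivWithinAt_iff_tendsto_slope] at h
      rw [Ici_sdiff_left] at h
      rwa [hdφ0] at h
    -- find suitable t
    have hev1 : ∀ᶠ t in 𝓝[Ioi (0:ℝ)] 0, |slope φ 0 t| < ε / (Dv + 1) := by
      have : 0 < ε / (Dv + 1) := by positivity
      have := hslope (Metric.ball_mem_nhds 0 this)
      filter_upwards [this] with t ht
      simpa [Real.dist_eq] using ht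
    have hev2 : ∀ᶠ t in 𝓝[Ioi (0:ℝ)] 0, t < min r 1 := by
      apply eventually_nhdsWithin_of_eventually_nhds
      have : (0:ℝ) < min r 1 := lt_min hr one_pos
      exact Filter.Tendsto.eventually_lt_const this tendsto_id
    have hev3 : ∀ᶠ t in 𝓝[Ioi (0:ℝ)] 0, t ∈ Ioi (0:ℝ) := eventually_mem_nhdsWithin
    obtain ⟨t, ht1, ht2, ht3⟩ := (hev1.and (hev2.and hev3)).exists
    have htpos : 0 < t := ht3
    have htr : t < r := lt_of_lt_of_le ht2 (min_le_left _ _)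
    have ht1' : t ≤ 1 := (lt_of_lt_of_le ht2 (min_le_right _ _)).le
    have htR : (t : EReal) < R := hcoe htr.le hrR
    -- MVT on [0,t]
    have hcont : ContinuousOn φ (Icc 0 t) := by
      intro x hx
      have hxR : (x : EReal) < R := hcoe (le_trans hx.2 htr.le) hrR
      exact ((hφ' x hx.1 hxR).continuousWithinAt).mono (fun y hy => hy.1)
    have hdiff : ∀ x ∈ Ioo (0:ℝ) t, HasDerivAt φ (dφ x) x := by
      intro x hx
      exact hφat x hx.1 (hcoe hx.2.le htR)
    obtain ⟨ξ, hξmem, hξ⟩ := exists_hasDerivAt_eq_slope φ dφ htpos hcont hdiff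
    have hξR : (ξ : EReal) < R := hcoe (le_trans hξmem.2.le htr.le) hrR
    have hξslope : dφ ξ = slope φ 0 t := by
      rw [hξ, slope_def_field]
    -- bound G ξ from below
    have hGξ := hGeq ξ
    have hξ1 : ξ ^ (N - 1) ≤ 1 := pow_le_one₀ hξmem.1.le (le_trans hξmem.2.le ht1')
    have hξ0 : (0:ℝ) ≤ ξ ^ (N - 1) := pow_nonneg hξmem.1.le _
    have hφξ : 0 < φ ξ := hpos ξ hξmem.1.le hξR
    have habs : |dφ ξ| < ε / (Dv + 1) := by rw [hξslope]; exact ht1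
    have hterm2 : 0 ≤ ξ ^ N * φ ξ / 2 :=
      div_nonneg (mul_nonneg (pow_nonneg hξmem.1.le _) hφξ.le) (by norm_num)
    have hlow : -ε < G ξ := by
      rw [hGξ]
      have h1 : -(ξ ^ (N - 1) * |dφ ξ|) ≤ ξ ^ (N - 1) * dφ ξ := by
        nlinarith [neg_abs_le (dφ ξ), abs_nonneg (dφ ξ)]
      have h2 : ξ ^ (N - 1) * |dφ ξ| ≤ |dφ ξ| := by
        nlinarith [abs_nonneg (dφ ξ)]
      have h3 : Dv * |dφ ξ| < ε := by
        have hstep : Dv * (ε / (Dv + 1)) < ε := by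
          rw [mul_div_assoc', div_lt_iff₀ (by linarith : (0:ℝ) < Dv + 1)]
          nlinarith
        exact lt_of_lt_of_le (mul_lt_mul_of_pos_left habs hDv) hstep.le
      have h1' := mul_le_mul_of_nonneg_left h1 hDv.le
      have h2' := mul_le_mul_of_nonneg_left h2 hDv.le
      linarith only [h1', h2', h3, hterm2]
    have hup : G ξ < G r := hGmono ξ r hξmem.1 (hξmem.2.trans htr) hrR
    linarith [hεeq]
  -- G is strictly positive on (0,R)
  have hGpos : ∀ r : ℝ, 0 < r → (r : EReal) < R → 0 < G r := by
    intro r hr hrR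
    have h1 := hGnn (r/2) (by linarith) (hcoe (by linarith) hrR)
    have h2 := hGmono (r/2) r (by linarith) (by linarith) hrR
    linarith
  -- the function H
  set H : ℝ → ℝ := fun s => Real.exp (s ^ 2 / (4 * Dv)) * φ s with hHdef
  clear_value H
  have hH' : ∀ r : ℝ, 0 < r → (r : EReal) < R →
      HasDerivAt H (Real.exp (r ^ 2 / (4 * Dv)) * (2 * r / (4 * Dv)) * φ r
        + Real.exp (r ^ 2 / (4 * Dv)) * dφ r) r := by
    intro r hr hrR
    rw [hHdef]
    have hinner : HasDerivAt (fun s : ℝ => s ^ 2 / (4 * Dv)) (2 * r / (4 * Dv)) r := by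
      have h := (hasDerivAt_pow 2 r).div_const (4 * Dv)
      simpa using h.congr_deriv (by ring)
    exact (hinner.exp.mul (hφat r hr hrR))
  have hH'pos : ∀ r : ℝ, 0 < r → (r : EReal) < R →
      0 < Real.exp (r ^ 2 / (4 * Dv)) * (2 * r / (4 * Dv)) * φ r
        + Real.exp (r ^ 2 / (4 * Dv)) * dφ r := by
    intro r hr hrR
    have hg := hGpos r hr hrR
    rw [hGeq r, hrNpow r] at hg
    have hφp := hpos r hr.le hrR
    have hfac : 0 < dφ r + r * φ r / (2 * Dv) := by
      by_contra hc
      push_neg at hc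
      have hp : (0:ℝ) < Dv * r ^ (N - 1) := by positivity
      have key : Dv * r ^ (N - 1) * (dφ r + r * φ r / (2 * Dv))
          = Dv * r ^ (N - 1) * dφ r + r ^ (N - 1) * r * φ r / 2 := by
        field_simp
      have hmp := mul_nonpos_of_nonneg_of_nonpos hp.le hc
      rw [key] at hmp
      linarith
    have hE : 0 < Real.exp (r ^ 2 / (4 * Dv)) := Real.exp_pos _
    have : Real.exp (r ^ 2 / (4 * Dv)) * (2 * r / (4 * Dv)) * φ r
        + Real.exp (r ^ 2 / (4 * Dv)) * dφ r
        = Real.exp (r ^ 2 / (4 * Dv)) * (dφ r + r * φ r / (2 * Dv)) := by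
      have h4 : (2 * r / (4 * Dv)) * φ r = r * φ r / (2 * Dv) := by
        rw [div_mul_eq_mul_div, div_eq_div_iff (by positivity) (by positivity)]
        ring
      rw [mul_assoc, h4, mul_add]
      ring
    rw [this]
    positivity
  have hHmono : ∀ s r : ℝ, 0 < s → s < r → (r : EReal) < R → H s < H r :=
    mono H _ hH' hH'pos
  -- H tends to 1 at 0+
  have hHt : Tendsto H (𝓝[Ioi (0:ℝ)] 0) (𝓝 1) := by
    have h1 : Tendsto (fun s : ℝ => Real.exp (s ^ 2 / (4 * Dv))) (𝓝[Ioi (0:ℝ)] 0) (𝓝 1) := by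
      have : Continuous (fun s : ℝ => Real.exp (s ^ 2 / (4 * Dv))) :=
        Real.continuous_exp.comp ((continuous_pow 2).div_const (4 * Dv))
      have h : Tendsto (fun s : ℝ => Real.exp (s ^ 2 / (4 * Dv))) (𝓝 0) (𝓝 1) := by
        have h0 := this.tendsto 0
        norm_num at h0
        exact h0
      exact h.mono_left nhdsWithin_le_nhds
    have h2 : Tendsto φ (𝓝[Ioi (0:ℝ)] 0) (𝓝 1) := by
      have h : Tendsto φ (𝓝[Ici (0:ℝ)] 0) (𝓝 (φ 0)) :=
        (hφ' 0 le_rfl h0R).continuousWithinAt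
      rw [hφ0] at h
      exact h.mono_left (nhdsWithin_mono 0 Ioi_subset_Ici_self)
    rw [hHdef]
    have h3 := h1.mul h2
    rw [one_mul] at h3
    exact h3
  -- conclude
  intro r hr hrR
  have hH2 : (1:ℝ) ≤ H (r/2) := by
    have hev : ∀ᶠ t in 𝓝[Ioi (0:ℝ)] 0, H t ≤ H (r/2) := by
      have hev2 : ∀ᶠ t in 𝓝[Ioi (0:ℝ)] 0, t < r/2 := by
        apply eventually_nhdsWithin_of_eventually_nhds
        exact tendsto_id.eventually_lt_const (by linarith)
      have hev3 : ∀ᶠ t in 𝓝[Ioi (0:ℝ)] 0, t ∈ Ioi (0:ℝ) := eventually_mem_nhdsWithin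
      filter_upwards [hev2, hev3] with t h2 h3
      exact (hHmono t (r/2) h3 h2 (hcoe (by linarith) hrR)).le
    exact le_of_tendsto hHt hev
  have hH3 : H (r/2) < H r := hHmono (r/2) r (by linarith) (by linarith) hrR
  have hHr : 1 < Real.exp (r ^ 2 / (4 * Dv)) * φ r := by
    have : H r = Real.exp (r ^ 2 / (4 * Dv)) * φ r := by rw [hHdef]
    linarith [this ▸ lt_of_le_of_lt hH2 hH3]
  have hepos : 0 < Real.exp (-(r ^ 2) / (4 * Dv)) := Real.exp_pos _
  calc Real.exp (-(r ^ 2) / (4 * Dv)) = Real.exp (-(r ^ 2) / (4 * Dv)) * 1 := by ring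
    _ < Real.exp (-(r ^ 2) / (4 * Dv)) * (Real.exp (r ^ 2 / (4 * Dv)) * φ r) :=
        mul_lt_mul_of_pos_left hHr hepos
    _ = (Real.exp (-(r ^ 2) / (4 * Dv)) * Real.exp (r ^ 2 / (4 * Dv))) * φ r := by ring
    _ = φ r := by rw [hExp r, one_mul]
end
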